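/- arXiv:0710.5566 — 4 statements merged into one kernel-verified Lean document; each statement's English description precedes it below -/
import Mathlib

section
/- Let ξ, η ∈ c₀* with ξ ≼ η. Then there exists an orthostochastic matrix Q such that ξ_i = ∑_{j=1}^∞ Q_{ij} η_j for every i. -/
noncomputable section

open Filter Finset

/-- `ξ ∈ c₀*`: a nonnegative, nonincreasing sequence converging to `0`
(indexed from `0` here; the paper indexes from `1`). -/
def IsCoStar (ξ : ℕ → ℝ) : Prop :=
  (∀ n, 0 ≤ ξ n) ∧ Antitone ξ ∧ Tendsto ξ atTop (nhds 0)

/-- `ξ ≺ η` (η majorizes ξ): all partial sums of `ξ` are dominated by those of `η`. -/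
def Maj (ξ η : ℕ → ℝ) : Prop :=
  ∀ n : ℕ, ∑ j ∈ range n, ξ j ≤ ∑ j ∈ range n, η j

/-- `ξ ≼ η` (η strongly majorizes ξ): `ξ ≺ η` and
`liminf_n ∑_{j<n} (η_j - ξ_j) = 0` (the liminf taken in the extended reals). -/
def SMaj (ξ η : ℕ → ℝ) : Prop :=
  Maj ξ η ∧
    liminf (fun n => ((∑ j ∈ range n, (η j - ξ j) : ℝ) : EReal)) atTop = 0

/-- A matrix `U : ℕ × ℕ → ℝ` is orthogonal if its rows form an orthonormal family in ℓ²
and its columns form an orthonormal family in ℓ². -/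
def OrthogonalMatrix (U : ℕ → ℕ → ℝ) : Prop :=
  (∀ i i', HasSum (fun j => U i j * U i' j) (if i = i' then (1 : ℝ) else 0)) ∧
  (∀ j j', HasSum (fun i => U i j * U i j') (if j = j' then (1 : ℝ) else 0))

/-- A matrix `Q` is orthostochastic if it is the entrywise square of an orthogonal matrix. -/
def Orthostochastic (Q : ℕ → ℕ → ℝ) : Prop :=
  ∃ U : ℕ → ℕ → ℝ, OrthogonalMatrix U ∧ ∀ i j, Q i j = (U i j) ^ 2


/-- antitone on an initial segment from successive steps -/
lemma step_anti {f : ℕ → ℝ} {N : ℕ} (h : ∀ i, i + 1 < N → f (i+1) ≤ f i) :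
    ∀ i j, i ≤ j → j < N → f j ≤ f i := by
  intro i j hij hjN
  induction j with
  | zero => have : i = 0 := Nat.le_zero.mp hij; rw [this]
  | succ m ih =>
    rcases Nat.lt_or_ge i (m+1) with h1 | h1
    · exact le_trans (h m hjN) (ih (by omega) (by omega))
    · have : i = m + 1 := by omega
      rw [this]

/-- rotation coefficients -/
lemma exists_cs {a b t : ℝ} (hb : b ≤ t) (ha : t ≤ a) :
    ∃ c s : ℝ, c^2 + s^2 = 1 ∧ c^2 * a + s^2 * b = t := by
  rcases lt_or_ge b a with h | h
  · have hab : a - b > 0 := by linarith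
    refine ⟨Real.sqrt ((t - b)/(a-b)), Real.sqrt ((a-t)/(a-b)), ?_, ?_⟩
    · rw [Real.sq_sqrt (div_nonneg (by linarith) (by linarith)),
        Real.sq_sqrt (div_nonneg (by linarith) (by linarith))]
      field_simp
      ring
    · rw [Real.sq_sqrt (div_nonneg (by linarith) (by linarith)),
        Real.sq_sqrt (div_nonneg (by linarith) (by linarith))]
      field_simp
      ring
  · have hat : a = t := le_antisymm (le_trans h hb) ha
    exact ⟨1, 0, by norm_num, by rw [hat]; ring⟩

/-- merge two indices into one: reindexing sums -/
lemma key_sum {n q : ℕ} (hq : q < n) (F G : ℕ → ℝ)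
    (h1 : ∀ u, u < q → F u = G u)
    (h2 : F q + F (q+1) = G q)
    (h3 : ∀ u, q < u → u < n → F (u+1) = G u) :
    ∑ jj ∈ range (n+1), F jj = ∑ u ∈ range n, G u := by
  have e1 : (∑ jj ∈ Ico 0 (q+2), F jj) + ∑ jj ∈ Ico (q+2) (n+1), F jj
      = ∑ jj ∈ Ico 0 (n+1), F jj :=
    Finset.sum_Ico_consecutive _ (by omega) (by omega)
  have e2 : (∑ u ∈ Ico 0 (q+1), G u) + ∑ u ∈ Ico (q+1) n, G u
      = ∑ u ∈ Ico 0 n, G u :=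
    Finset.sum_Ico_consecutive _ (by omega) (by omega)
  simp only [← Finset.range_eq_Ico] at e1 e2
  have e3 : ∑ jj ∈ Ico (q+2) (n+1), F jj = ∑ u ∈ Ico (q+1) n, G u := by
    rw [Finset.sum_Ico_eq_sum_range, Finset.sum_Ico_eq_sum_range]
    have hnn : n + 1 - (q+2) = n - (q+1) := by omega
    rw [hnn]
    refine Finset.sum_congr rfl (fun i hi => ?_)
    rw [mem_range] at hi
    have harg : q + 2 + i = (q + 1 + i) + 1 := by omega
    rw [harg]
    exact h3 (q+1+i) (by omega) (by omega)
  have e4 : ∑ jj ∈ range (q+2), F jj = ∑ u ∈ range (q+1), G u := by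
    rw [Finset.sum_range_succ, Finset.sum_range_succ, Finset.sum_range_succ]
    have e5 : ∑ jj ∈ range q, F jj = ∑ u ∈ range q, G u :=
      Finset.sum_congr rfl (fun u hu => h1 u (mem_range.mp hu))
    rw [e5]
    linarith [h2]
  calc ∑ jj ∈ range (n+1), F jj
      = ∑ jj ∈ range (q+2), F jj + ∑ jj ∈ Ico (q+2) (n+1), F jj := e1.symm
    _ = ∑ u ∈ range (q+1), G u + ∑ u ∈ Ico (q+1) n, G u := by rw [e3, e4]
    _ = ∑ u ∈ range n, G u := e2

/-- orthonormal rows imply orthonormal columns (finite) -/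
lemma ortho_flip {N : ℕ} {M : ℕ → ℕ → ℝ}
    (h : ∀ i i', i < N → i' < N → ∑ j ∈ range N, M i j * M i' j = if i = i' then 1 else 0) :
    ∀ j j', j < N → j' < N → ∑ i ∈ range N, M i j * M i j' = if j = j' then 1 else 0 := by
  intro j j' hj hj'
  set A : Matrix (Fin N) (Fin N) ℝ := Matrix.of (fun i k : Fin N => M i k) with hA
  have hrow : A * A.transpose = 1 := by
    ext i k
    rw [Matrix.mul_apply]
    have : ∑ jx : Fin N, A i jx * A.transpose jx k
        = ∑ jx ∈ range N, M i jx * M k jx := by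
      rw [← Fin.sum_univ_eq_sum_range (fun jx => M i jx * M k jx)]
      exact Finset.sum_congr rfl (fun jx _ => rfl)
    rw [this, h i k i.isLt k.isLt, Matrix.one_apply]
    by_cases hik : (i:ℕ) = (k:ℕ)
    · rw [if_pos hik, if_pos (Fin.ext hik)]
    · rw [if_neg hik, if_neg (fun hc => hik (congrArg Fin.val hc))]
  have hcol : A.transpose * A = 1 := mul_eq_one_comm.mp hrow
  have := congrFun (congrFun hcol ⟨j, hj⟩) ⟨j', hj'⟩
  rw [Matrix.mul_apply, Matrix.one_apply] at this
  have e : ∑ i : Fin N, A.transpose ⟨j,hj⟩ i * A i ⟨j',hj'⟩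
      = ∑ i ∈ range N, M i j * M i j' := by
    rw [← Fin.sum_univ_eq_sum_range (fun i => M i j * M i j')]
    exact Finset.sum_congr rfl (fun i _ => rfl)
  rw [e] at this
  rw [this]
  by_cases hjj : j = j'
  · rw [if_pos hjj, if_pos (Fin.ext hjj)]
  · rw [if_neg hjj, if_neg (fun hc => hjj (congrArg Fin.val hc))]

/-- sums over finsets of an antitone sequence are dominated by initial sums -/
lemma sum_finset_le (f : ℕ → ℝ) (hf : ∀ i j, i ≤ j → f j ≤ f i) :
    ∀ (s : Finset ℕ), ∑ i ∈ s, f i ≤ ∑ i ∈ range s.card, f i := by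
  suffices H : ∀ n (s : Finset ℕ), s.card = n → ∑ i ∈ s, f i ≤ ∑ i ∈ range s.card, f i by
    intro s; exact H s.card s rfl
  intro n
  induction n with
  | zero => intro s hs; rw [Finset.card_eq_zero] at hs; simp [hs]
  | succ n ih =>
    intro s hs
    have hne : s.Nonempty := Finset.card_pos.mp (by omega)
    set Mx := s.max' hne with hMx
    have hMem : Mx ∈ s := s.max'_mem hne
    have hcard : (s.erase Mx).card = n := by rw [Finset.card_erase_of_mem hMem, hs]; omega
    have h1 := ih (s.erase Mx) hcard
    rw [hcard] at h1
    have hsub : s ⊆ range (Mx+1) := fun a ha => mem_range.mpr (Nat.lt_succ_of_le (s.le_max' a ha))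
    have hMxn : n ≤ Mx := by
      have := Finset.card_le_card hsub
      rw [Finset.card_range] at this; omega
    rw [hs]
    calc ∑ i ∈ s, f i = ∑ i ∈ s.erase Mx, f i + f Mx := (Finset.sum_erase_add s f hMem).symm
      _ ≤ ∑ i ∈ range n, f i + f n := add_le_add h1 (hf n Mx hMxn)
      _ = ∑ i ∈ range (n+1), f i := (Finset.sum_range_succ f n).symm

/-- Horn's theorem, finite dimensional, ℕ-indexed. -/
lemma horn : ∀ (N : ℕ) (x y : ℕ → ℝ),
    (∀ i, i + 1 < N → y (i+1) ≤ y i) →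
    (∀ s : Finset ℕ, s ⊆ range N → ∑ i ∈ s, x i ≤ ∑ i ∈ range s.card, y i) →
    (∑ i ∈ range N, x i = ∑ i ∈ range N, y i) →
    ∃ U : ℕ → ℕ → ℝ,
      (∀ i j, N ≤ i ∨ N ≤ j → U i j = if i = j then 1 else 0) ∧
      (∀ i i', i < N → i' < N → ∑ j ∈ range N, U i j * U i' j = if i = i' then 1 else 0) ∧
      (∀ i, i < N → ∑ j ∈ range N, (U i j)^2 * y j = x i) := by
  intro N
  induction N with
  | zero =>
    intro x y _ _ _
    exact ⟨fun i j => if i = j then 1 else 0, fun i j _ => rfl,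
      fun i i' hi => absurd hi (by omega), fun i hi => absurd hi (by omega)⟩
  | succ n IH =>
    intro x y hy H He
    rcases Nat.eq_zero_or_pos n with hn0 | hn1
    · subst hn0
      refine ⟨fun i j => if i = j then 1 else 0, fun i j _ => rfl, ?_, ?_⟩
      · intro i i' hi hi'
        interval_cases i
        interval_cases i'
        simp
      · intro i hi
        interval_cases i
        have He' : x 0 = y 0 := by simpa using He
        simpa using He'.symm
    · -- main case : N = n+1, n ≥ 1
      obtain ⟨p, hpmem, hpmax0⟩ := Finset.exists_max_image (range (n+1)) x ⟨0, by simp⟩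
      rw [mem_range] at hpmem
      have hpmax : ∀ i, i < n+1 → x i ≤ x p := fun i hi => hpmax0 i (mem_range.mpr hi)
      have hxp_y0 : x p ≤ y 0 := by
        have h := H {p} (by simpa using hpmem)
        simpa using h
      have hyanti : ∀ i j, i ≤ j → j < n+1 → y j ≤ y i := step_anti hy
      have hyn_xp : y n ≤ x p := by
        have h1 : ∑ i ∈ range (n+1), y i ≤ (n+1 : ℝ) * x p := by
          have e1 := Finset.sum_le_sum (s := range (n+1)) (f := x) (g := fun _ => x p)
            (fun i hi => hpmax i (mem_range.mp hi))
          rw [Finset.sum_const, card_range, nsmul_eq_mul] at e1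
          rw [He.symm]
          push_cast at e1 ⊢
          linarith
        have h2 : (n+1 : ℝ) * y n ≤ ∑ i ∈ range (n+1), y i := by
          have e1 := Finset.sum_le_sum (s := range (n+1)) (f := fun _ => y n) (g := y)
            (fun i hi => hyanti i n (by have := mem_range.mp hi; omega) (by omega))
          rw [Finset.sum_const, card_range, nsmul_eq_mul] at e1
          push_cast at e1 ⊢
          linarith
        have hpos : (0:ℝ) < (n+1 : ℝ) := by positivity
        nlinarith [h1, h2]
      classical
      set q := Nat.findGreatest (fun m => x p ≤ y m) (n-1) with hqdef
      have hq_le : q ≤ n - 1 := Nat.findGreatest_le _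
      have hq1 : x p ≤ y q := by
        rw [hqdef]
        exact Nat.findGreatest_spec (P := fun m => x p ≤ y m) (Nat.zero_le _) hxp_y0
      have hqn : q < n := by omega
      have hq2 : y (q+1) ≤ x p := by
        rcases Nat.lt_or_ge q (n-1) with h | h
        · have hng := Nat.findGreatest_is_greatest (P := fun m => x p ≤ y m)
            (show Nat.findGreatest (fun m => x p ≤ y m) (n-1) < q+1 by omega)
            (show q+1 ≤ n-1 by omega)
          exact le_of_not_ge hng
        · have hqe : q + 1 = n := by omega
          rw [hqe]; exact hyn_xp
      obtain ⟨cc, ss, hcs, hval⟩ := exists_cs hq2 hq1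
      set di : ℕ → ℕ := fun i => if i < p then i else i - 1 with hdi
      set skip : ℕ → ℕ := fun i => if i < p then i else i + 1 with hskip
      set x' : ℕ → ℝ := fun i => x (skip i) with hx'
      set y'' : ℕ → ℝ := fun u => if u < q then y u else if u = q then y q + y (q+1) - x p else y (u+1) with hy''
      have hskip_inj : Function.Injective skip := by
        intro a b hab; simp only [hskip] at hab; split_ifs at hab <;> omega
      have hskip_di : ∀ i, i ≠ p → skip (di i) = i := by
        intro i hip; simp only [hskip, hdi]; split_ifs <;> omega
      have hdi_lt : ∀ i, i < n+1 → i ≠ p → di i < n := by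
        intro i hi hip; simp only [hdi]; split_ifs <;> omega
      have hdi_eq : ∀ i i', i ≠ p → i' ≠ p → (di i = di i' ↔ i = i') := by
        intro i i' h1 h2; simp only [hdi]; split_ifs <;> omega
      have himage : (range n).image skip = (range (n+1)).erase p := by
        ext j
        simp only [mem_image, mem_erase, mem_range]
        constructor
        · rintro ⟨i, hi, rfl⟩
          simp only [hskip]; split_ifs <;> omega
        · rintro ⟨hjp, hj⟩
          rcases Nat.lt_or_ge j p with h | h
          · exact ⟨j, by omega, by simp only [hskip]; rw [if_pos h]⟩
          · refine ⟨j-1, by omega, ?_⟩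
            simp only [hskip]; rw [if_neg (by omega)]; omega
      have hsum_skip : ∀ f : ℕ → ℝ, ∑ i ∈ range n, f (skip i) = ∑ j ∈ range (n+1), f j - f p := by
        intro f
        have h1 : ∑ j ∈ (range n).image skip, f j = ∑ i ∈ range n, f (skip i) :=
          Finset.sum_image (fun a _ b _ h => hskip_inj h)
        rw [← h1, himage, Finset.sum_erase_eq_sub (mem_range.mpr hpmem)]
      have hy''lt : ∀ u, u < q → y'' u = y u := by
        intro u hu; simp only [hy'']; rw [if_pos hu]
      have hy''q : y'' q = y q + y (q+1) - x p := by
        simp only [hy'']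
        rw [if_neg (lt_irrefl q)]
        simp
      have hy''gt : ∀ u, q < u → y'' u = y (u+1) := by
        intro u hu; simp only [hy'']; rw [if_neg (by omega), if_neg (by omega)]
      have hysum : ∀ m, q < m → m ≤ n → ∑ u ∈ range m, y'' u = ∑ u ∈ range (m+1), y u - x p := by
        intro m
        induction m with
        | zero => omega
        | succ m ihm =>
          intro hqm hmn
          rcases Nat.lt_or_ge q m with h | h
          · rw [Finset.sum_range_succ, ihm h (by omega)]
            rw [hy''gt m h, Finset.sum_range_succ y (m+1)]
            ring
          · have hqm' : q = m := by omega
            subst hqm'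
            rw [Finset.sum_range_succ]
            have h1 : ∑ u ∈ range q, y'' u = ∑ u ∈ range q, y u :=
              Finset.sum_congr rfl (fun u hu => hy''lt u (mem_range.mp hu))
            rw [h1, hy''q, Finset.sum_range_succ y (q+1), Finset.sum_range_succ y q]
            ring
      have hy'step : ∀ i, i + 1 < n → y'' (i+1) ≤ y'' i := by
        intro i hi
        by_cases h1 : i + 1 < q
        · rw [hy''lt (i+1) h1, hy''lt i (by omega)]; exact hy i (by omega)
        · by_cases h2 : i + 1 = q
          · have e3 : y q ≤ y i := hyanti i q (by omega) (by omega)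
            rw [h2, hy''q, hy''lt i (by omega)]; linarith
          · by_cases h3 : i = q
            · have e3 : y (q+2) ≤ y (q+1) := hy (q+1) (by omega)
              rw [h3, hy''gt (q+1) (by omega), hy''q]
              linarith
            · rw [hy''gt (i+1) (by omega), hy''gt i (by omega)]
              exact hy (i+1) (by omega)
      have HS' : ∀ s : Finset ℕ, s ⊆ range n → ∑ i ∈ s, x' i ≤ ∑ i ∈ range s.card, y'' i := by
        intro s hs
        set s' := s.image skip with hs'def
        have hcard : s'.card = s.card := Finset.card_image_of_injective s hskip_inj
        have hsum : ∑ i ∈ s, x' i = ∑ j ∈ s', x j := by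
          rw [hs'def, Finset.sum_image (fun a _ b _ h => hskip_inj h)]
        have hs'sub : s' ⊆ range (n+1) := by
          intro j hj
          obtain ⟨i, hi, rfl⟩ := mem_image.mp hj
          have := mem_range.mp (hs hi)
          simp only [hskip]
          split_ifs <;> (rw [mem_range]; omega)
        have hps' : p ∉ s' := by
          intro hp
          obtain ⟨i, _, hip⟩ := mem_image.mp hp
          simp only [hskip] at hip; split_ifs at hip <;> omega
        rcases le_or_gt s.card q with hm | hm
        · have hys : ∑ u ∈ range s.card, y'' u = ∑ u ∈ range s.card, y u :=
            Finset.sum_congr rfl (fun u hu =>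
              hy''lt u (by have := mem_range.mp hu; omega))
          have h1 : ∑ j ∈ s', x j ≤ (s.card : ℝ) * x p := by
            have e1 := Finset.sum_le_sum (s := s') (f := x) (g := fun _ => x p)
              (fun j hj => hpmax j (mem_range.mp (hs'sub hj)))
            rw [Finset.sum_const, hcard, nsmul_eq_mul] at e1
            exact e1
          have h2 : (s.card : ℝ) * x p ≤ (s.card:ℝ) * y q :=
            mul_le_mul_of_nonneg_left hq1 (Nat.cast_nonneg _)
          have h3 : (s.card:ℝ) * y q ≤ ∑ u ∈ range s.card, y u := by
            have e1 := Finset.sum_le_sum (s := range s.card) (f := fun _ => y q) (g := y)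
              (fun u hu => hyanti u q (by have := mem_range.mp hu; omega) (by omega))
            rw [Finset.sum_const, card_range, nsmul_eq_mul] at e1
            exact e1
          rw [hsum, hys]; linarith
        · have hmn : s.card ≤ n := by
            have := Finset.card_le_card hs; rw [card_range] at this; exact this
          have hY := hysum s.card hm hmn
          have hsub2 : insert p s' ⊆ range (n+1) := by
            intro j hj
            rcases mem_insert.mp hj with h | h
            · rw [h]; exact mem_range.mpr hpmem
            · exact hs'sub h
          have hcard2 : (insert p s').card = s.card + 1 := by
            rw [Finset.card_insert_of_notMem hps', hcard]
          have hH := H (insert p s') hsub2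
          rw [hcard2, Finset.sum_insert hps'] at hH
          rw [hsum, hY, Finset.sum_range_succ y s.card] at *
          linarith
      have He' : ∑ i ∈ range n, x' i = ∑ i ∈ range n, y'' i := by
        have h1 : ∑ i ∈ range n, x' i = ∑ j ∈ range (n+1), x j - x p := hsum_skip x
        have h2 := hysum n (by omega) le_rfl
        rw [h1, h2, He]
      obtain ⟨U', hU'id, hU'row, hU'val⟩ := IH x' y'' hy'step HS' He'
      set U : ℕ → ℕ → ℝ := fun i jj =>
        if i = p then (if jj = q then cc else if jj = q+1 then ss else 0)
        else (if jj = q then (-ss) * U' (di i) q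
          else if jj = q+1 then cc * U' (di i) q
          else if jj < q then U' (di i) jj else U' (di i) (jj - 1)) with hU
      have hUp1 : U p q = cc := by simp [hU]
      have hUp2 : U p (q+1) = ss := by
        have c1 : q + 1 ≠ q := by omega
        simp [hU, c1]
      have hUp3 : ∀ jj, jj ≠ q → jj ≠ q+1 → U p jj = 0 := by
        intro jj h1 h2; simp [hU, h1, h2]
      have hUo1 : ∀ i, i ≠ p → U i q = (-ss) * U' (di i) q := by
        intro i h; simp [hU, h]
      have hUo2 : ∀ i, i ≠ p → U i (q+1) = cc * U' (di i) q := by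
        intro i h
        have c1 : q + 1 ≠ q := by omega
        simp [hU, h, c1]
      have hUo3 : ∀ i jj, i ≠ p → jj < q → U i jj = U' (di i) jj := by
        intro i jj h1 h2
        have c1 : jj ≠ q := by omega
        have c2 : jj ≠ q + 1 := by omega
        simp [hU, h1, c1, c2, h2]
      have hUo4 : ∀ i jj, i ≠ p → q+1 < jj → U i jj = U' (di i) (jj-1) := by
        intro i jj h1 h2
        have c1 : jj ≠ q := by omega
        have c2 : jj ≠ q + 1 := by omega
        have c3 : ¬ jj < q := by omega
        simp [hU, h1, c1, c2, c3]
      refine ⟨U, ?_, ?_, ?_⟩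
      · -- identity outside
        intro i jj h
        by_cases hip : i = p
        · have hjj : n+1 ≤ jj := by
            rcases h with h | h
            · omega
            · exact h
          rw [hip, hUp3 jj (by omega) (by omega), if_neg (by omega)]
        · rcases h with hNi | hNj
          · -- n+1 ≤ i
            have hdin : n ≤ di i := by simp only [hdi]; split_ifs <;> omega
            by_cases h1 : jj = q
            · rw [h1, hUo1 i hip, hU'id (di i) q (Or.inl hdin), if_neg (by omega),
                if_neg (by omega)]
              ring
            · by_cases h2 : jj = q+1
              · rw [h2, hUo2 i hip, hU'id (di i) q (Or.inl hdin), if_neg (by omega),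
                  if_neg (by omega)]
                ring
              · by_cases h3 : jj < q
                · rw [hUo3 i jj hip h3, hU'id (di i) jj (Or.inl hdin), if_neg (by omega),
                    if_neg (by omega)]
                · rw [hUo4 i jj hip (by omega), hU'id (di i) (jj-1) (Or.inl hdin)]
                  have hdii : di i = i - 1 := by simp only [hdi]; rw [if_neg (by omega)]
                  rw [hdii]
                  by_cases h4 : i = jj
                  · rw [if_pos (by omega), if_pos h4]
                  · rw [if_neg (by omega), if_neg h4]
          · -- n+1 ≤ jj
            have hjq : q + 1 < jj := by omega
            rw [hUo4 i jj hip hjq, hU'id (di i) (jj-1) (Or.inr (by omega))]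
            by_cases h4 : i = jj
            · have hilt : ¬ i < p := by omega
              have hdii : di i = i - 1 := by simp only [hdi]; rw [if_neg hilt]
              rw [hdii, if_pos (by omega), if_pos h4]
            · rw [if_neg (show di i ≠ jj - 1 by simp only [hdi]; split_ifs <;> omega),
                if_neg h4]
      · -- rows orthonormal
        intro i i' hi hi'
        by_cases hip : i = p <;> by_cases hi'p : i' = p
        · rw [hip, hi'p]
          have hks := key_sum hqn (fun jj => U p jj * U p jj)
            (fun u => if u = q then (1:ℝ) else 0) ?_ ?_ ?_
          · rw [hks]
            simp [hqn]
          · intro u hu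
            simp only [hUp3 u (by omega : u ≠ q) (by omega : u ≠ q + 1)]
            rw [if_neg (by omega)]
            ring
          · simp only [hUp1, hUp2]
            norm_num
            linear_combination hcs
          · intro u hu1 hu2
            simp only [hUp3 (u+1) (by omega : u + 1 ≠ q) (by omega : u + 1 ≠ q + 1)]
            rw [if_neg (by omega)]
            ring
        · rw [hip]
          have hks := key_sum hqn (fun jj => U p jj * U i' jj) (fun _ => (0:ℝ)) ?_ ?_ ?_
          · rw [hks, Finset.sum_const, smul_zero, if_neg (fun hc => hi'p hc.symm)]
          · intro u hu
            simp only [hUp3 u (by omega : u ≠ q) (by omega : u ≠ q + 1)]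
            ring
          · simp only [hUp1, hUp2, hUo1 i' hi'p, hUo2 i' hi'p]
            ring
          · intro u hu1 hu2
            simp only [hUp3 (u+1) (by omega : u + 1 ≠ q) (by omega : u + 1 ≠ q + 1)]
            ring
        · rw [hi'p]
          have hks := key_sum hqn (fun jj => U i jj * U p jj) (fun _ => (0:ℝ)) ?_ ?_ ?_
          · rw [hks, Finset.sum_const, smul_zero, if_neg hip]
          · intro u hu
            simp only [hUp3 u (by omega : u ≠ q) (by omega : u ≠ q + 1)]
            ring
          · simp only [hUp1, hUp2, hUo1 i hip, hUo2 i hip]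
            ring
          · intro u hu1 hu2
            simp only [hUp3 (u+1) (by omega : u + 1 ≠ q) (by omega : u + 1 ≠ q + 1)]
            ring
        · have hks := key_sum hqn (fun jj => U i jj * U i' jj)
            (fun u => U' (di i) u * U' (di i') u) ?_ ?_ ?_
          · rw [hks, hU'row (di i) (di i') (hdi_lt i hi hip) (hdi_lt i' hi' hi'p)]
            by_cases he : i = i'
            · rw [if_pos ((hdi_eq i i' hip hi'p).mpr he), if_pos he]
            · rw [if_neg (fun hc => he ((hdi_eq i i' hip hi'p).mp hc)), if_neg he]
          · intro u hu
            simp only [hUo3 i u hip hu, hUo3 i' u hi'p hu]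
          · simp only [hUo1 i hip, hUo1 i' hi'p, hUo2 i hip, hUo2 i' hi'p]
            linear_combination (U' (di i) q * U' (di i') q) * hcs
          · intro u hu1 hu2
            simp only [hUo4 i (u+1) hip (by omega : q + 1 < u + 1),
              hUo4 i' (u+1) hi'p (by omega : q + 1 < u + 1)]
            norm_num
      · -- values
        intro i hi
        by_cases hip : i = p
        · rw [hip]
          have hks := key_sum hqn (fun jj => (U p jj)^2 * y jj)
            (fun u => if u = q then x p else 0) ?_ ?_ ?_
          · rw [hks]
            simp [hqn]
          · intro u hu
            simp only [hUp3 u (by omega : u ≠ q) (by omega : u ≠ q + 1)]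
            rw [if_neg (by omega)]
            ring
          · simp only [hUp1, hUp2]
            norm_num
            linear_combination hval
          · intro u hu1 hu2
            simp only [hUp3 (u+1) (by omega : u + 1 ≠ q) (by omega : u + 1 ≠ q + 1)]
            rw [if_neg (by omega)]
            ring
        · have hkey : ss^2 * y q + cc^2 * y (q+1) = y q + y (q+1) - x p := by
            linear_combination (y q + y (q+1)) * hcs - hval
          have hks := key_sum hqn (fun jj => (U i jj)^2 * y jj)
            (fun u => (U' (di i) u)^2 * y'' u) ?_ ?_ ?_
          · rw [hks, hU'val (di i) (hdi_lt i hi hip), hx']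
            simp only []
            rw [hskip_di i hip]
          · intro u hu
            simp only [hUo3 i u hip hu, hy''lt u hu]
          · simp only [hUo1 i hip, hUo2 i hip, hy''q]
            linear_combination (U' (di i) q)^2 * hkey
          · intro u hu1 hu2
            simp only [hUo4 i (u+1) hip (by omega : q + 1 < u + 1), hy''gt u hu1]
            norm_num
/-- carry-vector recursion -/
def CCv (nk : ℕ → ℕ) (W : ℕ → ℕ → ℕ → ℝ) : ℕ → ℕ → ℝ
  | 0 => fun j => if j = 0 then 1 else 0
  | (k+1) => fun j =>
      if j ≤ nk k then W k (nk (k+1) - nk k) 0 * CCv nk W k j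
      else if j ≤ nk (k+1) then W k (nk (k+1) - nk k) (j - nk k)
      else 0

/-- rows of the infinite staircase matrix -/
def RowF (nk : ℕ → ℕ) (W : ℕ → ℕ → ℕ → ℝ) (k t : ℕ) : ℕ → ℝ := fun j =>
  if j ≤ nk k then W k t 0 * CCv nk W k j
  else if j ≤ nk (k+1) then W k t (j - nk k)
  else 0

lemma CCv_succ (nk : ℕ → ℕ) (W : ℕ → ℕ → ℕ → ℝ) (k : ℕ) :
    CCv nk W (k+1) = RowF nk W k (nk (k+1) - nk k) := rfl

/-- If `ξ, η ∈ c₀*` and `ξ ≼ η`, then `ξ = Qη` for some orthostochastic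
matrix `Q`. -/
theorem stmt_8 (ξ η : ℕ → ℝ) (hξ : IsCoStar ξ) (hη : IsCoStar η) (hmaj : SMaj ξ η) :
    ∃ Q : ℕ → ℕ → ℝ, Orthostochastic Q ∧
      ∀ i, HasSum (fun j => Q i j * η j) (ξ i) := by
  classical
  obtain ⟨hmaj1, hmaj2⟩ := hmaj
  obtain ⟨hξ0, hξa, hξt⟩ := hξ
  obtain ⟨hη0, hηa, hηt⟩ := hη
  set d : ℕ → ℝ := fun n => ∑ j ∈ range n, (η j - ξ j) with hd
  set g : ℕ → ℝ := fun n => d n + η n with hg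
  have hgd : ∀ n, g n = d n + η n := fun n => rfl
  have hd0 : ∀ n, 0 ≤ d n := by
    intro n
    simp only [hd]
    rw [Finset.sum_sub_distrib]
    have := hmaj1 n
    linarith
  have hg0 : ∀ n, 0 ≤ g n := by
    intro n
    have h1 := hη0 n
    have h2 := hd0 n
    rw [hgd]
    linarith
  have hdsucc : ∀ n, d (n+1) = d n + η n - ξ n := by
    intro n
    simp only [hd]
    rw [Finset.sum_range_succ]
    ring
  have hgtail : ∀ n, g n = 0 → ∀ m, n ≤ m → g m = 0 ∧ η m = 0 ∧ ξ m = 0 ∧ d m = 0 := by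
    intro n hn
    have hstep : ∀ m, g m = 0 → η m = 0 ∧ d m = 0 ∧ ξ m = 0 ∧ g (m+1) = 0 := by
      intro m hm
      rw [hgd] at hm
      have h1 := hη0 m
      have h2 := hd0 m
      have hη' : η m = 0 := by linarith
      have hd' : d m = 0 := by linarith
      have hd2 : d (m+1) = - ξ m := by rw [hdsucc m, hη', hd']; ring
      have h3 := hd0 (m+1)
      have h4 := hξ0 m
      have hξ' : ξ m = 0 := by rw [hd2] at h3; linarith
      have hη2 : η (m+1) = 0 := le_antisymm (by have := hηa (Nat.le_succ m); linarith) (hη0 _)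
      exact ⟨hη', hd', hξ', by rw [hgd, hd2, hη2, hξ']; ring⟩
    have key : ∀ m, n ≤ m → g m = 0 := by
      intro m hm
      induction m with
      | zero => have hn0 : n = 0 := by omega
                rw [← hn0]; exact hn
      | succ m ih =>
        rcases Nat.lt_or_ge n (m+1) with h | h
        · exact (hstep m (ih (by omega))).2.2.2
        · have : n = m + 1 := by omega
          rw [← this]; exact hn
    intro m hm
    have h1 := key m hm
    have h2 := hstep m h1
    exact ⟨h1, h2.1, h2.2.2.1, h2.2.1⟩
  have hfreq : ∀ ε : ℝ, 0 < ε → ∃ᶠ n in atTop, g n < ε := by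
    intro ε hε
    have h1 : ∃ᶠ n in atTop, d n < ε/2 := by
      have hlim : liminf (fun n => ((d n : ℝ) : EReal)) atTop < ((ε/2 : ℝ) : EReal) := by
        rw [hmaj2]
        exact_mod_cast EReal.coe_pos.mpr (by linarith)
      have h2 := Filter.frequently_lt_of_liminf_lt (h := hlim)
      exact h2.mono (fun n hn => by exact_mod_cast hn)
    have h2 : ∀ᶠ n in atTop, η n < ε/2 := hηt.eventually_lt_const (by linarith)
    refine (h1.and_eventually h2).mono ?_
    rintro n ⟨ha, hb⟩
    rw [hgd]
    linarith
  have hex : ∀ (n₀ k : ℕ), ∃ N, n₀ < N ∧ g N ≤ min ((1/2:ℝ)^k) (g n₀) := by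
    intro n₀ k
    by_cases hz : g n₀ = 0
    · refine ⟨n₀+1, by omega, ?_⟩
      have h1 := (hgtail n₀ hz (n₀+1) (by omega)).1
      rw [h1]
      exact le_min (by positivity) (by rw [hz])
    · have hpos : 0 < min ((1/2:ℝ)^k) (g n₀) :=
        lt_min (by positivity) (lt_of_le_of_ne (hg0 n₀) (Ne.symm hz))
      obtain ⟨N, hN1, hN2⟩ := (Filter.frequently_atTop.mp (hfreq _ hpos)) (n₀+1)
      exact ⟨N, by omega, le_of_lt hN2⟩
  set nk : ℕ → ℕ := fun k => Nat.rec 0 (fun k ih => Nat.find (hex ih (k+1))) k with hnk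
  have hnk0 : nk 0 = 0 := rfl
  have hnkS : ∀ k, nk (k+1) = Nat.find (hex (nk k) (k+1)) := fun k => rfl
  have hspec : ∀ k, nk k < nk (k+1) ∧ g (nk (k+1)) ≤ min ((1/2:ℝ)^(k+1)) (g (nk k)) := by
    intro k
    rw [hnkS k]
    exact Nat.find_spec (hex (nk k) (k+1))
  have hnk_lt : ∀ k, nk k < nk (k+1) := fun k => (hspec k).1
  have hnk_mono : StrictMono nk := strictMono_nat_of_lt_succ hnk_lt
  have hnk_ge : ∀ k, k ≤ nk k := fun k => hnk_mono.le_apply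
  have hglemm : ∀ k m, nk k ≤ m → m ≤ nk (k+1) → g (nk (k+1)) ≤ g m := by
    intro k m h1 h2
    rcases eq_or_lt_of_le h1 with he | hlt
    · exact le_trans ((hspec k).2.trans (min_le_right _ _)) (by rw [he])
    · rcases eq_or_lt_of_le h2 with he2 | hlt2
      · rw [he2]
      · have h3 : ¬ (g m ≤ min ((1/2:ℝ)^(k+1)) (g (nk k))) := by
          intro hc
          have h4 : m < Nat.find (hex (nk k) (k+1)) := by rw [← hnkS k]; exact hlt2
          exact Nat.find_min (hex (nk k) (k+1)) h4 ⟨hlt, hc⟩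
        have h4 := (hspec k).2
        push_neg at h3
        exact h4.trans h3.le
  have hgsmall : ∀ k, g (nk (k+1)) ≤ (1/2:ℝ)^(k+1) :=
    fun k => (hspec k).2.trans (min_le_left _ _)
  have hgnk0 : Tendsto (fun K => g (nk K)) atTop (nhds 0) := by
    apply squeeze_zero' (Filter.Eventually.of_forall (fun K => hg0 _))
      (by
        filter_upwards [eventually_ge_atTop 1] with K hK
        obtain ⟨k, rfl⟩ : ∃ k, K = k + 1 := ⟨K - 1, by omega⟩
        exact hgsmall k)
      (tendsto_pow_atTop_nhds_zero_of_lt_one (by norm_num) (by norm_num))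
  have hXid : ∀ P m, ∑ t ∈ range m, ξ (P + t) = d P - d (P+m) + ∑ t ∈ range m, η (P+t) := by
    intro P m
    induction m with
    | zero => simp
    | succ m ih =>
      rw [Finset.sum_range_succ, Finset.sum_range_succ, ih]
      have h1 : d (P+(m+1)) = d (P+m) + η (P+m) - ξ (P+m) := by
        have := hdsucc (P+m)
        rw [show P + (m+1) = (P+m)+1 by omega]
        exact this
      rw [h1]
      ring
  have exW : ∀ k, ∃ W : ℕ → ℕ → ℝ,
      (∀ t t', t < nk (k+1) - nk k + 1 → t' < nk (k+1) - nk k + 1 →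
        ∑ u ∈ range (nk (k+1) - nk k + 1), W t u * W t' u = if t = t' then 1 else 0) ∧
      (∀ t, t < nk (k+1) - nk k + 1 →
        ∑ u ∈ range (nk (k+1) - nk k + 1),
          (W t u)^2 * (if u = 0 then g (nk k) else η (nk k + u))
          = (if t = nk (k+1) - nk k then g (nk (k+1)) else ξ (nk k + t))) ∧
      (g (nk k) = 0 → ∀ t u, W t u = if t = u then 1 else 0) := by
    intro k
    set P := nk k with hP
    set L := nk (k+1) - nk k with hL
    have hPL : nk (k+1) = P + L := by have := hnk_lt k; omega
    have hL1 : 1 ≤ L := by have := hnk_lt k; omega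
    by_cases hz : g P = 0
    · refine ⟨fun t u => if t = u then 1 else 0, ?_, ?_, fun _ t u => rfl⟩
      · intro t t' ht ht'
        have e1 : ∑ u ∈ range (L+1), (if t = u then (1:ℝ) else 0) * (if t' = u then 1 else 0)
            = ∑ u ∈ range (L+1), (if t = u then (if t' = u then (1:ℝ) else 0) else 0) :=
          Finset.sum_congr rfl (fun u _ => by by_cases h1 : t = u <;> simp [h1])
        rw [e1, Finset.sum_ite_eq (range (L+1)) t (fun u => if t' = u then (1:ℝ) else 0),
          if_pos (mem_range.mpr ht)]
        by_cases h : t = t'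
        · rw [if_pos h.symm, if_pos h]
        · rw [if_neg (fun hc => h hc.symm), if_neg h]
      · intro t ht
        have htail := hgtail P hz
        have hx0 : (if t = L then g (nk (k+1)) else ξ (P + t)) = 0 := by
          by_cases h : t = L
          · rw [if_pos h]; exact (htail (nk (k+1)) (by omega)).1
          · rw [if_neg h]; exact (htail (P+t) (by omega)).2.2.1
        rw [hx0]
        apply Finset.sum_eq_zero
        intro u hu
        have hy0 : (if u = 0 then g P else η (P + u)) = 0 := by
          by_cases h : u = 0
          · rw [if_pos h]; exact hz
          · rw [if_neg h]; exact (htail (P+u) (by omega)).2.1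
        rw [hy0]; ring
    · have hyb : ∀ u, u + 1 < L + 1 →
          (fun u => if u = 0 then g P else η (P + u)) (u+1)
            ≤ (fun u => if u = 0 then g P else η (P + u)) u := by
        intro u hu
        show (if u+1 = 0 then g P else η (P+(u+1))) ≤ (if u = 0 then g P else η (P+u))
        rw [if_neg (by omega : ¬ (u+1 = 0))]
        by_cases h : u = 0
        · rw [if_pos h, hgd P]
          have h1 : η (P+(u+1)) ≤ η P := hηa (by omega)
          have h2 := hd0 P
          linarith
        · rw [if_neg h]
          exact hηa (by omega : P + u ≤ P + (u+1))
      have hHe : ∑ t ∈ range (L+1), (fun t => if t = L then g (nk (k+1)) else ξ (P + t)) t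
          = ∑ u ∈ range (L+1), (fun u => if u = 0 then g P else η (P + u)) u := by
        show ∑ t ∈ range (L+1), (if t = L then g (nk (k+1)) else ξ (P + t))
          = ∑ u ∈ range (L+1), (if u = 0 then g P else η (P + u))
        rw [Finset.sum_range_succ (fun t => if t = L then g (nk (k+1)) else ξ (P+t)) L]
        rw [Finset.sum_range_succ' (fun u => if u = 0 then g P else η (P+u)) L]
        have e1 : ∑ t ∈ range L, (if t = L then g (nk (k+1)) else ξ (P+t))
            = ∑ t ∈ range L, ξ (P+t) :=
          Finset.sum_congr rfl (fun t ht => if_neg (by have := mem_range.mp ht; omega))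
        have e2 : ∑ u ∈ range L, (fun u => if u = 0 then g P else η (P+u)) (u+1)
            = ∑ u ∈ range L, η (P+(u+1)) :=
          Finset.sum_congr rfl (fun u hu => if_neg (by omega))
        rw [e1, e2, if_pos rfl, if_pos rfl]
        have e3 := Finset.sum_range_succ' (fun t => η (P+t)) L
        have e4 : ∑ t ∈ range (L+1), η (P+t) = ∑ t ∈ range L, η (P+t) + η (nk (k+1)) := by
          rw [Finset.sum_range_succ, hPL]
        have hXL := hXid P L
        rw [← hPL] at hXL
        have e5 := hgd (nk (k+1))
        have e6 := hgd P
        simp only [Nat.add_zero] at e3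
        rw [hXL]
        linarith [e3, e4]
      have hH : ∀ s : Finset ℕ, s ⊆ range (L+1) →
          ∑ t ∈ s, (fun t => if t = L then g (nk (k+1)) else ξ (P + t)) t
            ≤ ∑ u ∈ range s.card, (fun u => if u = 0 then g P else η (P + u)) u := by
        intro s hsub
        show ∑ t ∈ s, (if t = L then g (nk (k+1)) else ξ (P + t))
          ≤ ∑ u ∈ range s.card, (if u = 0 then g P else η (P + u))
        have hcard : s.card ≤ L + 1 := by
          have := Finset.card_le_card hsub; rwa [card_range] at this
        have hY : ∀ m, 1 ≤ m → m ≤ L+1 →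
            ∑ u ∈ range m, (if u = 0 then g P else η (P+u))
              = d P + ∑ u ∈ range m, η (P+u) := by
          intro m h1 h2
          obtain ⟨m', rfl⟩ : ∃ m', m = m' + 1 := ⟨m - 1, by omega⟩
          rw [Finset.sum_range_succ' (fun u => if u = 0 then g P else η (P+u)) m',
              Finset.sum_range_succ' (fun u => η (P+u)) m']
          have e1 : ∑ u ∈ range m', (fun u => if u = 0 then g P else η (P+u)) (u+1)
              = ∑ u ∈ range m', η (P+(u+1)) :=
            Finset.sum_congr rfl (fun u hu => if_neg (by omega))
          rw [e1, if_pos rfl]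
          have := hgd P
          simp only [Nat.add_zero]
          linarith
        by_cases hLs : L ∈ s
        · have hm1 : 1 ≤ s.card := Finset.card_pos.mpr ⟨L, hLs⟩
          set s' := s.erase L with hs'
          have hcard' : s'.card = s.card - 1 := by rw [hs', Finset.card_erase_of_mem hLs]
          have e1 : ∑ t ∈ s', (if t = L then g (nk (k+1)) else ξ (P+t)) = ∑ t ∈ s', ξ (P+t) :=
            Finset.sum_congr rfl (fun t ht => if_neg (Finset.ne_of_mem_erase ht))
          have e2 : ∑ t ∈ s, (if t = L then g (nk (k+1)) else ξ (P+t))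
              = ∑ t ∈ s', ξ (P+t) + g (nk (k+1)) := by
            have h0 := Finset.sum_erase_add s (fun t => if t = L then g (nk (k+1)) else ξ (P+t)) hLs
            rw [← h0, e1]
            simp
          have e3 : ∑ t ∈ s', ξ (P+t) ≤ ∑ t ∈ range s'.card, ξ (P+t) :=
            sum_finset_le (fun t => ξ (P+t)) (fun i j hij => hξa (by omega)) s'
          have hXm := hXid P s'.card
          have hsum_eta : ∑ u ∈ range s.card, η (P+u)
              = ∑ u ∈ range s'.card, η (P+u) + η (P + s'.card) := by
            have hc : s.card = s'.card + 1 := by omega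
            rw [hc, Finset.sum_range_succ]
          have hgle : g (nk (k+1)) ≤ g (P + s'.card) := hglemm k (P + s'.card) (by omega) (by omega)
          have e5 := hgd (P + s'.card)
          rw [hY s.card hm1 hcard, e2, hsum_eta]
          linarith [e3, hXm, hgle, e5]
        · rcases Nat.eq_zero_or_pos s.card with hc0 | hc1
          · rw [Finset.card_eq_zero] at hc0
            simp [hc0]
          · have e1 : ∑ t ∈ s, (if t = L then g (nk (k+1)) else ξ (P+t)) = ∑ t ∈ s, ξ (P+t) :=
              Finset.sum_congr rfl (fun t ht => if_neg (fun hc => hLs (by rw [hc] at ht; exact ht)))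
            have e3 : ∑ t ∈ s, ξ (P+t) ≤ ∑ t ∈ range s.card, ξ (P+t) :=
              sum_finset_le (fun t => ξ (P+t)) (fun i j hij => hξa (by omega)) s
            have hXm := hXid P s.card
            have e6 : 0 ≤ d (P + s.card) := hd0 _
            rw [e1, hY s.card hc1 (by omega)]
            linarith
      obtain ⟨U, hid, hrow, hval⟩ := horn (L+1)
        (fun t => if t = L then g (nk (k+1)) else ξ (P + t))
        (fun u => if u = 0 then g P else η (P + u)) hyb hH hHe
      exact ⟨U, hrow, hval, fun h => absurd h hz⟩
  choose W hWrow hWval hWid using exW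
  set C : ℕ → ℕ → ℝ := CCv nk W with hCdef
  set Row : ℕ → ℕ → ℕ → ℝ := RowF nk W with hRowdef
  have hC0 : ∀ j, C 0 j = if j = 0 then 1 else 0 := fun j => rfl
  have hCS : ∀ k j, C (k+1) j = if j ≤ nk k then W k (nk (k+1) - nk k) 0 * C k j
      else if j ≤ nk (k+1) then W k (nk (k+1) - nk k) (j - nk k) else 0 := fun k j => rfl
  have hCsucc : ∀ k, C (k+1) = Row k (nk (k+1) - nk k) := fun k => rfl
  set blk : ℕ → ℕ := fun i => Nat.findGreatest (fun k => nk k ≤ i) i with hblkdef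
  set U : ℕ → ℕ → ℝ := fun i => Row (blk i) (i - nk (blk i)) with hUdef
  have hCsupp : ∀ k j, nk k < j → C k j = 0 := by
    intro k
    induction k with
    | zero =>
      intro j hj
      rw [hnk0] at hj
      rw [hC0 j, if_neg (by omega)]
    | succ k ih =>
      intro j hj
      have h0 := hnk_lt k
      rw [hCS k j, if_neg (by omega), if_neg (by omega)]
  have hRowsupp : ∀ k t j, nk (k+1) < j → Row k t j = 0 := by
    intro k t j hj
    have h0 := hnk_lt k
    show (if j ≤ nk k then W k t 0 * C k j else if j ≤ nk (k+1) then W k t (j - nk k) else 0) = 0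
    rw [if_neg (by omega), if_neg (by omega)]
  have hblk1 : ∀ i, nk (blk i) ≤ i := by
    intro i
    exact Nat.findGreatest_spec (P := fun k => nk k ≤ i) (Nat.zero_le i)
      (by show nk 0 ≤ i; rw [hnk0]; exact Nat.zero_le i)
  have hblk2 : ∀ i, i < nk (blk i + 1) := by
    intro i
    by_contra hc
    push_neg at hc
    have h1 : blk i + 1 ≤ i := le_trans (hnk_ge (blk i + 1)) hc
    exact Nat.findGreatest_is_greatest (Nat.lt_succ_self _) h1 hc
  have hblk_eq : ∀ k i, nk k ≤ i → i < nk (k+1) → blk i = k := by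
    intro k i h1 h2
    have hle : k ≤ blk i := Nat.le_findGreatest (le_trans (hnk_ge k) h1) h1
    have hgt : blk i ≤ k := by
      by_contra hc
      push_neg at hc
      have h3 := hblk1 i
      have h4 : nk (k+1) ≤ nk (blk i) := hnk_mono.monotone (show k + 1 ≤ blk i by omega)
      omega
    omega
  have hUrow : ∀ k i, nk k ≤ i → i < nk (k+1) → U i = Row k (i - nk k) := by
    intro k i h1 h2
    show Row (blk i) (i - nk (blk i)) = Row k (i - nk k)
    rw [hblk_eq k i h1 h2]
  have hUsupp : ∀ K i j, i < nk K → nk K < j → U i j = 0 := by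
    intro K i j hi hj
    have hb1 := hblk1 i
    have hb2 := hblk2 i
    have hbK : blk i + 1 ≤ K := by
      by_contra hc
      push_neg at hc
      have : nk K ≤ nk (blk i) := hnk_mono.monotone (show K ≤ blk i by omega)
      omega
    have h4 : nk (blk i + 1) ≤ nk K := hnk_mono.monotone hbK
    show Row (blk i) (i - nk (blk i)) j = 0
    exact hRowsupp (blk i) _ j (by omega)
  have hsplit : ∀ k (F : ℕ → ℝ), ∑ j ∈ range (nk (k+1) + 1), F j
      = ∑ j ∈ range (nk k + 1), F j + ∑ u ∈ range (nk (k+1) - nk k), F (nk k + 1 + u) := by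
    intro k F
    have h0 := hnk_lt k
    have h1 : (∑ j ∈ Ico 0 (nk k + 1), F j) + ∑ j ∈ Ico (nk k + 1) (nk (k+1) + 1), F j
        = ∑ j ∈ Ico 0 (nk (k+1) + 1), F j :=
      Finset.sum_Ico_consecutive F (by omega) (by omega)
    have h2 : ∑ j ∈ Ico (nk k + 1) (nk (k+1) + 1), F j
        = ∑ u ∈ range (nk (k+1) + 1 - (nk k + 1)), F (nk k + 1 + u) :=
      Finset.sum_Ico_eq_sum_range F (nk k + 1) (nk (k+1) + 1)
    have h3 : nk (k+1) + 1 - (nk k + 1) = nk (k+1) - nk k := by omega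
    rw [h3] at h2
    simp only [← Finset.range_eq_Ico] at h1
    rw [← h1, h2]
  have hRowval1 : ∀ k t j, j ≤ nk k → Row k t j = W k t 0 * C k j := by
    intro k t j hj
    show (if j ≤ nk k then W k t 0 * C k j else if j ≤ nk (k+1) then W k t (j - nk k) else 0)
      = W k t 0 * C k j
    rw [if_pos hj]
  have hRowval2 : ∀ k t u, u < nk (k+1) - nk k → Row k t (nk k + 1 + u) = W k t (u+1) := by
    intro k t u hu
    have h0 := hnk_lt k
    show (if nk k + 1 + u ≤ nk k then W k t 0 * C k (nk k + 1 + u)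
      else if nk k + 1 + u ≤ nk (k+1) then W k t (nk k + 1 + u - nk k) else 0) = W k t (u+1)
    rw [if_neg (by omega), if_pos (by omega)]
    congr 1
    omega
  have O : ∀ K, (∀ i i', i < nk K → i' < nk K →
        ∑ j ∈ range (nk K + 1), U i j * U i' j = if i = i' then 1 else 0) ∧
      (∀ i, i < nk K → ∑ j ∈ range (nk K + 1), U i j * C K j = 0) ∧
      (∑ j ∈ range (nk K + 1), C K j * C K j = 1) := by
    intro K
    induction K with
    | zero =>
      refine ⟨?_, ?_, ?_⟩
      · intro i i' hi hi'
        rw [hnk0] at hi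
        omega
      · intro i hi
        rw [hnk0] at hi
        omega
      · rw [hnk0, Finset.sum_range_one]
        have h1 : C 0 0 = 1 := by rw [hC0 0, if_pos rfl]
        rw [h1]
        norm_num
    | succ k IH =>
      obtain ⟨IH1, IH2, IH3⟩ := IH
      have hnew : ∀ t t', t < nk (k+1) - nk k + 1 → t' < nk (k+1) - nk k + 1 →
          ∑ j ∈ range (nk (k+1) + 1), Row k t j * Row k t' j = if t = t' then 1 else 0 := by
        intro t t' ht ht'
        have e1 : ∑ j ∈ range (nk k + 1), Row k t j * Row k t' j
            = W k t 0 * W k t' 0 * ∑ j ∈ range (nk k + 1), C k j * C k j := by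
          rw [Finset.mul_sum]
          refine Finset.sum_congr rfl (fun j hj => ?_)
          rw [hRowval1 k t j (by have := mem_range.mp hj; omega),
              hRowval1 k t' j (by have := mem_range.mp hj; omega)]
          ring
        have e2 : ∑ u ∈ range (nk (k+1) - nk k), Row k t (nk k + 1 + u) * Row k t' (nk k + 1 + u)
            = ∑ u ∈ range (nk (k+1) - nk k), W k t (u+1) * W k t' (u+1) :=
          Finset.sum_congr rfl (fun u hu => by
            rw [hRowval2 k t u (mem_range.mp hu), hRowval2 k t' u (mem_range.mp hu)])
        rw [hsplit k, e1, e2, IH3, mul_one]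
        have hw := hWrow k t t' ht ht'
        rw [Finset.sum_range_succ'] at hw
        linarith [hw]
      have hcross : ∀ t, t < nk (k+1) - nk k + 1 → ∀ i, i < nk k →
          ∑ j ∈ range (nk (k+1) + 1), Row k t j * U i j = 0 := by
        intro t ht i hi
        have e1 : ∑ j ∈ range (nk k + 1), Row k t j * U i j
            = W k t 0 * ∑ j ∈ range (nk k + 1), U i j * C k j := by
          rw [Finset.mul_sum]
          refine Finset.sum_congr rfl (fun j hj => ?_)
          rw [hRowval1 k t j (by have := mem_range.mp hj; omega)]
          ring
        have e2 : ∑ u ∈ range (nk (k+1) - nk k), Row k t (nk k + 1 + u) * U i (nk k + 1 + u) = 0 :=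
          Finset.sum_eq_zero (fun u hu => by
            rw [hUsupp k i (nk k + 1 + u) hi (by omega)]; ring)
        rw [hsplit k, e1, e2, IH2 i hi]
        ring
      have hext : ∀ i i', i < nk k → i' < nk k →
          ∑ j ∈ range (nk (k+1) + 1), U i j * U i' j
            = ∑ j ∈ range (nk k + 1), U i j * U i' j := by
        intro i i' hi hi'
        symm
        apply Finset.sum_subset
        · apply Finset.range_subset_range.mpr
          have := hnk_lt k
          omega
        · intro j hj1 hj2
          rw [mem_range, not_lt] at hj2
          rw [hUsupp k i j hi (by omega)]
          ring
      refine ⟨?_, ?_, ?_⟩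
      · intro i i' hi hi'
        by_cases h1 : i < nk k <;> by_cases h2 : i' < nk k
        · rw [hext i i' h1 h2]
          exact IH1 i i' h1 h2
        · rw [hUrow k i' (by omega) hi']
          have hc := hcross (i' - nk k) (by omega) i h1
          have hcomm : ∑ j ∈ range (nk (k+1) + 1), U i j * Row k (i' - nk k) j
              = ∑ j ∈ range (nk (k+1) + 1), Row k (i' - nk k) j * U i j :=
            Finset.sum_congr rfl (fun j _ => mul_comm _ _)
          rw [hcomm, hc, if_neg (by omega)]
        · rw [hUrow k i (by omega) hi]
          have hc := hcross (i - nk k) (by omega) i' h2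
          rw [hc, if_neg (by omega)]
        · rw [hUrow k i (by omega) hi, hUrow k i' (by omega) hi']
          rw [hnew (i - nk k) (i' - nk k) (by omega) (by omega)]
          by_cases he : i = i'
          · rw [if_pos (by omega), if_pos he]
          · rw [if_neg (by omega), if_neg he]
      · intro i hi
        rw [hCsucc k]
        by_cases h1 : i < nk k
        · have hc := hcross (nk (k+1) - nk k) (by omega) i h1
          have hcomm : ∑ j ∈ range (nk (k+1) + 1), U i j * Row k (nk (k+1) - nk k) j
              = ∑ j ∈ range (nk (k+1) + 1), Row k (nk (k+1) - nk k) j * U i j :=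
            Finset.sum_congr rfl (fun j _ => mul_comm _ _)
          rw [hcomm, hc]
        · rw [hUrow k i (by omega) hi]
          rw [hnew (i - nk k) (nk (k+1) - nk k) (by omega) (by omega)]
          rw [if_neg (by omega)]
      · rw [hCsucc k]
        rw [hnew (nk (k+1) - nk k) (nk (k+1) - nk k) (by omega) (by omega)]
        rw [if_pos rfl]
  have VAL : ∀ K, (∀ i, i < nk K → ∑ j ∈ range (nk K + 1), (U i j)^2 * η j = ξ i) ∧
      (∑ j ∈ range (nk K + 1), (C K j)^2 * η j = g (nk K)) := by
    intro K
    induction K with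
    | zero =>
      refine ⟨?_, ?_⟩
      · intro i hi
        rw [hnk0] at hi
        omega
      · rw [hnk0, Finset.sum_range_one]
        have h1 : C 0 0 = 1 := by rw [hC0 0, if_pos rfl]
        have hd00 : d 0 = 0 := by simp [hd]
        rw [h1, hgd 0, hd00]
        ring
    | succ k IH =>
      obtain ⟨IH1, IH2⟩ := IH
      have hnewv : ∀ t, t < nk (k+1) - nk k + 1 →
          ∑ j ∈ range (nk (k+1) + 1), (Row k t j)^2 * η j
            = (if t = nk (k+1) - nk k then g (nk (k+1)) else ξ (nk k + t)) := by
        intro t ht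
        have e1 : ∑ j ∈ range (nk k + 1), (Row k t j)^2 * η j
            = (W k t 0)^2 * ∑ j ∈ range (nk k + 1), (C k j)^2 * η j := by
          rw [Finset.mul_sum]
          refine Finset.sum_congr rfl (fun j hj => ?_)
          rw [hRowval1 k t j (by have := mem_range.mp hj; omega)]
          ring
        have e2 : ∑ u ∈ range (nk (k+1) - nk k), (Row k t (nk k + 1 + u))^2 * η (nk k + 1 + u)
            = ∑ u ∈ range (nk (k+1) - nk k), (W k t (u+1))^2 * η (nk k + (u+1)) :=
          Finset.sum_congr rfl (fun u hu => by
            rw [hRowval2 k t u (mem_range.mp hu), show nk k + 1 + u = nk k + (u+1) by omega])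
        rw [hsplit k, e1, e2, IH2]
        have hw := hWval k t ht
        rw [Finset.sum_range_succ'] at hw
        have e3 : ∑ u ∈ range (nk (k+1) - nk k),
            (fun u => (W k t u)^2 * (if u = 0 then g (nk k) else η (nk k + u))) (u+1)
            = ∑ u ∈ range (nk (k+1) - nk k), (W k t (u+1))^2 * η (nk k + (u+1)) :=
          Finset.sum_congr rfl (fun u hu => by
            show (W k t (u+1))^2 * (if u+1 = 0 then g (nk k) else η (nk k + (u+1))) = _
            rw [if_neg (by omega)])
        rw [e3] at hw
        norm_num at hw
        linarith [hw]
      refine ⟨?_, ?_⟩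
      · intro i hi
        by_cases h1 : i < nk k
        · have hext2 : ∑ j ∈ range (nk (k+1) + 1), (U i j)^2 * η j
              = ∑ j ∈ range (nk k + 1), (U i j)^2 * η j := by
            symm
            apply Finset.sum_subset
            · apply Finset.range_subset_range.mpr
              have := hnk_lt k
              omega
            · intro j hj1 hj2
              rw [mem_range, not_lt] at hj2
              rw [hUsupp k i j h1 (by omega)]
              ring
          rw [hext2]
          exact IH1 i h1
        · rw [hUrow k i (by omega) hi, hnewv (i - nk k) (by omega), if_neg (by omega)]
          congr 1
          omega
      · rw [hCsucc k, hnewv (nk (k+1) - nk k) (by omega), if_pos rfl]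
  have hcol : ∀ K j j', j ≤ nk K → j' ≤ nk K →
      ∑ i ∈ range (nk K), U i j * U i j' + C K j * C K j' = if j = j' then 1 else 0 := by
    intro K j j' hj hj'
    obtain ⟨O1, O2, O3⟩ := O K
    set M : ℕ → ℕ → ℝ := fun a => if a < nk K then U a else C K with hM
    have hMrow : ∀ a a', a < nk K + 1 → a' < nk K + 1 →
        ∑ jx ∈ range (nk K + 1), M a jx * M a' jx = if a = a' then 1 else 0 := by
      intro a a' ha ha'
      by_cases h1 : a < nk K <;> by_cases h2 : a' < nk K
      · have hMa : M a = U a := by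
          show (if a < nk K then U a else C K) = U a
          rw [if_pos h1]
        have hMa' : M a' = U a' := by
          show (if a' < nk K then U a' else C K) = U a'
          rw [if_pos h2]
        rw [hMa, hMa']
        exact O1 a a' h1 h2
      · have hMa : M a = U a := by
          show (if a < nk K then U a else C K) = U a
          rw [if_pos h1]
        have hMa' : M a' = C K := by
          show (if a' < nk K then U a' else C K) = C K
          rw [if_neg h2]
        rw [hMa, hMa', O2 a h1, if_neg (by omega)]
      · have hMa : M a = C K := by
          show (if a < nk K then U a else C K) = C K
          rw [if_neg h1]
        have hMa' : M a' = U a' := by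
          show (if a' < nk K then U a' else C K) = U a'
          rw [if_pos h2]
        rw [hMa, hMa']
        have hcomm : ∑ jx ∈ range (nk K + 1), C K jx * U a' jx
            = ∑ jx ∈ range (nk K + 1), U a' jx * C K jx :=
          Finset.sum_congr rfl (fun jx _ => mul_comm _ _)
        rw [hcomm, O2 a' h2, if_neg (by omega)]
      · have hMa : M a = C K := by
          show (if a < nk K then U a else C K) = C K
          rw [if_neg h1]
        have hMa' : M a' = C K := by
          show (if a' < nk K then U a' else C K) = C K
          rw [if_neg h2]
        rw [hMa, hMa', O3, if_pos (by omega)]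
    have hc := ortho_flip hMrow j j' (by omega) (by omega)
    rw [Finset.sum_range_succ] at hc
    have e2 : M (nk K) = C K := by
      show (if nk K < nk K then U (nk K) else C K) = C K
      rw [if_neg (lt_irrefl _)]
    have e3 : ∑ i ∈ range (nk K), M i j * M i j' = ∑ i ∈ range (nk K), U i j * U i j' :=
      Finset.sum_congr rfl (fun i hi => by
        have hMi : M i = U i := by
          show (if i < nk K then U i else C K) = U i
          rw [if_pos (mem_range.mp hi)]
        rw [hMi])
    rw [e2, e3] at hc
    exact hc
  have hWcarry : ∀ m, (W m (nk (m+1) - nk m) 0)^2 * g (nk m) ≤ g (nk (m+1)) := by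
    intro m
    have hv := hWval m (nk (m+1) - nk m) (by omega)
    rw [if_pos rfl] at hv
    have hterm := Finset.single_le_sum
      (f := fun u => (W m (nk (m+1) - nk m) u)^2 * (if u = 0 then g (nk m) else η (nk m + u)))
      (fun u _ => mul_nonneg (sq_nonneg _) (by
        by_cases h : u = 0
        · rw [if_pos h]; exact hg0 _
        · rw [if_neg h]; exact hη0 _))
      (mem_range.mpr (by omega : (0:ℕ) < nk (m+1) - nk m + 1))
    rw [hv] at hterm
    have e4 : (fun u => (W m (nk (m+1) - nk m) u)^2 * (if u = 0 then g (nk m) else η (nk m + u))) 0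
        = (W m (nk (m+1) - nk m) 0)^2 * g (nk m) := by
      show (W m (nk (m+1) - nk m) 0)^2 * (if (0:ℕ) = 0 then g (nk m) else η (nk m + 0))
        = (W m (nk (m+1) - nk m) 0)^2 * g (nk m)
      rw [if_pos rfl]
    rw [if_pos rfl] at hterm
    exact hterm
  have hCtend : ∀ j, Tendsto (fun K => C K j) atTop (nhds 0) := by
    intro j
    set k0 := j + 1 with hk0
    have hjk0 : j < nk k0 := lt_of_lt_of_le (Nat.lt_succ_self j) (hnk_ge k0)
    by_cases hall : ∀ m, g (nk m) ≠ 0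
    · have hCk0 : (C k0 j)^2 ≤ 1 := by
        have h3 := (O k0).2.2
        have h4 := Finset.single_le_sum (f := fun j' => C k0 j' * C k0 j')
          (fun j' _ => mul_self_nonneg _) (mem_range.mpr (by omega : j < nk k0 + 1))
        rw [h3] at h4
        rw [pow_two]
        exact h4
      have hchain : ∀ K, k0 ≤ K → (C K j)^2 * g (nk k0) ≤ g (nk K) := by
        intro K hK
        induction K with
        | zero => omega
        | succ K ih =>
          rcases Nat.lt_or_ge k0 (K+1) with h | h
          · have hKk0 : k0 ≤ K := by omega
            have hprev := ih hKk0
            have hCrec : C (K+1) j = W K (nk (K+1) - nk K) 0 * C K j := by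
              rw [hCS K j, if_pos (by
                have h6 : nk k0 ≤ nk K := hnk_mono.monotone hKk0
                omega)]
            rw [hCrec]
            calc (W K (nk (K+1) - nk K) 0 * C K j)^2 * g (nk k0)
                = (W K (nk (K+1) - nk K) 0)^2 * ((C K j)^2 * g (nk k0)) := by ring
              _ ≤ (W K (nk (K+1) - nk K) 0)^2 * g (nk K) :=
                  mul_le_mul_of_nonneg_left hprev (sq_nonneg _)
              _ ≤ g (nk (K+1)) := hWcarry K
          · have hkeq : k0 = K + 1 := by omega
            rw [← hkeq]
            have h5 := hg0 (nk k0)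
            nlinarith [hCk0, h5]
      have hgk0pos : 0 < g (nk k0) := lt_of_le_of_ne (hg0 _) (Ne.symm (hall k0))
      have hsq : Tendsto (fun K => (C K j)^2) atTop (nhds 0) := by
        have hb : ∀ᶠ K in atTop, (C K j)^2 ≤ g (nk K) / g (nk k0) := by
          filter_upwards [eventually_ge_atTop k0] with K hK
          rw [le_div_iff₀ hgk0pos]
          exact hchain K hK
        have h7 : Tendsto (fun K => g (nk K) / g (nk k0)) atTop (nhds 0) := by
          simpa using hgnk0.div_const (g (nk k0))
        exact squeeze_zero' (Filter.Eventually.of_forall fun K => sq_nonneg _) hb h7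
      have habs : Tendsto (fun K => |C K j|) atTop (nhds 0) := by
        have h2 := (Real.continuous_sqrt.tendsto 0).comp hsq
        rw [Real.sqrt_zero] at h2
        refine h2.congr (fun K => ?_)
        exact Real.sqrt_sq_eq_abs _
      have hneg : Tendsto (fun K => -|C K j|) atTop (nhds 0) := by
        simpa using habs.neg
      exact tendsto_of_tendsto_of_tendsto_of_le_of_le hneg habs
        (fun K => neg_abs_le _) (fun K => le_abs_self _)
    · push_neg at hall
      obtain ⟨m, hm2⟩ := hall
      have hzero : ∀ K, m < K → ∀ j', j' < nk K → C K j' = 0 := by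
        intro K hK j' hj'
        obtain ⟨K', rfl⟩ : ∃ K', K = K' + 1 := ⟨K - 1, by omega⟩
        have hgK : g (nk K') = 0 :=
          (hgtail (nk m) hm2 (nk K') (hnk_mono.monotone (by omega : m ≤ K'))).1
        have hWK := hWid K' hgK
        have hL1 : 1 ≤ nk (K'+1) - nk K' := by have := hnk_lt K'; omega
        rw [hCS K' j']
        by_cases hj1 : j' ≤ nk K'
        · rw [if_pos hj1, hWK (nk (K'+1) - nk K') 0, if_neg (by omega)]
          ring
        · rw [if_neg hj1, if_pos (by omega)]
          rw [hWK (nk (K'+1) - nk K') (j' - nk K'), if_neg (by omega)]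
      have heq : (fun (_:ℕ) => (0:ℝ)) =ᶠ[atTop] (fun K => C K j) := by
        filter_upwards [eventually_gt_atTop m, eventually_ge_atTop (j+1)] with K h1 h2
        exact (hzero K h1 j (lt_of_lt_of_le (by omega) (hnk_ge K))).symm
      exact Tendsto.congr' heq tendsto_const_nhds
  refine ⟨fun i j => (U i j)^2, ⟨U, ⟨?_, ?_⟩, fun i j => rfl⟩, ?_⟩
  · -- rows of U are orthonormal
    intro i i'
    set K := max (blk i) (blk i') + 1 with hKdef
    have hiK : i < nk K :=
      lt_of_lt_of_le (hblk2 i) (hnk_mono.monotone (by omega : blk i + 1 ≤ K))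
    have hi'K : i' < nk K :=
      lt_of_lt_of_le (hblk2 i') (hnk_mono.monotone (by omega : blk i' + 1 ≤ K))
    have hval := (O K).1 i i' hiK hi'K
    have hfin : ∀ j ∉ range (nk K + 1), U i j * U i' j = 0 := by
      intro j hj
      rw [mem_range, not_lt] at hj
      rw [hUsupp K i j hiK (by omega)]
      ring
    have h2 := hasSum_sum_of_ne_finset_zero (L := SummationFilter.unconditional ℕ) hfin
    rwa [hval] at h2
  · -- columns of U are orthonormal
    intro j j'
    have hbdd : ∀ (jx M : ℕ), ∑ i ∈ range M, (U i jx)^2 ≤ 1 := by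
      intro jx M
      set K := M + jx with hK
      have hMle : M ≤ nk K := le_trans (by omega) (hnk_ge K)
      have hjle : jx ≤ nk K := le_trans (by omega) (hnk_ge K)
      have h1 : ∑ i ∈ range M, (U i jx)^2 ≤ ∑ i ∈ range (nk K), (U i jx)^2 :=
        Finset.sum_le_sum_of_subset_of_nonneg (Finset.range_subset_range.mpr hMle)
          (fun i _ _ => sq_nonneg _)
      have h2 := hcol K jx jx hjle hjle
      rw [if_pos rfl] at h2
      have h3 : ∑ i ∈ range (nk K), U i jx * U i jx = ∑ i ∈ range (nk K), (U i jx)^2 :=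
        Finset.sum_congr rfl (fun i _ => (pow_two (U i jx)).symm)
      rw [h3] at h2
      nlinarith [mul_self_nonneg (C K jx), h1, h2]
    have hsq1 : Summable (fun i => (U i j)^2) :=
      summable_of_sum_range_le (fun i => sq_nonneg _) (hbdd j)
    have hsq2 : Summable (fun i => (U i j')^2) :=
      summable_of_sum_range_le (fun i => sq_nonneg _) (hbdd j')
    have habs : Summable (fun i => |U i j * U i j'|) := by
      have hb : ∀ i, |U i j * U i j'| ≤ (1/2) * ((U i j)^2 + (U i j')^2) := by
        intro i
        rw [abs_mul]
        nlinarith [two_mul_le_add_sq (|U i j|) (|U i j'|), sq_abs (U i j), sq_abs (U i j'),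
          abs_nonneg (U i j), abs_nonneg (U i j')]
      exact Summable.of_nonneg_of_le (fun i => abs_nonneg _) hb ((hsq1.add hsq2).mul_left (1/2))
    have hsummable : Summable (fun i => U i j * U i j') := Summable.of_abs habs
    have hhs := hsummable.hasSum
    have htt := hhs.tendsto_sum_nat
    have hsub : Tendsto (fun K => ∑ i ∈ range (nk K), U i j * U i j') atTop
        (nhds (∑' i, U i j * U i j')) := htt.comp (hnk_mono.tendsto_atTop)
    have hother : Tendsto (fun K => ∑ i ∈ range (nk K), U i j * U i j') atTop
        (nhds (if j = j' then 1 else 0)) := by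
      have h1 : Tendsto (fun K => (if j = j' then (1:ℝ) else 0) - C K j * C K j') atTop
          (nhds ((if j = j' then (1:ℝ) else 0) - 0 * 0)) :=
        tendsto_const_nhds.sub ((hCtend j).mul (hCtend j'))
      have h2 : ((if j = j' then (1:ℝ) else 0) - 0 * 0) = (if j = j' then (1:ℝ) else 0) := by
        ring
      rw [h2] at h1
      refine h1.congr' ?_
      filter_upwards [eventually_ge_atTop (j+1), eventually_ge_atTop (j'+1)] with K h3 h4
      have hjK : j ≤ nk K := le_trans (by omega) (hnk_ge K)
      have hj'K : j' ≤ nk K := le_trans (by omega) (hnk_ge K)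
      have h5 := hcol K j j' hjK hj'K
      linarith [h5]
    have heqq := tendsto_nhds_unique hsub hother
    rwa [heqq] at hhs
  · -- values
    intro i
    have hiK : i < nk (blk i + 1) := hblk2 i
    have hval := (VAL (blk i + 1)).1 i hiK
    have hfin : ∀ j ∉ range (nk (blk i + 1) + 1), (U i j)^2 * η j = 0 := by
      intro j hj
      rw [mem_range, not_lt] at hj
      rw [hUsupp (blk i + 1) i j hiK (by omega)]
      ring
    have h2 := hasSum_sum_of_ne_finset_zero (L := SummationFilter.unconditional ℕ) hfin
    rwa [hval] at h2

end
end

section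
/- Let ξ, η ∈ c₀* both be nonsummable, with ξ ≺ η and liminf_{n→∞} ∑_{j=1}^n (η_j − ξ_j) > 0 (i.e., ξ is not strongly majorized by η). Then there exist integers p and n with 0 ≤ p < n such that: (a) ∑_{j=1}^k ξ_j ≤ ∑_{j=1}^{min(k, n−p)} η_j for every 1 ≤ k ≤ n; and (b) ∑_{j=n+1}^{n+m} ξ_j ≤ ∑_{j=n−p+1}^{n−p+m} η_j for every m ≥ 1. -/
noncomputable section

open Filter Finset

/-- If `ξ, η ∈ c₀*` are nonsummable, `ξ ≺ η`, and
`liminf_n ∑_{j<n} (η_j − ξ_j) > 0`, then there are integers `0 ≤ p < n` with: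
(a) `∑_{j<k} ξ_j ≤ ∑_{j<min(k, n−p)} η_j` for every `k ≤ n`
    (i.e. `ξχ[1,n] ≺ ηχ[1,n−p]` in the paper's 1-indexed notation); and
(b) `∑_{j=n}^{n+m-1} ξ_j ≤ ∑_{j=n−p}^{n−p+m-1} η_j` for every `m`
    (i.e. `ξ^{(n)} ≺ η^{(n−p)}`). -/
theorem stmt_11 (ξ η : ℕ → ℝ) (hξ : IsCoStar ξ) (hη : IsCoStar η)
    (hξs : ¬ Summable ξ) (hηs : ¬ Summable η) (hmaj : Maj ξ η)
    (h : 0 < liminf (fun n => ((∑ j ∈ range n, (η j - ξ j) : ℝ) : EReal)) atTop) :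
    ∃ p n : ℕ, p < n ∧
      (∀ k, k ≤ n → ∑ j ∈ range k, ξ j ≤ ∑ j ∈ range (min k (n - p)), η j) ∧
      (∀ m : ℕ, ∑ j ∈ Finset.Ico n (n + m), ξ j ≤
          ∑ j ∈ Finset.Ico (n - p) (n - p + m), η j) := by
  classical
  obtain ⟨hξ0, hξa, hξt⟩ := hξ
  obtain ⟨hη0, hηa, hηt⟩ := hη
  have Sxmono : Monotone fun n => ∑ j ∈ range n, ξ j := fun a b hab =>
    Finset.sum_le_sum_of_subset_of_nonneg (Finset.range_subset_range.2 hab) fun i _ _ => hξ0 i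
  have Symono : Monotone fun n => ∑ j ∈ range n, η j := fun a b hab =>
    Finset.sum_le_sum_of_subset_of_nonneg (Finset.range_subset_range.2 hab) fun i _ _ => hη0 i
  -- extract a real δ₂ > 0 with eventually δ₂ ≤ ∑ η - ∑ ξ
  obtain ⟨c, hc0, hcl⟩ := exists_between h
  have hcT : c ≠ ⊤ := (lt_of_lt_of_le hcl le_top).ne
  have hcB : c ≠ ⊥ := ne_bot_of_gt hc0
  set δ₂ := c.toReal with hδ₂def
  have hc : (δ₂ : EReal) = c := EReal.coe_toReal hcT hcB
  have hδ₂pos : 0 < δ₂ := by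
    have h0 : ((0:ℝ) : EReal) < (δ₂ : EReal) := by rw [hc]; exact_mod_cast hc0
    exact_mod_cast h0
  have hev : ∀ᶠ k in atTop, c < ((∑ j ∈ range k, (η j - ξ j) : ℝ) : EReal) :=
    eventually_lt_of_lt_liminf hcl
  obtain ⟨N, hN⟩ := eventually_atTop.1 hev
  have hD : ∀ k, N ≤ k → δ₂ ≤ ∑ j ∈ range k, η j - ∑ j ∈ range k, ξ j := by
    intro k hk
    have h1 := hN k hk
    rw [← hc] at h1
    have h2 : δ₂ < ∑ j ∈ range k, (η j - ξ j) := by exact_mod_cast h1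
    rw [Finset.sum_sub_distrib] at h2
    linarith
  set δ := δ₂ / 3 with hδdef
  have hδpos : 0 < δ := by positivity
  obtain ⟨J, hJ⟩ : ∃ J, ∀ j, J ≤ j → η j ≤ δ := by
    obtain ⟨J, hJ'⟩ := eventually_atTop.1 (hηt.eventually_lt_const hδpos)
    exact ⟨J, fun j hj => (hJ' j hj).le⟩
  have hSxT : Tendsto (fun n => ∑ j ∈ range n, ξ j) atTop atTop :=
    (not_summable_iff_tendsto_nat_atTop_of_nonneg hξ0).1 hξs
  obtain ⟨p, hp1, hp2⟩ : ∃ p : ℕ, η 0 < ∑ j ∈ range (p+1), ξ j ∧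
      ∑ j ∈ range J, η j ≤ ∑ j ∈ range (p+2), ξ j := by
    obtain ⟨M, hM⟩ := eventually_atTop.1
      (hSxT.eventually_ge_atTop (max (η 0 + 1) (∑ j ∈ range J, η j)))
    refine ⟨M, ?_, ?_⟩
    · have h1 := hM (M+1) (by omega)
      have h2 := le_max_left (η 0 + 1) (∑ j ∈ range J, η j)
      linarith
    · exact le_trans (le_max_right _ _) (hM (M+2) (by omega))
  set ε := δ₂ / (3 * ((p:ℝ) + 1)) with hεdef
  have hεpos : 0 < ε := by positivity
  obtain ⟨J₂, hJ₂⟩ : ∃ J₂, ∀ j, J₂ ≤ j → η j ≤ ε := by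
    obtain ⟨J₂, hJ'⟩ := eventually_atTop.1 (hηt.eventually_lt_const hεpos)
    exact ⟨J₂, fun j hj => (hJ' j hj).le⟩
  set K := max (max N (J₂ + p)) (p+2) with hKdef
  have hK : ∀ k, K ≤ k → 2*δ ≤ ∑ j ∈ range (k-p), η j - ∑ j ∈ range k, ξ j := by
    intro k hk
    have hkN : N ≤ k := le_trans (le_trans (le_max_left _ _) (le_max_left _ _)) hk
    have hkJp : J₂ + p ≤ k := le_trans (le_trans (le_max_right _ _) (le_max_left _ _)) hk
    have hkp2 : p + 2 ≤ k := le_trans (le_max_right _ _) hk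
    have hkJ : J₂ ≤ k - p := by omega
    have hpk : p ≤ k := by omega
    have h1 := hD k hkN
    have h2 : ∑ j ∈ range k, η j - ∑ j ∈ range (k-p), η j ≤ (p:ℝ) * η (k-p) := by
      rw [← Finset.sum_Ico_eq_sub _ (Nat.sub_le k p)]
      calc ∑ j ∈ Finset.Ico (k-p) k, η j ≤ ∑ _j ∈ Finset.Ico (k-p) k, η (k-p) :=
            Finset.sum_le_sum fun j hj => hηa (Finset.mem_Ico.1 hj).1
        _ = ((k - (k-p) : ℕ) : ℝ) * η (k-p) := by
            rw [Finset.sum_const, Nat.card_Ico, nsmul_eq_mul]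
        _ = (p:ℝ) * η (k-p) := by rw [Nat.sub_sub_self hpk]
    have h3 : η (k-p) ≤ ε := hJ₂ _ hkJ
    have h4 : (p:ℝ) * η (k-p) ≤ (p:ℝ) * ε :=
      mul_le_mul_of_nonneg_left h3 (by positivity)
    have h5 : (p:ℝ) * ε ≤ δ₂/3 := by
      rw [hεdef]
      rw [mul_div_assoc']
      rw [div_le_div_iff₀ (by positivity) (by norm_num)]
      nlinarith [hδ₂pos.le, Nat.cast_nonneg (α := ℝ) p]
    rw [hδdef]
    linarith
  have hexP : ∃ n, ∀ k, n ≤ k → 0 ≤ ∑ j ∈ range (k-p), η j - ∑ j ∈ range k, ξ j :=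
    ⟨K, fun k hk => by linarith [hK k hk]⟩
  have hn₁spec := Nat.find_spec hexP
  have hn₁min := fun m (hm : m < Nat.find hexP) => Nat.find_min hexP hm
  set n₁ := Nat.find hexP with hn₁def
  have hn₁ge : p + 2 ≤ n₁ := by
    by_contra hcon
    push_neg at hcon
    have h1 := hn₁spec (p+1) (by omega)
    have h2 : ∑ j ∈ range ((p+1)-p), η j = η 0 := by
      have he : (p+1)-p = 1 := by omega
      rw [he, Finset.sum_range_one]
    rw [h2] at h1
    linarith
  have hvlt : ∑ j ∈ range ((n₁-1)-p), η j - ∑ j ∈ range (n₁-1), ξ j < 0 := by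
    have hmin := hn₁min (n₁ - 1) (by omega)
    push_neg at hmin
    obtain ⟨k, hk1, hk2⟩ := hmin
    have hke : k = n₁ - 1 := by
      by_contra hne
      have hkn : n₁ ≤ k := by omega
      linarith [hn₁spec k hkn]
    rwa [hke] at hk2
  obtain ⟨k₁, hk₁ge, hk₁le⟩ : ∃ k₁, n₁ ≤ k₁ ∧
      ∑ j ∈ range (k₁-p), η j - ∑ j ∈ range k₁, ξ j ≤ δ := by
    by_contra hbad
    push_neg at hbad
    have hH1 : δ < ∑ j ∈ range (n₁-p), η j - ∑ j ∈ range n₁, ξ j := hbad n₁ le_rfl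
    have e2 : ∑ j ∈ range (n₁ - p), η j
        = ∑ j ∈ range ((n₁-1)-p), η j + η ((n₁-1)-p) := by
      have e1 : n₁ - p = ((n₁-1) - p) + 1 := by omega
      rw [e1, Finset.sum_range_succ]
    have e3 : ∑ j ∈ range n₁, ξ j = ∑ j ∈ range (n₁-1), ξ j + ξ (n₁-1) := by
      have e1 : n₁ = (n₁ - 1) + 1 := by omega
      conv_lhs => rw [e1]
      rw [Finset.sum_range_succ]
    have hηbig : δ < η ((n₁-1)-p) := by
      rw [e2, e3] at hH1
      have := hξ0 (n₁-1)
      linarith [hvlt]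
    have hJlt : (n₁-1)-p < J := by
      by_contra hge
      push_neg at hge
      linarith [hJ _ hge]
    have hle1 : n₁ - p ≤ J := by omega
    have hle2 : ∑ j ∈ range (n₁-p), η j ≤ ∑ j ∈ range J, η j := Symono hle1
    have hle3 : ∑ j ∈ range (p+2), ξ j ≤ ∑ j ∈ range n₁, ξ j := Sxmono hn₁ge
    linarith
  obtain ⟨n, hnmem, hnmin⟩ := Finset.exists_min_image (Finset.Icc k₁ (max K k₁))
      (fun k => ∑ j ∈ range (k-p), η j - ∑ j ∈ range k, ξ j)
      ⟨k₁, Finset.mem_Icc.2 ⟨le_rfl, le_max_right _ _⟩⟩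
  simp only [Finset.mem_Icc] at hnmem
  obtain ⟨hnk₁, hnK'⟩ := hnmem
  have hn_n₁ : n₁ ≤ n := le_trans hk₁ge hnk₁
  have hpn : p < n := by omega
  have hn0 : 0 ≤ ∑ j ∈ range (n-p), η j - ∑ j ∈ range n, ξ j := hn₁spec n hn_n₁
  have htail : ∀ k, n ≤ k →
      ∑ j ∈ range (n-p), η j - ∑ j ∈ range n, ξ j ≤
        ∑ j ∈ range (k-p), η j - ∑ j ∈ range k, ξ j := by
    intro k hk
    by_cases hkK : k ≤ max K k₁
    · have := hnmin k (Finset.mem_Icc.2 ⟨le_trans hnk₁ hk, hkK⟩)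
      simpa using this
    · push_neg at hkK
      have hKk : K ≤ k := le_trans (le_max_left K k₁) hkK.le
      have h1 := hK k hKk
      have h2 := hnmin k₁ (Finset.mem_Icc.2 ⟨le_rfl, le_max_right _ _⟩)
      linarith
  refine ⟨p, n, hpn, ?_, ?_⟩
  · intro k hk
    rcases le_or_gt k (n - p) with h1 | h1
    · rw [min_eq_left h1]; exact hmaj k
    · rw [min_eq_right h1.le]
      have h2 := Sxmono hk
      simp only at h2
      linarith
  · intro m
    rw [Finset.sum_Ico_eq_sub _ (Nat.le_add_right n m),
        Finset.sum_Ico_eq_sub _ (Nat.le_add_right (n-p) m)]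
    have h1 := htail (n+m) (Nat.le_add_right n m)
    have h2 : n + m - p = n - p + m := by omega
    rw [h2] at h1
    linarith


end
end

section
/- Let ξ, η ∈ c₀*. Then ξ ≺ η if and only if there exist an orthostochastic matrix Q and a sequence d : ℕ → ℝ with 0 ≤ d_i ≤ 1 for all i such that ξ_i = d_i · ∑_{j=1}^∞ Q_{ij} η_j for every i. -/
noncomputable section

open Filter Finset

namespace Stmt13X

attribute [local instance] Classical.propDecidable

theorem fin_rearrange (η : ℕ → ℝ) (hnn : ∀ j, 0 ≤ η j) (hmono : Antitone η)
    (n m : ℕ) (c : ℕ → ℝ) (hc0 : ∀ j, 0 ≤ c j) (hc1 : ∀ j, c j ≤ 1)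
    (hsum : ∑ j ∈ range m, c j ≤ n) :
    ∑ j ∈ range m, c j * η j ≤ ∑ j ∈ range n, η j := by
  rcases le_or_gt m n with h | h
  · calc ∑ j ∈ range m, c j * η j ≤ ∑ j ∈ range m, η j := by
          apply Finset.sum_le_sum
          intro j _
          nlinarith [hc0 j, hc1 j, hnn j]
        _ ≤ ∑ j ∈ range n, η j := by
          apply Finset.sum_le_sum_of_subset_of_nonneg (range_subset_range.2 h)
          intro j _ _; exact hnn j
  · have hsplit : range m = range n ∪ Ico n m := by
      rw [range_eq_Ico, range_eq_Ico, Finset.Ico_union_Ico_eq_Ico (Nat.zero_le n) h.le]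
    have hd : Disjoint (range n) (Ico n m) := by
      rw [range_eq_Ico]; exact Finset.Ico_disjoint_Ico_consecutive 0 n m
    have h1 : ∑ j ∈ range n, (c j * η j - η j) ≤ ∑ j ∈ range n, (c j - 1) * η n := by
      apply Finset.sum_le_sum
      intro j hj
      rw [Finset.mem_range] at hj
      have : η n ≤ η j := hmono hj.le
      nlinarith [hc1 j, hnn n]
    have h2 : ∑ j ∈ Ico n m, c j * η j ≤ ∑ j ∈ Ico n m, c j * η n := by
      apply Finset.sum_le_sum
      intro j hj
      rw [Finset.mem_Ico] at hj
      have : η j ≤ η n := hmono hj.1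
      nlinarith [hc0 j]
    have e0 : ∑ j ∈ range m, c j * η j
        = ∑ j ∈ range n, c j * η j + ∑ j ∈ Ico n m, c j * η j := by
      rw [hsplit, Finset.sum_union hd]
    have e0' : ∑ j ∈ range m, c j = ∑ j ∈ range n, c j + ∑ j ∈ Ico n m, c j := by
      rw [hsplit, Finset.sum_union hd]
    have e1 : ∑ j ∈ range n, (c j - 1) * η n
        = (∑ j ∈ range n, c j - n) * η n := by
      rw [← Finset.sum_mul, Finset.sum_sub_distrib]
      simp
    have e2 : ∑ j ∈ Ico n m, c j * η n = (∑ j ∈ Ico n m, c j) * η n := by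
      rw [← Finset.sum_mul]
    have e3 : ∑ j ∈ range n, (c j * η j - η j)
        = ∑ j ∈ range n, c j * η j - ∑ j ∈ range n, η j := Finset.sum_sub_distrib _ _
    have hprod : (∑ j ∈ range n, c j - n + ∑ j ∈ Ico n m, c j) * η n ≤ 0 := by
      apply mul_nonpos_of_nonpos_of_nonneg _ (hnn n)
      linarith [e0' ▸ hsum]
    nlinarith [h1, h2, e0, e1, e2, e3, hprod]


theorem rev_dir (ξ η : ℕ → ℝ) (hη : IsCoStar η)
    (U : ℕ → ℕ → ℝ) (hU : OrthogonalMatrix U) (Q : ℕ → ℕ → ℝ)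
    (hQ : ∀ i j, Q i j = (U i j) ^ 2)
    (d : ℕ → ℝ) (hd : ∀ i, 0 ≤ d i ∧ d i ≤ 1)
    (hs : ∀ i, ∃ s : ℝ, HasSum (fun j => Q i j * η j) s ∧ ξ i = d i * s) :
    Maj ξ η := by
  obtain ⟨hηnn, hηmono, -⟩ := hη
  choose s hsS hsEq using hs
  have hQnn : ∀ i j, 0 ≤ Q i j := fun i j => (hQ i j) ▸ sq_nonneg _
  have hsnn : ∀ i, 0 ≤ s i := fun i =>
    hasSum_le (fun j => mul_nonneg (hQnn i j) (hηnn j)) hasSum_zero (hsS i)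
  intro n
  have h1 : ∑ i ∈ range n, ξ i ≤ ∑ i ∈ range n, s i := by
    apply Finset.sum_le_sum
    intro i _
    rw [hsEq i]
    nlinarith [(hd i).1, (hd i).2, hsnn i]
  refine h1.trans ?_
  have Hsum : HasSum (fun j => ∑ i ∈ range n, Q i j * η j) (∑ i ∈ range n, s i) :=
    hasSum_sum fun i _ => hsS i
  have Hsum' : HasSum (fun j => (∑ i ∈ range n, Q i j) * η j) (∑ i ∈ range n, s i) := by
    convert Hsum using 2 with j
    rw [Finset.sum_mul]
  set c : ℕ → ℝ := fun j => ∑ i ∈ range n, Q i j with hc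
  have hc0 : ∀ j, 0 ≤ c j := fun j => Finset.sum_nonneg fun i _ => hQnn i j
  have hc1 : ∀ j, c j ≤ 1 := by
    intro j
    have hcol : HasSum (fun i => U i j * U i j) 1 := by
      have := hU.2 j j; simpa using this
    have : ∑ i ∈ range n, U i j * U i j ≤ 1 :=
      sum_le_hasSum (range n) (fun i _ => mul_self_nonneg _) hcol
    calc c j = ∑ i ∈ range n, U i j * U i j := by
          apply Finset.sum_congr rfl; intro i _; rw [hQ]; ring
      _ ≤ 1 := this
  apply hasSum_le_of_sum_le Hsum'
  intro F
  obtain ⟨M, hM⟩ := F.exists_nat_subset_range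
  have hFM : ∑ j ∈ F, c j * η j ≤ ∑ j ∈ range M, c j * η j := by
    apply Finset.sum_le_sum_of_subset_of_nonneg hM
    intro j _ _; exact mul_nonneg (hc0 j) (hηnn j)
  refine hFM.trans ?_
  apply fin_rearrange η hηnn hηmono n M c hc0 hc1
  have hswap : ∑ j ∈ range M, c j = ∑ i ∈ range n, ∑ j ∈ range M, Q i j :=
    Finset.sum_comm
  rw [hswap]
  calc ∑ i ∈ range n, ∑ j ∈ range M, Q i j ≤ ∑ i ∈ range n, (1:ℝ) := by
        apply Finset.sum_le_sum
        intro i _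
        have hrow : HasSum (fun j => U i j * U i j) 1 := by
          have := hU.1 i i; simpa using this
        have : ∑ j ∈ range M, U i j * U i j ≤ 1 :=
          sum_le_hasSum (range M) (fun j _ => mul_self_nonneg _) hrow
        calc ∑ j ∈ range M, Q i j = ∑ j ∈ range M, U i j * U i j := by
              apply Finset.sum_congr rfl; intro j _; rw [hQ]; ring
          _ ≤ 1 := this
    _ = n := by simp

attribute [local instance] Classical.propDecidable

namespace Stmt13

lemma exists_not_mem_ge (s : Finset ℕ) (N : ℕ) : ∃ j, N ≤ j ∧ j ∉ s := by
  obtain ⟨M, hM⟩ := s.exists_nat_subset_range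
  refine ⟨max N M, le_max_left _ _, fun h => ?_⟩
  have := hM h
  rw [Finset.mem_range] at this
  omega

lemma exists_not_mem (s : Finset ℕ) : ∃ j, j ∉ s := by
  obtain ⟨j, _, hj⟩ := exists_not_mem_ge s 0; exact ⟨j, hj⟩

structure St where
  fed : Finset ℕ
  g : ℕ → ℝ

variable (ξ η : ℕ → ℝ)

/-- carry mass -/
def carry (S : St) : ℝ := ∑ j ∈ S.fed, (S.g j)^2 * η j

/-- least unfed index -/
def jst (S : St) : ℕ := Nat.find (exists_not_mem S.fed)

lemma jst_not_mem (S : St) : jst S ∉ S.fed := Nat.find_spec (exists_not_mem S.fed)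

lemma jst_min (S : St) {j : ℕ} (h : j ∉ S.fed) : jst S ≤ j := Nat.find_min' _ h

def fodder (i : ℕ) (S : St) : ℕ :=
  if h : ∃ j, j ∉ S.fed ∧ η j < ξ i then Nat.find h else jst S

def isDump (i : ℕ) (S : St) : Prop := ξ i = 0 ∨ carry η S = ξ i
def isFodder (i : ℕ) (S : St) : Prop := 0 < ξ i ∧ ξ i < carry η S

def feedIdx (i : ℕ) (S : St) : ℕ := if isFodder ξ η i S then fodder ξ η i S else jst S

def cC (i : ℕ) (S : St) : ℝ :=
  if isDump ξ η i S then 1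
  else Real.sqrt ((ξ i - η (feedIdx ξ η i S)) / (carry η S - η (feedIdx ξ η i S)))

def sC (i : ℕ) (S : St) : ℝ :=
  if isDump ξ η i S then 0
  else Real.sqrt ((carry η S - ξ i) / (carry η S - η (feedIdx ξ η i S)))

def rowOf (i : ℕ) (S : St) : ℕ → ℝ := fun j =>
  cC ξ η i S * S.g j + sC ξ η i S * (if j = feedIdx ξ η i S then 1 else 0)

def nextG (i : ℕ) (S : St) : ℕ → ℝ := fun j =>
  sC ξ η i S * S.g j - cC ξ η i S * (if j = feedIdx ξ η i S then 1 else 0)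

def stepSt (i : ℕ) (S : St) : St := ⟨insert (feedIdx ξ η i S) S.fed, nextG ξ η i S⟩

def proc : ℕ → St
  | 0 => ⟨{0}, fun j => if j = 0 then 1 else 0⟩
  | i+1 => stepSt ξ η i (proc i)

def fedN (i : ℕ) : Finset ℕ := (proc ξ η i).fed
def gN (i : ℕ) : ℕ → ℝ := (proc ξ η i).g
def mN (i : ℕ) : ℝ := carry η (proc ξ η i)
def fN (i : ℕ) : ℕ := feedIdx ξ η i (proc ξ η i)
def rowN (i : ℕ) : ℕ → ℝ := rowOf ξ η i (proc ξ η i)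
def cN (i : ℕ) : ℝ := cC ξ η i (proc ξ η i)
def sN (i : ℕ) : ℝ := sC ξ η i (proc ξ η i)
def outN (i : ℕ) : ℝ := if isDump ξ η i (proc ξ η i) then mN ξ η i else ξ i

variable {ξ η}

lemma fed_succ (i : ℕ) : fedN ξ η (i+1) = insert (fN ξ η i) (fedN ξ η i) := rfl

lemma fN_not_mem (i : ℕ) : fN ξ η i ∉ fedN ξ η i := by
  unfold fN feedIdx
  split
  · unfold fodder
    split
    · next h => exact (Nat.find_spec h).1
    · exact jst_not_mem _
  · exact jst_not_mem _

lemma fed_zero : fedN ξ η 0 = {0} := rfl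

lemma card_fedN (i : ℕ) : (fedN ξ η i).card = i + 1 := by
  induction i with
  | zero => rfl
  | succ i ih =>
      rw [fed_succ, Finset.card_insert_of_notMem (fN_not_mem i), ih]

lemma fed_mono : ∀ {i i' : ℕ}, i ≤ i' → fedN ξ η i ⊆ fedN ξ η i' := by
  intro i i' h
  induction i' with
  | zero => cases Nat.le_zero.mp h; exact Finset.Subset.refl _
  | succ n ih =>
      rcases Nat.lt_or_ge i (n+1) with h' | h'
      · have := ih (Nat.lt_succ_iff.mp h')
        exact this.trans (by rw [fed_succ]; exact Finset.subset_insert _ _)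
      · cases le_antisymm h h'
        exact Finset.Subset.refl _

lemma zero_mem_fed (i : ℕ) : 0 ∈ fedN ξ η i :=
  fed_mono (Nat.zero_le i) (by rw [fed_zero]; exact Finset.mem_singleton_self 0)

lemma fed_mem_iff {i : ℕ} {e : ℕ} :
    e ∈ fedN ξ η i ↔ e = 0 ∨ ∃ k < i, fN ξ η k = e := by
  induction i with
  | zero =>
      rw [fed_zero]
      simp
  | succ n ih =>
      rw [fed_succ, Finset.mem_insert, ih]
      constructor
      · rintro (h | h | ⟨k, hk, hke⟩)
        · exact Or.inr ⟨n, Nat.lt_succ_self n, h.symm⟩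
        · exact Or.inl h
        · exact Or.inr ⟨k, hk.trans (Nat.lt_succ_self n), hke⟩
      · rintro (h | ⟨k, hk, hke⟩)
        · exact Or.inr (Or.inl h)
        · rcases Nat.lt_succ_iff_lt_or_eq.mp hk with h' | h'
          · exact Or.inr (Or.inr ⟨k, h', hke⟩)
          · subst h'; exact Or.inl hke.symm

lemma g_supp : ∀ (i : ℕ) {j : ℕ}, j ∉ fedN ξ η i → gN ξ η i j = 0 := by
  intro i
  induction i with
  | zero =>
      intro j hj
      rw [fed_zero] at hj
      simp only [Finset.mem_singleton] at hj
      show (if j = 0 then (1:ℝ) else 0) = 0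
      simp [hj]
  | succ n ih =>
      intro j hj
      rw [fed_succ, Finset.mem_insert] at hj
      push_neg at hj
      have h1 : j ≠ feedIdx ξ η n (proc ξ η n) := hj.1
      have h2 : (proc ξ η n).g j = 0 := ih hj.2
      show nextG ξ η n (proc ξ η n) j = 0
      unfold nextG
      rw [h2]
      simp [h1]

lemma row_supp (i : ℕ) {j : ℕ} (hj : j ∉ fedN ξ η (i+1)) : rowN ξ η i j = 0 := by
  rw [fed_succ, Finset.mem_insert] at hj
  push_neg at hj
  show rowOf ξ η i (proc ξ η i) j = 0
  have h1 : j ≠ feedIdx ξ η i (proc ξ η i) := hj.1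
  have h2 : (proc ξ η i).g j = 0 := g_supp i hj.2
  unfold rowOf
  rw [h2]
  simp [h1]

lemma gN_step (i : ℕ) (j : ℕ) :
    gN ξ η (i+1) j = sN ξ η i * gN ξ η i j - cN ξ η i * (if j = fN ξ η i then 1 else 0) := rfl

lemma rowN_eq (i : ℕ) (j : ℕ) :
    rowN ξ η i j = cN ξ η i * gN ξ η i j + sN ξ η i * (if j = fN ξ η i then 1 else 0) := rfl

lemma gN_f (i : ℕ) : gN ξ η i (fN ξ η i) = 0 := g_supp i (fN_not_mem i)

lemma gN_step_mem (i : ℕ) {j : ℕ} (hj : j ∈ fedN ξ η i) :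
    gN ξ η (i+1) j = sN ξ η i * gN ξ η i j := by
  have : j ≠ fN ξ η i := fun h => fN_not_mem i (h ▸ hj)
  rw [gN_step]; simp [this]

lemma rowN_mem (i : ℕ) {j : ℕ} (hj : j ∈ fedN ξ η i) :
    rowN ξ η i j = cN ξ η i * gN ξ η i j := by
  have : j ≠ fN ξ η i := fun h => fN_not_mem i (h ▸ hj)
  rw [rowN_eq]; simp [this]

lemma gN_step_f (i : ℕ) : gN ξ η (i+1) (fN ξ η i) = - cN ξ η i := by
  rw [gN_step, gN_f]; simp

lemma rowN_f (i : ℕ) : rowN ξ η i (fN ξ η i) = sN ξ η i := by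
  rw [rowN_eq, gN_f]; simp


section Analytic

lemma out_eq {i : ℕ} (hk : 0 < ξ i) : outN ξ η i = ξ i := by
  unfold outN
  split
  · next h =>
      rcases h with h | h
      · exact absurd h (ne_of_gt hk)
      · exact h
  · rfl

/-- If the carry is below the obligation, the least-unfed coin is large. -/
lemma crisis_bound (hξa : Antitone ξ) (hmaj : Maj ξ η) (i : ℕ)
    (htel : mN ξ η i = (∑ j ∈ fedN ξ η i, η j) - ∑ k ∈ range i, outN ξ η k)
    (hpos : 0 < ξ i) (hlt : mN ξ η i < ξ i) :
    ξ i ≤ η (jst (proc ξ η i)) := by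
  by_contra hcon
  push_neg at hcon
  set J := jst (proc ξ η i) with hJ
  have hJmem : J ∉ fedN ξ η i := jst_not_mem _
  -- every fed coin is < J
  have hsub : fedN ξ η i ⊆ range J := by
    intro e he
    rw [Finset.mem_range]
    rcases fed_mem_iff.mp he with rfl | ⟨k, hk, hke⟩
    · have h0' : J ≠ 0 := fun h0 => hJmem (by rw [h0]; exact zero_mem_fed i)
      exact Nat.pos_of_ne_zero h0'
    · have hJk : J ∉ fedN ξ η k := fun h => hJmem (fed_mono hk.le h)
      have hne : fN ξ η k ≠ J := by
        intro h
        exact hJmem (h ▸ fed_mono hk (by rw [fed_succ]; exact Finset.mem_insert_self _ _))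
      have hle : fN ξ η k ≤ J := by
        unfold fN feedIdx
        split
        · unfold fodder
          have hex : ∃ j, j ∉ (proc ξ η k).fed ∧ η j < ξ k :=
            ⟨J, hJk, lt_of_lt_of_le hcon (hξa hk.le)⟩
          rw [dif_pos hex]
          exact Nat.find_min' hex ⟨hJk, lt_of_lt_of_le hcon (hξa hk.le)⟩
        · exact jst_min _ hJk
      rw [← hke]
      omega
  have hcard : i + 1 ≤ J := by
    have := Finset.card_le_card hsub
    rw [card_fedN, Finset.card_range] at this
    exact this
  have hge : J ≤ i + 1 := by
    have hnot : ¬ (range (i+2) ⊆ fedN ξ η i) := by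
      intro h
      have := Finset.card_le_card h
      rw [card_fedN] at this
      simp at this
    obtain ⟨x, hx1, hx2⟩ := Finset.not_subset.mp hnot
    rw [Finset.mem_range] at hx1
    have := jst_min (proc ξ η i) hx2
    omega
  have hJeq : J = i + 1 := le_antisymm hge hcard
  have hfed : fedN ξ η i = range (i+1) := by
    apply Finset.eq_of_subset_of_card_le
    · rw [← hJeq]; exact hsub
    · rw [card_fedN, Finset.card_range]
  have houts : ∑ k ∈ range i, outN ξ η k = ∑ k ∈ range i, ξ k := by
    apply Finset.sum_congr rfl
    intro k hk
    rw [Finset.mem_range] at hk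
    exact out_eq (lt_of_lt_of_le hpos (hξa hk.le))
  have hM := hmaj (i+1)
  rw [Finset.sum_range_succ] at hM
  rw [hfed, houts] at htel
  linarith


lemma sum_insert_f (i : ℕ) (F : ℕ → ℝ) :
    ∑ j ∈ fedN ξ η (i+1), F j = F (fN ξ η i) + ∑ j ∈ fedN ξ η i, F j := by
  rw [fed_succ, Finset.sum_insert (fN_not_mem i)]

lemma norm_step (i : ℕ) :
    ∑ j ∈ fedN ξ η (i+1), (gN ξ η (i+1) j)^2
      = cN ξ η i ^2 + sN ξ η i ^2 * ∑ j ∈ fedN ξ η i, (gN ξ η i j)^2 := by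
  rw [sum_insert_f, gN_step_f]
  congr 1
  · ring
  · rw [Finset.mul_sum]
    apply Finset.sum_congr rfl
    intro j hj
    rw [gN_step_mem i hj]
    ring

lemma m_step (i : ℕ) :
    mN ξ η (i+1) = cN ξ η i ^2 * η (fN ξ η i) + sN ξ η i ^2 * mN ξ η i := by
  show ∑ j ∈ fedN ξ η (i+1), (gN ξ η (i+1) j)^2 * η j = _
  rw [sum_insert_f, gN_step_f]
  congr 1
  · ring
  · show _ = sN ξ η i ^2 * ∑ j ∈ (proc ξ η i).fed, ((proc ξ η i).g j)^2 * η j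
    rw [Finset.mul_sum]
    apply Finset.sum_congr rfl
    intro j hj
    rw [gN_step_mem i hj]
    show (sN ξ η i * gN ξ η i j)^2 * η j = _
    simp only [gN]
    ring

lemma rownorm_step (i : ℕ) :
    ∑ j ∈ fedN ξ η (i+1), (rowN ξ η i j)^2
      = sN ξ η i ^2 + cN ξ η i ^2 * ∑ j ∈ fedN ξ η i, (gN ξ η i j)^2 := by
  rw [sum_insert_f, rowN_f]
  congr 1
  rw [Finset.mul_sum]
  apply Finset.sum_congr rfl
  intro j hj
  rw [rowN_mem i hj]
  ring

lemma rowsum_step (i : ℕ) :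
    ∑ j ∈ fedN ξ η (i+1), (rowN ξ η i j)^2 * η j
      = sN ξ η i ^2 * η (fN ξ η i) + cN ξ η i ^2 * mN ξ η i := by
  rw [sum_insert_f, rowN_f]
  congr 1
  · show _ = cN ξ η i ^2 * ∑ j ∈ (proc ξ η i).fed, ((proc ξ η i).g j)^2 * η j
    rw [Finset.mul_sum]
    apply Finset.sum_congr rfl
    intro j hj
    rw [rowN_mem i hj]
    show (cN ξ η i * gN ξ η i j)^2 * η j = _
    simp only [gN]
    ring

def StateInv (ξ η : ℕ → ℝ) (i : ℕ) : Prop :=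
  (∑ j ∈ fedN ξ η i, (gN ξ η i j)^2 = 1) ∧
  (mN ξ η i = (∑ j ∈ fedN ξ η i, η j) - ∑ k ∈ range i, outN ξ η k) ∧
  0 ≤ mN ξ η i ∧ (0 < ξ i → 0 < mN ξ η i)


lemma dump_c {i : ℕ} (hd : isDump ξ η i (proc ξ η i)) : cN ξ η i = 1 := by
  unfold cN cC; rw [if_pos hd]

lemma dump_s {i : ℕ} (hd : isDump ξ η i (proc ξ η i)) : sN ξ η i = 0 := by
  unfold sN sC; rw [if_pos hd]

lemma dump_out {i : ℕ} (hd : isDump ξ η i (proc ξ η i)) : outN ξ η i = mN ξ η i := by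
  unfold outN; rw [if_pos hd]

lemma nondump_out {i : ℕ} (hd : ¬ isDump ξ η i (proc ξ η i)) : outN ξ η i = ξ i := by
  unfold outN; rw [if_neg hd]

lemma not_fodder_of_dump {i : ℕ} (hd : isDump ξ η i (proc ξ η i)) :
    ¬ isFodder ξ η i (proc ξ η i) := by
  rcases hd with h | h <;> rintro ⟨h1, h2⟩ <;> unfold carry at * <;> linarith

lemma fodder_spec (hηt : Tendsto η atTop (nhds 0)) {i : ℕ}
    (hf : isFodder ξ η i (proc ξ η i)) :
    fN ξ η i ∉ fedN ξ η i ∧ η (fN ξ η i) < ξ i := by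
  have hex : ∃ j, j ∉ (proc ξ η i).fed ∧ η j < ξ i := by
    have hev : ∀ᶠ n in atTop, η n < ξ i := by
      have := hηt.eventually (eventually_lt_nhds hf.1)
      exact this
    obtain ⟨N, hN⟩ := eventually_atTop.mp hev
    obtain ⟨j, hjN, hj⟩ := exists_not_mem_ge (fedN ξ η i) N
    exact ⟨j, hj, hN j hjN⟩
  have heq : fN ξ η i = Nat.find hex := by
    unfold fN feedIdx
    rw [if_pos hf]
    unfold fodder
    rw [dif_pos hex]
  rw [heq]
  exact (Nat.find_spec hex)

lemma crisis_f {i : ℕ} (hf : ¬ isFodder ξ η i (proc ξ η i)) :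
    fN ξ η i = jst (proc ξ η i) := by
  unfold fN feedIdx; rw [if_neg hf]

lemma trans_facts (hξ : IsCoStar ξ) (hη : IsCoStar η) (hmaj : Maj ξ η) (i : ℕ)
    (h : StateInv ξ η i) :
    StateInv ξ η (i+1) ∧
    cN ξ η i ^2 + sN ξ η i ^2 = 1 ∧
    0 ≤ cN ξ η i ∧ 0 ≤ sN ξ η i ∧ sN ξ η i ≤ 1 ∧
    ξ i ≤ outN ξ η i ∧ 0 ≤ outN ξ η i ∧
    mN ξ η (i+1) = mN ξ η i + η (fN ξ η i) - outN ξ η i ∧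
    sN ξ η i ^2 * mN ξ η i ≤ mN ξ η (i+1) ∧
    (∑ j ∈ fedN ξ η (i+1), (rowN ξ η i j)^2 * η j = outN ξ η i) ∧
    (∑ j ∈ fedN ξ η (i+1), (rowN ξ η i j)^2 = 1) := by
  obtain ⟨hnorm, htel, hm0, hmpos⟩ := h
  have hms := m_step (ξ := ξ) (η := η) i
  have hns := norm_step (ξ := ξ) (η := η) i
  have hrs := rowsum_step (ξ := ξ) (η := η) i
  have hrn := rownorm_step (ξ := ξ) (η := η) i
  rw [hnorm] at hns hrn
  have htel' : mN ξ η (i+1) = mN ξ η i + η (fN ξ η i) - outN ξ η i →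
      mN ξ η (i+1) = (∑ j ∈ fedN ξ η (i+1), η j) - ∑ k ∈ range (i+1), outN ξ η k := by
    intro hm'
    rw [sum_insert_f, Finset.sum_range_succ]
    linarith
  by_cases hd : isDump ξ η i (proc ξ η i)
  · have hc := dump_c (ξ := ξ) (η := η) hd
    have hs := dump_s (ξ := ξ) (η := η) hd
    have hout := dump_out (ξ := ξ) (η := η) hd
    rw [hc, hs] at hms hns hrs hrn
    have hm' : mN ξ η (i+1) = η (fN ξ η i) := by rw [hms]; ring
    have hxo : ξ i ≤ outN ξ η i := by
      rcases hd with h0 | h0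
      · rw [hout, h0]; exact hm0
      · rw [hout]
        show ξ i ≤ carry η (proc ξ η i)
        exact h0.ge
    have hmm' : mN ξ η (i+1) = mN ξ η i + η (fN ξ η i) - outN ξ η i := by
      rw [hout, hm']; ring
    refine ⟨⟨?_, htel' hmm', ?_, ?_⟩, ?_, ?_, ?_, ?_, hxo, ?_, hmm', ?_, ?_, ?_⟩
    · rw [hns]; ring
    · rw [hm']; exact hη.1 _
    · -- positivity of next carry in dump case
      intro hp1
      have hd' := hd
      rcases hd with h0 | hme
      · exfalso
        have := hξ.2.1 (Nat.le_succ i)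
        rw [h0] at this
        linarith
      · have hξi : 0 < ξ i := lt_of_lt_of_le hp1 (hξ.2.1 (Nat.le_succ i))
        rw [hm']
        rcases lt_or_ge 0 (η (fN ξ η i)) with hgt | hle
        · exact hgt
        · exfalso
          have ha0 : η (fN ξ η i) = 0 := le_antisymm hle (hη.1 _)
          have hfj : fN ξ η i = jst (proc ξ η i) := crisis_f (not_fodder_of_dump hd')
          rw [hfj] at ha0
          obtain ⟨M, hM⟩ := (fedN ξ η i).exists_nat_subset_range
          set N := max M (i+2) with hN
          have hMN : M ≤ N := le_max_left _ _
          have hiN : i + 2 ≤ N := le_max_right _ _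
          have hsub : fedN ξ η i ⊆ range N :=
            hM.trans (Finset.range_subset_range.2 hMN)
          have hsum : ∑ j ∈ fedN ξ η i, η j = ∑ j ∈ range N, η j := by
            apply Finset.sum_subset hsub
            intro x _ hnx
            have h1 : η x ≤ η (jst (proc ξ η i)) := hη.2.1 (jst_min _ hnx)
            rw [ha0] at h1
            exact le_antisymm h1 (hη.1 x)
          have houts : ∑ k ∈ range i, outN ξ η k = ∑ k ∈ range i, ξ k := by
            apply Finset.sum_congr rfl
            intro k hk
            rw [Finset.mem_range] at hk
            exact out_eq (lt_of_lt_of_le hξi (hξ.2.1 hk.le))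
          have hMj := hmaj N
          have hico : ∑ k ∈ range N, ξ k - ∑ k ∈ range i, ξ k = ∑ k ∈ Ico i N, ξ k := by
            rw [Finset.sum_Ico_eq_sub _ (by omega : i ≤ N)]
          have h1 : ∑ k ∈ Ico i N, ξ k = ξ i + ∑ k ∈ Ico (i+1) N, ξ k :=
            Finset.sum_eq_sum_Ico_succ_bot (by omega) _
          have h2 : ∑ k ∈ Ico (i+1) N, ξ k = ξ (i+1) + ∑ k ∈ Ico (i+2) N, ξ k :=
            Finset.sum_eq_sum_Ico_succ_bot (by omega) _
          have h3 : 0 ≤ ∑ k ∈ Ico (i+2) N, ξ k :=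
            Finset.sum_nonneg fun k _ => hξ.1 k
          have hme' : mN ξ η i = ξ i := hme
          rw [htel, hsum, houts] at hme'
          linarith
    · rw [hc, hs]; ring
    · rw [hc]; norm_num
    · rw [hs]
    · rw [hs]; norm_num
    · rw [hout]; exact hm0
    · rw [hs, hmm', hout]
      have := hη.1 (fN ξ η i)
      nlinarith
    · rw [hrs, hout]; ring
    · rw [hrn]; ring
  · -- non-dump case
    have hne : ¬ (ξ i = 0 ∨ carry η (proc ξ η i) = ξ i) := hd
    push_neg at hne
    have hξpos : 0 < ξ i := lt_of_le_of_ne (hξ.1 i) (Ne.symm hne.1)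
    have hnem : mN ξ η i ≠ ξ i := hne.2
    set a := η (fN ξ η i) with ha
    have key : (a < ξ i ∧ ξ i < mN ξ η i) ∨ (mN ξ η i < ξ i ∧ ξ i ≤ a) := by
      by_cases hf : isFodder ξ η i (proc ξ η i)
      · exact Or.inl ⟨(fodder_spec hη.2.2 hf).2, hf.2⟩
      · have hmlt : mN ξ η i < ξ i := by
          have : ¬ (ξ i < mN ξ η i) := fun hlt => hf ⟨hξpos, hlt⟩
          push_neg at this
          exact lt_of_le_of_ne this hnem
        have hfj : fN ξ η i = jst (proc ξ η i) := crisis_f hf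
        refine Or.inr ⟨hmlt, ?_⟩
        rw [ha, hfj]
        exact crisis_bound hξ.2.1 hmaj i htel hξpos hmlt
    have hden : mN ξ η i - a ≠ 0 := by rcases key with ⟨h1, h2⟩ | ⟨h1, h2⟩ <;> intro hc <;> linarith
    have hr1 : 0 ≤ (ξ i - a) / (mN ξ η i - a) := by
      rcases key with ⟨h1, h2⟩ | ⟨h1, h2⟩
      · exact div_nonneg (by linarith) (by linarith)
      · exact div_nonneg_iff.mpr (Or.inr ⟨by linarith, by linarith⟩)
    have hr2 : 0 ≤ (mN ξ η i - ξ i) / (mN ξ η i - a) := by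
      rcases key with ⟨h1, h2⟩ | ⟨h1, h2⟩
      · exact div_nonneg (by linarith) (by linarith)
      · exact div_nonneg_iff.mpr (Or.inr ⟨by linarith, by linarith⟩)
    have hcv : cN ξ η i = Real.sqrt ((ξ i - a) / (mN ξ η i - a)) := by
      unfold cN cC; rw [if_neg hd]; rfl
    have hsv : sN ξ η i = Real.sqrt ((mN ξ η i - ξ i) / (mN ξ η i - a)) := by
      unfold sN sC; rw [if_neg hd]; rfl
    have hc2 : cN ξ η i ^2 = (ξ i - a) / (mN ξ η i - a) := by
      rw [hcv, Real.sq_sqrt hr1]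
    have hs2 : sN ξ η i ^2 = (mN ξ η i - ξ i) / (mN ξ η i - a) := by
      rw [hsv, Real.sq_sqrt hr2]
    have hcs1 : cN ξ η i ^2 + sN ξ η i ^2 = 1 := by
      rw [hc2, hs2, ← add_div,
        show ξ i - a + (mN ξ η i - ξ i) = mN ξ η i - a by ring]
      exact div_self hden
    have hout : outN ξ η i = ξ i := nondump_out hd
    have hm' : mN ξ η (i+1) = mN ξ η i + a - ξ i := by
      rw [hms, hc2, hs2]
      field_simp
      try ring
    have hmm' : mN ξ η (i+1) = mN ξ η i + η (fN ξ η i) - outN ξ η i := by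
      rw [hout, ← ha, hm']
    have hm'pos : 0 < mN ξ η (i+1) := by
      rcases key with ⟨h1, h2⟩ | ⟨h1, h2⟩
      · rw [hm']; have := hη.1 (fN ξ η i); rw [← ha] at this; linarith
      · have hmp := hmpos hξpos
        rw [hm']; linarith
    refine ⟨⟨?_, htel' hmm', le_of_lt hm'pos, fun _ => hm'pos⟩, hcs1, ?_, ?_, ?_, ?_, ?_, hmm', ?_, ?_, ?_⟩
    · rw [hns]; linarith [hcs1]
    · rw [hcv]; exact Real.sqrt_nonneg _
    · rw [hsv]; exact Real.sqrt_nonneg _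
    · have hsnn : 0 ≤ sN ξ η i := by rw [hsv]; exact Real.sqrt_nonneg _
      have hcnn : 0 ≤ cN ξ η i ^2 := sq_nonneg _
      nlinarith
    · rw [hout]
    · rw [hout]; exact le_of_lt hξpos
    · rw [hmm', hout]
      have hca : 0 ≤ cN ξ η i ^2 * a := mul_nonneg (sq_nonneg _) (by rw [ha]; exact hη.1 _)
      rw [hms] at *
      nlinarith [hcs1]
    · rw [hrs, hout, hc2, hs2]
      field_simp
      try ring
    · rw [hrn]; linarith [hcs1]

lemma inv_all (hξ : IsCoStar ξ) (hη : IsCoStar η) (hmaj : Maj ξ η) :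
    ∀ i, StateInv ξ η i := by
  intro i
  induction i with
  | zero =>
      refine ⟨?_, ?_, ?_, ?_⟩
      · show ∑ j ∈ ({0} : Finset ℕ), (gN ξ η 0 j)^2 = 1
        show ∑ j ∈ ({0} : Finset ℕ), ((if j = 0 then (1:ℝ) else 0))^2 = 1
        simp
      · show mN ξ η 0 = (∑ j ∈ fedN ξ η 0, η j) - ∑ k ∈ range 0, outN ξ η k
        simp only [Finset.range_zero, Finset.sum_empty, sub_zero]
        show ∑ j ∈ ({0} : Finset ℕ), ((if j = 0 then (1:ℝ) else 0))^2 * η j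
            = ∑ j ∈ ({0} : Finset ℕ), η j
        simp
      · show (0:ℝ) ≤ mN ξ η 0
        have : mN ξ η 0 = η 0 := by
          show ∑ j ∈ ({0} : Finset ℕ), ((if j = 0 then (1:ℝ) else 0))^2 * η j = η 0
          simp
        rw [this]; exact hη.1 0
      · intro h0
        have hm : mN ξ η 0 = η 0 := by
          show ∑ j ∈ ({0} : Finset ℕ), ((if j = 0 then (1:ℝ) else 0))^2 * η j = η 0
          simp
        have := hmaj 1
        simp [Finset.sum_range_one] at this
        rw [hm]
        linarith
  | succ n ih => exact (trans_facts hξ hη hmaj n ih).1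


section WithHyp

lemma row_supp' {k i : ℕ} (h : k < i) {j : ℕ} (hj : j ∉ fedN ξ η i) :
    rowN ξ η k j = 0 :=
  row_supp k (fun hm => hj (fed_mono h hm))

variable (hξ : IsCoStar ξ) (hη : IsCoStar η) (hmaj : Maj ξ η)
include hξ hη hmaj

lemma norm_one (i : ℕ) : ∑ j ∈ fedN ξ η i, (gN ξ η i j)^2 = 1 :=
  (inv_all hξ hη hmaj i).1

lemma tel_eq (i : ℕ) :
    mN ξ η i = (∑ j ∈ fedN ξ η i, η j) - ∑ k ∈ range i, outN ξ η k :=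
  (inv_all hξ hη hmaj i).2.1

lemma m_nonneg (i : ℕ) : 0 ≤ mN ξ η i := (inv_all hξ hη hmaj i).2.2.1

lemma m_pos {i : ℕ} (h : 0 < ξ i) : 0 < mN ξ η i := (inv_all hξ hη hmaj i).2.2.2 h

lemma cs_sq (i : ℕ) : cN ξ η i ^2 + sN ξ η i ^2 = 1 :=
  (trans_facts hξ hη hmaj i (inv_all hξ hη hmaj i)).2.1

lemma c_nonneg (i : ℕ) : 0 ≤ cN ξ η i :=
  (trans_facts hξ hη hmaj i (inv_all hξ hη hmaj i)).2.2.1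

lemma s_nonneg (i : ℕ) : 0 ≤ sN ξ η i :=
  (trans_facts hξ hη hmaj i (inv_all hξ hη hmaj i)).2.2.2.1

lemma s_le_one (i : ℕ) : sN ξ η i ≤ 1 :=
  (trans_facts hξ hη hmaj i (inv_all hξ hη hmaj i)).2.2.2.2.1

lemma out_ge (i : ℕ) : ξ i ≤ outN ξ η i :=
  (trans_facts hξ hη hmaj i (inv_all hξ hη hmaj i)).2.2.2.2.2.1

lemma out_nonneg (i : ℕ) : 0 ≤ outN ξ η i :=
  (trans_facts hξ hη hmaj i (inv_all hξ hη hmaj i)).2.2.2.2.2.2.1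

lemma s2m_le (i : ℕ) : sN ξ η i ^2 * mN ξ η i ≤ mN ξ η (i+1) :=
  (trans_facts hξ hη hmaj i (inv_all hξ hη hmaj i)).2.2.2.2.2.2.2.2.1

lemma out_rowsum (i : ℕ) :
    ∑ j ∈ fedN ξ η (i+1), (rowN ξ η i j)^2 * η j = outN ξ η i :=
  (trans_facts hξ hη hmaj i (inv_all hξ hη hmaj i)).2.2.2.2.2.2.2.2.2.1

lemma rownorm_one (i : ℕ) :
    ∑ j ∈ fedN ξ η (i+1), (rowN ξ η i j)^2 = 1 :=
  (trans_facts hξ hη hmaj i (inv_all hξ hη hmaj i)).2.2.2.2.2.2.2.2.2.2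

lemma gdot {k i : ℕ} (h : k < i) :
    ∑ j ∈ fedN ξ η i, rowN ξ η k j * gN ξ η i j = 0 := by
  induction i with
  | zero => omega
  | succ n ih =>
      rcases Nat.lt_succ_iff_lt_or_eq.mp h with h' | h'
      · rw [sum_insert_f]
        have h1 : rowN ξ η k (fN ξ η n) = 0 := row_supp' h' (fN_not_mem n)
        rw [h1, zero_mul, zero_add]
        have : ∑ j ∈ fedN ξ η n, rowN ξ η k j * gN ξ η (n+1) j
            = sN ξ η n * ∑ j ∈ fedN ξ η n, rowN ξ η k j * gN ξ η n j := by
          rw [Finset.mul_sum]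
          apply Finset.sum_congr rfl
          intro j hj
          rw [gN_step_mem n hj]
          ring
        rw [this, ih h', mul_zero]
      · subst h'
        rw [sum_insert_f, rowN_f, gN_step_f]
        have : ∑ j ∈ fedN ξ η k, rowN ξ η k j * gN ξ η (k+1) j
            = cN ξ η k * sN ξ η k * ∑ j ∈ fedN ξ η k, (gN ξ η k j)^2 := by
          rw [Finset.mul_sum]
          apply Finset.sum_congr rfl
          intro j hj
          rw [gN_step_mem k hj, rowN_mem k hj]
          ring
        rw [this, norm_one hξ hη hmaj]
        ring

lemma rowdot {k i : ℕ} (h : k < i) :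
    ∑ j ∈ fedN ξ η (i+1), rowN ξ η k j * rowN ξ η i j = 0 := by
  rw [sum_insert_f]
  have h1 : rowN ξ η k (fN ξ η i) = 0 := row_supp' h (fN_not_mem i)
  rw [h1, rowN_f, zero_mul, zero_add]
  have : ∑ j ∈ fedN ξ η i, rowN ξ η k j * rowN ξ η i j
      = cN ξ η i * ∑ j ∈ fedN ξ η i, rowN ξ η k j * gN ξ η i j := by
    rw [Finset.mul_sum]
    apply Finset.sum_congr rfl
    intro j hj
    rw [rowN_mem i hj]
    ring
  rw [this, gdot hξ hη hmaj h, mul_zero]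

lemma colId (i : ℕ) : ∀ j j', j ∈ fedN ξ η i → j' ∈ fedN ξ η i →
    ∑ k ∈ range i, rowN ξ η k j * rowN ξ η k j' + gN ξ η i j * gN ξ η i j'
      = (if j = j' then (1:ℝ) else 0) := by
  induction i with
  | zero =>
      intro j j' hj hj'
      rw [fed_zero, Finset.mem_singleton] at hj hj'
      subst hj; subst hj'
      show (0:ℝ) + gN ξ η 0 0 * gN ξ η 0 0 = 1
      show (0:ℝ) + (if (0:ℕ) = 0 then (1:ℝ) else 0) * (if (0:ℕ) = 0 then (1:ℝ) else 0) = 1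
      simp
  | succ n ih =>
      intro j j' hj hj'
      rw [fed_succ, Finset.mem_insert] at hj hj'
      rw [Finset.sum_range_succ]
      rcases hj with rfl | hj
      · rcases hj' with h' | hj'
        · -- j = j' = f
          subst h'
          rw [rowN_f, gN_step_f]
          have hz : ∀ k ∈ range n, rowN ξ η k (fN ξ η n) * rowN ξ η k (fN ξ η n) = 0 := by
            intro k hk
            rw [Finset.mem_range] at hk
            rw [row_supp' hk (fN_not_mem n)]
            ring
          rw [Finset.sum_congr rfl hz, Finset.sum_const_zero, zero_add, if_pos rfl]
          have := cs_sq hξ hη hmaj n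
          ring_nf
          ring_nf at this
          linarith
        · -- j = f, j' ∈ fed n
          have hne : fN ξ η n ≠ j' := fun h => (fN_not_mem n) (h ▸ hj')
          rw [if_neg hne]
          have hz : ∀ k ∈ range n, rowN ξ η k (fN ξ η n) * rowN ξ η k j' = 0 := by
            intro k hk
            rw [Finset.mem_range] at hk
            rw [row_supp' hk (fN_not_mem n)]
            ring
          rw [Finset.sum_congr rfl hz, Finset.sum_const_zero, zero_add,
            rowN_f, gN_step_f, rowN_mem n hj', gN_step_mem n hj']
          ring
      · rcases hj' with rfl | hj'
        · have hne : j ≠ fN ξ η n := fun h => (fN_not_mem n) (h ▸ hj)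
          rw [if_neg hne]
          have hz : ∀ k ∈ range n, rowN ξ η k j * rowN ξ η k (fN ξ η n) = 0 := by
            intro k hk
            rw [Finset.mem_range] at hk
            rw [row_supp' hk (fN_not_mem n) (j := fN ξ η n)]
            ring
          rw [Finset.sum_congr rfl hz, Finset.sum_const_zero, zero_add,
            rowN_f, gN_step_f, rowN_mem n hj, gN_step_mem n hj]
          ring
        · have key : rowN ξ η n j * rowN ξ η n j' + gN ξ η (n+1) j * gN ξ η (n+1) j'
              = gN ξ η n j * gN ξ η n j' := by
            rw [rowN_mem n hj, rowN_mem n hj', gN_step_mem n hj, gN_step_mem n hj']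
            have hcs := cs_sq hξ hη hmaj n
            linear_combination (gN ξ η n j * gN ξ η n j') * hcs
          rw [add_assoc, key]
          exact ih j j' hj hj'

end WithHyp

variable (ξ η)

/-- partial products of the carry-retention coefficients -/
def PP (K N : ℕ) : ℝ := ∏ l ∈ Ico K N, sN ξ η l

/-- the tail product (limit) -/
def QQ (K : ℕ) : ℝ := ⨅ N, PP ξ η K N

def fedEver (j : ℕ) : Prop := ∃ i, j ∈ fedN ξ η i

def Tj (j : ℕ) : ℕ := if h : fedEver ξ η j then Nat.find h else 0

/-- the ghost vector -/
def w (j : ℕ) : ℝ :=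
  if h : fedEver ξ η j then gN ξ η (Tj ξ η j) j * QQ ξ η (Tj ξ η j) else 0

variable {ξ η}

section WithHyp2

variable (hξ : IsCoStar ξ) (hη : IsCoStar η) (hmaj : Maj ξ η)
include hξ hη hmaj

lemma PP_nonneg (K N : ℕ) : 0 ≤ PP ξ η K N :=
  Finset.prod_nonneg fun l _ => s_nonneg hξ hη hmaj l

lemma PP_le_one (K N : ℕ) : PP ξ η K N ≤ 1 :=
  Finset.prod_le_one (fun l _ => s_nonneg hξ hη hmaj l) (fun l _ => s_le_one hξ hη hmaj l)

lemma PP_mul {K i N : ℕ} (h1 : K ≤ i) (h2 : i ≤ N) :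
    PP ξ η K i * PP ξ η i N = PP ξ η K N :=
  Finset.prod_Ico_consecutive _ h1 h2

lemma PP_succ {K N : ℕ} (h : K ≤ N) :
    PP ξ η K (N+1) = PP ξ η K N * sN ξ η N :=
  Finset.prod_Ico_succ_top h _

lemma PP_antitone (K : ℕ) : Antitone (PP ξ η K) := by
  intro N N' h
  rcases le_or_gt N' K with h1 | h1
  · have e1 : PP ξ η K N = 1 := by
      unfold PP
      rw [Finset.Ico_eq_empty (by omega), Finset.prod_empty]
    have e2 : PP ξ η K N' = 1 := by
      unfold PP
      rw [Finset.Ico_eq_empty (by omega), Finset.prod_empty]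
    rw [e1, e2]
  · rcases le_or_gt K N with h2 | h2
    · rw [← PP_mul hξ hη hmaj h2 h]
      have := PP_nonneg hξ hη hmaj K N
      have := PP_le_one hξ hη hmaj N N'
      have := PP_nonneg hξ hη hmaj N N'
      nlinarith
    · have e1 : PP ξ η K N = 1 := by
        unfold PP
        rw [Finset.Ico_eq_empty (by omega), Finset.prod_empty]
      rw [e1]
      exact PP_le_one hξ hη hmaj K N'

lemma PP_bddBelow (K : ℕ) : BddBelow (Set.range (PP ξ η K)) := by
  refine ⟨0, ?_⟩
  rintro x ⟨N, rfl⟩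
  exact PP_nonneg hξ hη hmaj K N

lemma tendsto_PP (K : ℕ) : Tendsto (PP ξ η K) atTop (nhds (QQ ξ η K)) :=
  tendsto_atTop_ciInf (PP_antitone hξ hη hmaj K) (PP_bddBelow hξ hη hmaj K)

lemma QQ_le_PP (K N : ℕ) : QQ ξ η K ≤ PP ξ η K N :=
  ciInf_le (PP_bddBelow hξ hη hmaj K) N

lemma QQ_nonneg (K : ℕ) : 0 ≤ QQ ξ η K :=
  le_ciInf fun N => PP_nonneg hξ hη hmaj K N

lemma QQ_le_one (K : ℕ) : QQ ξ η K ≤ 1 := by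
  have := QQ_le_PP hξ hη hmaj K K
  have e1 : PP ξ η K K = 1 := by
    unfold PP
    rw [Finset.Ico_eq_empty (by omega), Finset.prod_empty]
  linarith

lemma QQ_mul {K i : ℕ} (h : K ≤ i) : PP ξ η K i * QQ ξ η i = QQ ξ η K := by
  have h1 : Tendsto (fun N => PP ξ η K i * PP ξ η i N) atTop
      (nhds (PP ξ η K i * QQ ξ η i)) :=
    (tendsto_PP hξ hη hmaj i).const_mul _
  have h2 : Tendsto (fun N => PP ξ η K i * PP ξ η i N) atTop (nhds (QQ ξ η K)) := by
    apply Tendsto.congr' _ (tendsto_PP hξ hη hmaj K)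
    filter_upwards [eventually_ge_atTop i] with N hN
    exact (PP_mul hξ hη hmaj h hN).symm
  exact tendsto_nhds_unique h1 h2

lemma PP_self (K : ℕ) : PP ξ η K K = 1 := by
  unfold PP; rw [Finset.Ico_self, Finset.prod_empty]

lemma QQ_succ (i : ℕ) : QQ ξ η i = sN ξ η i * QQ ξ η (i+1) := by
  have h := QQ_mul hξ hη hmaj (Nat.le_succ i)
  rw [← h]
  congr 1
  have : PP ξ η i (i+1) = PP ξ η i i * sN ξ η i := PP_succ hξ hη hmaj (le_refl i)
  rw [this, PP_self hξ hη hmaj, one_mul]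

lemma g_prod {j T : ℕ} (hj : j ∈ fedN ξ η T) :
    ∀ i, T ≤ i → gN ξ η i j = gN ξ η T j * PP ξ η T i := by
  intro i hi
  induction i, hi using Nat.le_induction with
  | base => rw [PP_self hξ hη hmaj, mul_one]
  | succ n hn ih =>
      rw [PP_succ hξ hη hmaj hn, gN_step_mem n (fed_mono hn hj), ih]
      ring


lemma w_eq {i j : ℕ} (hj : j ∈ fedN ξ η i) :
    w ξ η j = gN ξ η i j * QQ ξ η i := by
  have hfe : fedEver ξ η j := ⟨i, hj⟩
  have hTj : Tj ξ η j = Nat.find hfe := by unfold Tj; rw [dif_pos hfe]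
  have hT : j ∈ fedN ξ η (Tj ξ η j) := by rw [hTj]; exact Nat.find_spec hfe
  have hTi : Tj ξ η j ≤ i := by rw [hTj]; exact Nat.find_le hj
  unfold w
  rw [dif_pos hfe]
  rw [g_prod hξ hη hmaj hT i hTi, ← QQ_mul hξ hη hmaj hTi]
  ring

omit hξ hη hmaj in
lemma w_unfed {j : ℕ} (h : ¬ fedEver ξ η j) : w ξ η j = 0 := by
  unfold w; rw [dif_neg h]

omit hξ hη hmaj in
lemma row_unfed {j : ℕ} (h : ¬ fedEver ξ η j) (k : ℕ) : rowN ξ η k j = 0 :=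
  row_supp k (fun hm => h ⟨k+1, hm⟩)

omit hξ hη hmaj in
lemma g_unfed {j : ℕ} (h : ¬ fedEver ξ η j) (i : ℕ) : gN ξ η i j = 0 :=
  g_supp i (fun hm => h ⟨i, hm⟩)

lemma w_lim (j : ℕ) : Tendsto (fun i => gN ξ η i j) atTop (nhds (w ξ η j)) := by
  by_cases hfe : fedEver ξ η j
  · have hTj : Tj ξ η j = Nat.find hfe := by unfold Tj; rw [dif_pos hfe]
    have hT : j ∈ fedN ξ η (Tj ξ η j) := by rw [hTj]; exact Nat.find_spec hfe
    have h1 : Tendsto (fun i => gN ξ η (Tj ξ η j) j * PP ξ η (Tj ξ η j) i) atTop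
        (nhds (gN ξ η (Tj ξ η j) j * QQ ξ η (Tj ξ η j))) :=
      (tendsto_PP hξ hη hmaj _).const_mul _
    have h2 : w ξ η j = gN ξ η (Tj ξ η j) j * QQ ξ η (Tj ξ η j) := by
      unfold w; rw [dif_pos hfe]
    rw [h2]
    apply Tendsto.congr' _ h1
    filter_upwards [eventually_ge_atTop (Tj ξ η j)] with i hi
    exact (g_prod hξ hη hmaj hT i hi).symm
  · have : (fun i => gN ξ η i j) = fun _ => (0:ℝ) := by
      funext i; exact g_unfed hfe i
    rw [this, w_unfed hfe]
    exact tendsto_const_nhds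

lemma sum_rowsq_le (j : ℕ) (n : ℕ) : ∑ k ∈ range n, (rowN ξ η k j)^2 ≤ 1 := by
  by_cases hfe : fedEver ξ η j
  · obtain ⟨i0, hi0⟩ := hfe
    set I := max n i0 with hI
    have hjI : j ∈ fedN ξ η I := fed_mono (le_max_right _ _) hi0
    have hcol := colId hξ hη hmaj I j j hjI hjI
    rw [if_pos rfl] at hcol
    have h1 : ∑ k ∈ range I, rowN ξ η k j * rowN ξ η k j
        = ∑ k ∈ range I, (rowN ξ η k j)^2 := by
      apply Finset.sum_congr rfl; intro k _; ring
    rw [h1] at hcol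
    have h2 : ∑ k ∈ range n, (rowN ξ η k j)^2 ≤ ∑ k ∈ range I, (rowN ξ η k j)^2 := by
      apply Finset.sum_le_sum_of_subset_of_nonneg (Finset.range_subset_range.2 (le_max_left _ _))
      intro k _ _; exact sq_nonneg _
    nlinarith [sq_nonneg (gN ξ η I j)]
  · have : ∀ k ∈ range n, (rowN ξ η k j)^2 = 0 := by
      intro k _; rw [row_unfed hfe k]; ring
    rw [Finset.sum_congr rfl this, Finset.sum_const_zero]
    norm_num

lemma summable_rowsq (j : ℕ) : Summable (fun k => (rowN ξ η k j)^2) :=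
  summable_of_sum_range_le (fun k => sq_nonneg _) (sum_rowsq_le hξ hη hmaj j)

lemma summable_rowprod (j j' : ℕ) : Summable (fun k => rowN ξ η k j * rowN ξ η k j') := by
  have hg : Summable (fun k => ((rowN ξ η k j)^2 + (rowN ξ η k j')^2)/2) :=
    ((summable_rowsq hξ hη hmaj j).add (summable_rowsq hξ hη hmaj j')).div_const 2
  have hb : ∀ k, |rowN ξ η k j * rowN ξ η k j'|
      ≤ ((rowN ξ η k j)^2 + (rowN ξ η k j')^2)/2 := by
    intro k
    rw [abs_mul]
    nlinarith [sq_nonneg (|rowN ξ η k j| - |rowN ξ η k j'|), sq_abs (rowN ξ η k j),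
      sq_abs (rowN ξ η k j'), abs_nonneg (rowN ξ η k j), abs_nonneg (rowN ξ η k j')]
  exact Summable.of_abs (Summable.of_nonneg_of_le (fun k => abs_nonneg _) hb hg)

lemma col_hasSum {j j' : ℕ} (hj : fedEver ξ η j) (hj' : fedEver ξ η j') :
    HasSum (fun k => rowN ξ η k j * rowN ξ η k j')
      ((if j = j' then (1:ℝ) else 0) - w ξ η j * w ξ η j') := by
  have hs := summable_rowprod hξ hη hmaj j j'
  have h1 := hs.hasSum.tendsto_sum_nat
  obtain ⟨i0, hi0⟩ := hj
  obtain ⟨i0', hi0'⟩ := hj'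
  have h2 : Tendsto (fun n => ∑ k ∈ range n, rowN ξ η k j * rowN ξ η k j') atTop
      (nhds ((if j = j' then (1:ℝ) else 0) - w ξ η j * w ξ η j')) := by
    have h3 : Tendsto (fun n => (if j = j' then (1:ℝ) else 0) - gN ξ η n j * gN ξ η n j')
        atTop (nhds ((if j = j' then (1:ℝ) else 0) - w ξ η j * w ξ η j')) :=
      Tendsto.const_sub _ ((w_lim hξ hη hmaj j).mul (w_lim hξ hη hmaj j'))
    apply Tendsto.congr' _ h3
    filter_upwards [eventually_ge_atTop i0, eventually_ge_atTop i0'] with n hn hn'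
    have := colId hξ hη hmaj n j j' (fed_mono hn hi0) (fed_mono hn' hi0')
    linarith
  have := tendsto_nhds_unique h1 h2
  rw [← this]
  exact hs.hasSum

omit hξ hη hmaj in
lemma col_hasSum_zero {j j' : ℕ} (hj : ¬ fedEver ξ η j) :
    HasSum (fun k => rowN ξ η k j * rowN ξ η k j') 0 := by
  have : (fun k => rowN ξ η k j * rowN ξ η k j') = fun _ => (0:ℝ) := by
    funext k; rw [row_unfed hj k, zero_mul]
  rw [this]
  exact hasSum_zero

lemma row_hasSum_self (i : ℕ) : HasSum (fun j => rowN ξ η i j * rowN ξ η i j) 1 := by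
  have h0 : ∀ j ∉ fedN ξ η (i+1), rowN ξ η i j * rowN ξ η i j = 0 := by
    intro j hj; rw [row_supp i hj, zero_mul]
  have := hasSum_sum_of_ne_finset_zero (L := SummationFilter.unconditional _) h0
  have he : ∑ j ∈ fedN ξ η (i+1), rowN ξ η i j * rowN ξ η i j = 1 := by
    rw [← rownorm_one hξ hη hmaj i]
    apply Finset.sum_congr rfl; intro k _; ring
  rwa [he] at this

lemma row_hasSum_mixed {k i : ℕ} (h : k < i) :
    HasSum (fun j => rowN ξ η k j * rowN ξ η i j) 0 := by
  have h0 : ∀ j ∉ fedN ξ η (i+1), rowN ξ η k j * rowN ξ η i j = 0 := by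
    intro j hj; rw [row_supp i hj, mul_zero]
  have := hasSum_sum_of_ne_finset_zero (L := SummationFilter.unconditional _) h0
  rwa [rowdot hξ hη hmaj h] at this

lemma row_hasSum_eta (i : ℕ) :
    HasSum (fun j => (rowN ξ η i j)^2 * η j) (outN ξ η i) := by
  have h0 : ∀ j ∉ fedN ξ η (i+1), (rowN ξ η i j)^2 * η j = 0 := by
    intro j hj; rw [row_supp i hj]; ring
  have := hasSum_sum_of_ne_finset_zero (L := SummationFilter.unconditional _) h0
  rwa [out_rowsum hξ hη hmaj i] at this


omit hξ hη hmaj in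
lemma fodder_min {l : ℕ} (hf : isFodder ξ η l (proc ξ η l)) {j : ℕ}
    (hj : j ∉ fedN ξ η l) (hlt : η j < ξ l) : fN ξ η l ≤ j := by
  have hex : ∃ j', j' ∉ (proc ξ η l).fed ∧ η j' < ξ l := ⟨j, hj, hlt⟩
  have heq : fN ξ η l = Nat.find hex := by
    unfold fN feedIdx
    rw [if_pos hf]
    unfold fodder
    rw [dif_pos hex]
  rw [heq]
  exact Nat.find_min' hex ⟨hj, hlt⟩

omit hξ hη hmaj in
lemma fN_inj {k l : ℕ} (h : k < l) : fN ξ η k ≠ fN ξ η l := by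
  intro he
  apply fN_not_mem l
  rw [← he]
  exact fed_mono h (by rw [fed_succ]; exact Finset.mem_insert_self _ _)

omit hξ hη hmaj in
lemma starved_feeds_le {c : ℕ} (hc : ¬ fedEver ξ η c) (hc0 : η c = 0) (l : ℕ)
    (hl : 0 < ξ l ∨ ξ l = 0) : True := trivial

lemma starved_pos {c : ℕ} (hc : ¬ fedEver ξ η c) : 0 < η c := by
  rcases lt_or_ge 0 (η c) with h | h
  · exact h
  have hc0 : η c = 0 := le_antisymm h (hη.1 c)
  exfalso
  have hfle : ∀ l, fN ξ η l ≤ c := by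
    intro l
    have hcf : c ∉ fedN ξ η l := fun hm => hc ⟨l, hm⟩
    by_cases hf : isFodder ξ η l (proc ξ η l)
    · exact fodder_min hf hcf (by rw [hc0]; exact hf.1)
    · rw [crisis_f hf]
      exact jst_min _ hcf
  -- infinitely many distinct values ≤ c : contradiction
  have hinj : Set.InjOn (fN ξ η) ↑(range (c+2)) := by
    intro x _ y _ hxy
    by_contra hne
    rcases Nat.lt_or_ge x y with h' | h'
    · exact fN_inj h' hxy
    · exact fN_inj (lt_of_le_of_ne h' (Ne.symm hne)) hxy.symm
  have hmaps : ∀ x ∈ range (c+2), fN ξ η x ∈ range (c+1) := by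
    intro x _
    rw [Finset.mem_range]
    exact Nat.lt_succ_of_le (hfle x)
  have := Finset.card_le_card_of_injOn (fN ξ η) hmaps hinj
  rw [Finset.card_range, Finset.card_range] at this
  omega

def ActiveP : Prop := ∃ K, 0 < QQ ξ η K

omit hξ hη hmaj in
lemma PP_zero_of_s_zero {K l : ℕ} (hK : K ≤ l) (hs : sN ξ η l = 0) :
    PP ξ η K (l+1) = 0 := by
  unfold PP
  apply Finset.prod_eq_zero (i := l)
  · rw [Finset.mem_Ico]; omega
  · exact hs

lemma active_spec (hA : ActiveP (ξ := ξ) (η := η)) :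
    ∃ K, 0 < QQ ξ η K ∧ 0 < mN ξ η K ∧ (∀ i, 0 < ξ i) := by
  obtain ⟨K, hK⟩ := hA
  have hsl : ∀ l, K ≤ l → sN ξ η l ≠ 0 := by
    intro l hl hs
    have := QQ_le_PP hξ hη hmaj K (l+1)
    rw [PP_zero_of_s_zero hl hs] at this
    linarith
  have hξl : ∀ l, K ≤ l → ξ l ≠ 0 := by
    intro l hl h0
    exact hsl l hl (dump_s (Or.inl h0))
  have hxpos : ∀ i, 0 < ξ i := by
    intro i
    have h1 : 0 < ξ (max i K) :=
      lt_of_le_of_ne (hξ.1 _) (Ne.symm (hξl _ (le_max_right _ _)))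
    exact lt_of_lt_of_le h1 (hξ.2.1 (le_max_left _ _))
  exact ⟨K, hK, m_pos hξ hη hmaj (hxpos K), hxpos⟩

lemma sum_wsq_le (F : Finset ℕ) : ∑ j ∈ F, (w ξ η j)^2 ≤ 1 := by
  set I := F.sup (Tj ξ η) with hI
  have hwj : ∀ j ∈ F, (w ξ η j)^2 = QQ ξ η I ^2 * (gN ξ η I j)^2 := by
    intro j hj
    by_cases hfe : fedEver ξ η j
    · have hTj : Tj ξ η j = Nat.find hfe := by unfold Tj; rw [dif_pos hfe]
      have hT : j ∈ fedN ξ η (Tj ξ η j) := by rw [hTj]; exact Nat.find_spec hfe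
      have hTI : Tj ξ η j ≤ I := Finset.le_sup hj
      have := w_eq hξ hη hmaj (fed_mono hTI hT)
      rw [this]; ring
    · rw [w_unfed hfe, g_unfed hfe I]
      ring
  rw [Finset.sum_congr rfl hwj, ← Finset.mul_sum]
  have h1 : ∑ j ∈ F, (gN ξ η I j)^2 ≤ ∑ j ∈ F ∩ fedN ξ η I, (gN ξ η I j)^2 := by
    apply le_of_eq
    apply (Finset.sum_subset (Finset.inter_subset_left) ?_).symm
    intro x hx hnx
    have : x ∉ fedN ξ η I := by
      intro hm
      exact hnx (Finset.mem_inter.mpr ⟨hx, hm⟩)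
    rw [g_supp I this]
    ring
  have h2 : ∑ j ∈ F ∩ fedN ξ η I, (gN ξ η I j)^2 ≤ ∑ j ∈ fedN ξ η I, (gN ξ η I j)^2 := by
    apply Finset.sum_le_sum_of_subset_of_nonneg (Finset.inter_subset_right)
    intro j _ _; exact sq_nonneg _
  have h3 := norm_one hξ hη hmaj I
  have h4 : QQ ξ η I ^ 2 ≤ 1 := by
    nlinarith [QQ_nonneg hξ hη hmaj I, QQ_le_one hξ hη hmaj I]
  nlinarith [sq_nonneg (QQ ξ η I)]

lemma summable_wsq : Summable (fun j => (w ξ η j)^2) :=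
  summable_of_sum_le (fun j => sq_nonneg _) (fun F => sum_wsq_le hξ hη hmaj F)

omit hξ hmaj in
lemma summable_sq_eta {v : ℕ → ℝ} (hv : Summable (fun j => (v j)^2)) :
    Summable (fun j => (v j)^2 * η j) := by
  refine Summable.of_nonneg_of_le (f := fun j => (v j)^2 * η 0)
    (fun j => mul_nonneg (sq_nonneg _) (hη.1 j)) (fun j => ?_)
    (hv.mul_right _)
  exact mul_le_mul_of_nonneg_left (hη.2.1 (Nat.zero_le j)) (sq_nonneg _)

lemma summable_wsq_eta : Summable (fun j => (w ξ η j)^2 * η j) :=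
  summable_sq_eta hη (summable_wsq hξ hη hmaj)


omit hξ hη hmaj in
lemma w_zero_of_not_active (hA : ¬ ActiveP (ξ := ξ) (η := η)) (hQnn : ∀ K, 0 ≤ QQ ξ η K) :
    ∀ j, w ξ η j = 0 := by
  intro j
  unfold w
  split
  · next h =>
      have hQ0 : QQ ξ η (Tj ξ η j) = 0 := by
        by_contra hne
        exact hA ⟨Tj ξ η j, lt_of_le_of_ne (hQnn _) (Ne.symm hne)⟩
      rw [hQ0, mul_zero]
  · rfl

lemma QQ_tendsto_one (hA : ActiveP (ξ := ξ) (η := η)) :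
    Tendsto (QQ ξ η) atTop (nhds 1) := by
  obtain ⟨K, hK⟩ := hA
  have hPPpos : ∀ N, 0 < PP ξ η K N := fun N =>
    lt_of_lt_of_le hK (QQ_le_PP hξ hη hmaj K N)
  have heq : ∀ N, K ≤ N → QQ ξ η N = QQ ξ η K / PP ξ η K N := by
    intro N hN
    rw [eq_div_iff (ne_of_gt (hPPpos N))]
    linarith [QQ_mul hξ hη hmaj hN]
  have h1 : Tendsto (fun N => QQ ξ η K / PP ξ η K N) atTop (nhds (QQ ξ η K / QQ ξ η K)) :=
    Tendsto.div tendsto_const_nhds (tendsto_PP hξ hη hmaj K) (ne_of_gt hK)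
  rw [div_self (ne_of_gt hK)] at h1
  apply Tendsto.congr' _ h1
  filter_upwards [eventually_ge_atTop K] with N hN
  exact (heq N hN).symm

variable (ξ η) in
def feedEnum : ℕ → ℕ
  | 0 => 0
  | (k+1) => fN ξ η k

omit hξ hη hmaj in
lemma feedEnum_mem (k : ℕ) : feedEnum ξ η k ∈ fedN ξ η k := by
  cases k with
  | zero => exact zero_mem_fed 0
  | succ n => rw [fed_succ]; exact Finset.mem_insert_self _ _

omit hξ hη hmaj in
lemma feedEnum_inj : Function.Injective (feedEnum ξ η) := by
  intro k l h
  by_contra hne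
  wlog hlt : k < l generalizing k l
  · exact this h.symm (Ne.symm hne) (by omega)
  have h1 : feedEnum ξ η k ∈ fedN ξ η k := feedEnum_mem k
  have h2 : feedEnum ξ η l ∉ fedN ξ η (l-1) := by
    cases l with
    | zero => omega
    | succ n => exact fN_not_mem n
  apply h2
  rw [← h]
  exact fed_mono (by omega) h1

omit hξ hη hmaj in
lemma fed_eq_image (i : ℕ) :
    fedN ξ η i = Finset.image (feedEnum ξ η) (range (i+1)) := by
  ext e
  rw [Finset.mem_image, fed_mem_iff]
  constructor
  · rintro (rfl | ⟨k, hk, hke⟩)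
    · exact ⟨0, by rw [Finset.mem_range]; omega, rfl⟩
    · exact ⟨k+1, by rw [Finset.mem_range]; omega, hke⟩
  · rintro ⟨l, hl, rfl⟩
    rw [Finset.mem_range] at hl
    cases l with
    | zero => exact Or.inl rfl
    | succ n => exact Or.inr ⟨n, by omega, rfl⟩

omit hξ hη hmaj in
lemma fed_range {j : ℕ} (h : fedEver ξ η j) : j ∈ Set.range (feedEnum ξ η) := by
  obtain ⟨i, hi⟩ := h
  rw [fed_eq_image i] at hi
  obtain ⟨l, -, rfl⟩ := Finset.mem_image.mp hi
  exact ⟨l, rfl⟩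

lemma hasSum_wsq (hA : ActiveP (ξ := ξ) (η := η)) :
    HasSum (fun j => (w ξ η j)^2) 1 := by
  have hsumm := summable_wsq hξ hη hmaj
  have hzero : ∀ x ∉ Set.range (feedEnum ξ η), (fun j => (w ξ η j)^2) x = 0 := by
    intro x hx
    have : ¬ fedEver ξ η x := fun hf => hx (fed_range hf)
    show (w ξ η x)^2 = 0
    rw [w_unfed this]
    ring
  rw [← Function.Injective.hasSum_iff (feedEnum_inj (ξ := ξ) (η := η)) hzero]
  have hsumm2 : Summable ((fun j => (w ξ η j)^2) ∘ (feedEnum ξ η)) :=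
    hsumm.comp_injective feedEnum_inj
  have hpart : ∀ n, ∑ l ∈ range (n+1), ((fun j => (w ξ η j)^2) ∘ (feedEnum ξ η)) l
      = QQ ξ η n ^2 := by
    intro n
    have h1 : ∑ l ∈ range (n+1), (w ξ η (feedEnum ξ η l))^2
        = ∑ j ∈ fedN ξ η n, (w ξ η j)^2 := by
      rw [fed_eq_image n, Finset.sum_image]
      intro x _ y _ hxy
      exact feedEnum_inj hxy
    show ∑ l ∈ range (n+1), (w ξ η (feedEnum ξ η l))^2 = _
    rw [h1]
    have h2 : ∀ j ∈ fedN ξ η n, (w ξ η j)^2 = QQ ξ η n^2 * (gN ξ η n j)^2 := by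
      intro j hj
      rw [w_eq hξ hη hmaj hj]
      ring
    rw [Finset.sum_congr rfl h2, ← Finset.mul_sum, norm_one hξ hη hmaj, mul_one]
  have hQ1 : Tendsto (fun n => QQ ξ η n ^2) atTop (nhds 1) := by
    have := (QQ_tendsto_one hξ hη hmaj hA).mul (QQ_tendsto_one hξ hη hmaj hA)
    rw [mul_one] at this
    apply Tendsto.congr _ this
    intro n; ring
  have h1 := hsumm2.hasSum.tendsto_sum_nat
  have h2 : Tendsto (fun n => ∑ l ∈ range (n+1),
      ((fun j => (w ξ η j)^2) ∘ (feedEnum ξ η)) l) atTop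
      (nhds (∑' l, ((fun j => (w ξ η j)^2) ∘ (feedEnum ξ η)) l)) :=
    h1.comp (tendsto_add_atTop_nat 1)
  have h3 : Tendsto (fun n => QQ ξ η n ^2) atTop
      (nhds (∑' l, ((fun j => (w ξ η j)^2) ∘ (feedEnum ξ η)) l)) := by
    apply Tendsto.congr _ h2
    intro n
    exact hpart n
  have := tendsto_nhds_unique h3 hQ1
  rw [← this]
  exact hsumm2.hasSum

variable (ξ η) in
def gOut : ℝ := ∑' j, (w ξ η j)^2 * η j

lemma hasSum_wsq_eta : HasSum (fun j => (w ξ η j)^2 * η j) (gOut ξ η) :=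
  (summable_wsq_eta hξ hη hmaj).hasSum

lemma gOut_pos (hA : ActiveP (ξ := ξ) (η := η)) : 0 < gOut ξ η := by
  obtain ⟨K, hK, hmK, -⟩ := active_spec hξ hη hmaj hA
  have h1 : ∑ j ∈ fedN ξ η K, (w ξ η j)^2 * η j = QQ ξ η K^2 * mN ξ η K := by
    have h2 : ∀ j ∈ fedN ξ η K, (w ξ η j)^2 * η j
        = QQ ξ η K^2 * ((gN ξ η K j)^2 * η j) := by
      intro j hj
      rw [w_eq hξ hη hmaj hj]
      ring
    rw [Finset.sum_congr rfl h2, ← Finset.mul_sum]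
    rfl
  have h3 : ∑ j ∈ fedN ξ η K, (w ξ η j)^2 * η j ≤ gOut ξ η :=
    Summable.sum_le_tsum (fedN ξ η K) (fun j _ => mul_nonneg (sq_nonneg _) (hη.1 j))
      (summable_wsq_eta hξ hη hmaj)
  rw [h1] at h3
  nlinarith [pow_pos hK 2, mul_pos (pow_pos hK 2) hmK]

lemma w_orth_row (k : ℕ) : HasSum (fun j => w ξ η j * rowN ξ η k j) 0 := by
  have h0 : ∀ j ∉ fedN ξ η (k+1), w ξ η j * rowN ξ η k j = 0 := by
    intro j hj; rw [row_supp k hj, mul_zero]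
  have h := hasSum_sum_of_ne_finset_zero (L := SummationFilter.unconditional _) h0
  have he : ∑ j ∈ fedN ξ η (k+1), w ξ η j * rowN ξ η k j = 0 := by
    have h2 : ∀ j ∈ fedN ξ η (k+1), w ξ η j * rowN ξ η k j
        = QQ ξ η (k+1) * (rowN ξ η k j * gN ξ η (k+1) j) := by
      intro j hj
      rw [w_eq hξ hη hmaj hj]
      ring
    rw [Finset.sum_congr rfl h2, ← Finset.mul_sum, gdot hξ hη hmaj (Nat.lt_succ_self k),
      mul_zero]
  rwa [he] at h

end WithHyp2

variable (ξ η)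

def extAct : ℕ → Prop
  | 0 => ActiveP (ξ := ξ) (η := η)
  | (c+1) => ¬ fedEver ξ η c

def extRow : ℕ → ℕ → ℝ
  | 0 => w ξ η
  | (c+1) => fun j => if j = c then 1 else 0

def extOut : ℕ → ℝ
  | 0 => gOut ξ η
  | (c+1) => η c

/-- the odd-slot condition for inserting extra row κ at odd slot 2n+1 -/
def tCond (κ n : ℕ) : Prop := ¬ extAct ξ η κ ∨ ξ (2*n+1) ≤ extOut ξ η κ

def tSlot : ℕ → ℕ
  | 0 => if h : ∃ n, tCond ξ η 0 n then Nat.find h else 0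
  | (κ+1) => if h : ∃ n, tSlot κ < n ∧ tCond ξ η (κ+1) n then Nat.find h
      else tSlot κ + 1

def σslot (κ : ℕ) : ℕ := 2 * tSlot ξ η κ + 1

def RS : Set ℕ := {p | ∃ κ, extAct ξ η κ ∧ σslot ξ η κ = p}

lemma even_not_RS (m : ℕ) : 2*m ∉ RS ξ η := by
  rintro ⟨κ, -, h⟩
  unfold σslot at h
  omega

lemma qex0 : ∃ p, p ∉ RS ξ η := ⟨0, by exact even_not_RS ξ η 0⟩

def qSlot : ℕ → ℕ
  | 0 => Nat.find (qex0 ξ η)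
  | (k+1) => Nat.find (⟨2*(qSlot k + 1), by omega, even_not_RS ξ η (qSlot k + 1)⟩ :
      ∃ p, qSlot k < p ∧ p ∉ RS ξ η)

variable {ξ η}

lemma tSlot_mono (κ : ℕ) : tSlot ξ η κ < tSlot ξ η (κ+1) := by
  show tSlot ξ η κ < (if h : ∃ n, tSlot ξ η κ < n ∧ tCond ξ η (κ+1) n then Nat.find h
      else tSlot ξ η κ + 1)
  split
  · next h => exact (Nat.find_spec h).1
  · omega

lemma tSlot_smono : StrictMono (tSlot ξ η) :=
  strictMono_nat_of_lt_succ tSlot_mono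

lemma σslot_inj : Function.Injective (σslot ξ η) := by
  intro a b h
  unfold σslot at h
  have : tSlot ξ η a = tSlot ξ η b := by omega
  exact tSlot_smono.injective this

lemma qSlot_not_RS (k : ℕ) : qSlot ξ η k ∉ RS ξ η := by
  cases k with
  | zero => exact Nat.find_spec (qex0 ξ η)
  | succ n => exact (Nat.find_spec (⟨2*(qSlot ξ η n + 1), by omega,
      even_not_RS ξ η (qSlot ξ η n + 1)⟩ : ∃ p, qSlot ξ η n < p ∧ p ∉ RS ξ η)).2

lemma qSlot_lt (k : ℕ) : qSlot ξ η k < qSlot ξ η (k+1) :=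
  (Nat.find_spec (⟨2*(qSlot ξ η k + 1), by omega,
      even_not_RS ξ η (qSlot ξ η k + 1)⟩ : ∃ p, qSlot ξ η k < p ∧ p ∉ RS ξ η)).1

lemma qSlot_smono : StrictMono (qSlot ξ η) := strictMono_nat_of_lt_succ qSlot_lt

lemma qSlot_min0 {p : ℕ} (hp : p ∉ RS ξ η) : qSlot ξ η 0 ≤ p := Nat.find_min' _ hp

lemma qSlot_succ_min {k p : ℕ} (h1 : qSlot ξ η k < p) (hp : p ∉ RS ξ η) :
    qSlot ξ η (k+1) ≤ p := Nat.find_min' _ ⟨h1, hp⟩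

lemma qSlot_surj {p : ℕ} (hp : p ∉ RS ξ η) : ∃ k, qSlot ξ η k = p := by
  have hP0 : qSlot ξ η 0 ≤ p := qSlot_min0 hp
  refine ⟨Nat.findGreatest (fun k => qSlot ξ η k ≤ p) p, ?_⟩
  have hspec : qSlot ξ η (Nat.findGreatest (fun k => qSlot ξ η k ≤ p) p) ≤ p :=
    Nat.findGreatest_spec (P := fun k => qSlot ξ η k ≤ p) (Nat.zero_le p) hP0
  by_contra hne
  have hlt : qSlot ξ η (Nat.findGreatest (fun k => qSlot ξ η k ≤ p) p) < p :=
    lt_of_le_of_ne hspec hne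
  have hnext := qSlot_succ_min hlt hp
  have h1 : Nat.findGreatest (fun k => qSlot ξ η k ≤ p) p + 1
      ≤ qSlot ξ η (Nat.findGreatest (fun k => qSlot ξ η k ≤ p) p + 1) :=
    qSlot_smono.le_apply
  have hbig : Nat.findGreatest (fun k => qSlot ξ η k ≤ p) p + 1 ≤ p := by omega
  exact Nat.findGreatest_is_greatest (Nat.lt_succ_self _) hbig hnext

variable (ξ η) in
def invq (p : ℕ) : ℕ := if h : ∃ k, qSlot ξ η k = p then Nat.find h else 0

variable (ξ η) in
def theκ (p : ℕ) : ℕ := if h : ∃ κ, extAct ξ η κ ∧ σslot ξ η κ = p then Nat.find h else 0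

lemma invq_spec {p : ℕ} (hp : p ∉ RS ξ η) : qSlot ξ η (invq ξ η p) = p := by
  have h := qSlot_surj hp
  unfold invq
  rw [dif_pos h]
  exact Nat.find_spec h

lemma invq_qSlot (k : ℕ) : invq ξ η (qSlot ξ η k) = k := by
  apply qSlot_smono.injective
  exact invq_spec (qSlot_not_RS k)

lemma theκ_spec {p : ℕ} (hp : p ∈ RS ξ η) :
    extAct ξ η (theκ ξ η p) ∧ σslot ξ η (theκ ξ η p) = p := by
  have h : ∃ κ, extAct ξ η κ ∧ σslot ξ η κ = p := hp
  unfold theκ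
  rw [dif_pos h]
  exact Nat.find_spec h

lemma theκ_σslot {κ : ℕ} (hκ : extAct ξ η κ) : theκ ξ η (σslot ξ η κ) = κ := by
  have hp : σslot ξ η κ ∈ RS ξ η := ⟨κ, hκ, rfl⟩
  exact σslot_inj (theκ_spec hp).2

variable (ξ η) in
def bigU : ℕ → ℕ → ℝ := fun p =>
  if p ∈ RS ξ η then extRow ξ η (theκ ξ η p) else rowN ξ η (invq ξ η p)

variable (ξ η) in
def bigOut : ℕ → ℝ := fun p =>
  if p ∈ RS ξ η then extOut ξ η (theκ ξ η p) else outN ξ η (invq ξ η p)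


section WithHyp3

variable (hξ : IsCoStar ξ) (hη : IsCoStar η) (hmaj : Maj ξ η)
include hξ hη hmaj

lemma extOut_pos {κ : ℕ} (hκ : extAct ξ η κ) : 0 < extOut ξ η κ := by
  cases κ with
  | zero => exact gOut_pos hξ hη hmaj hκ
  | succ c => exact starved_pos hξ hη hmaj hκ

lemma tCond_ex (κ : ℕ) (b : ℕ) : ∃ n, b < n ∧ tCond ξ η κ n := by
  by_cases hκ : extAct ξ η κ
  · have hpos := extOut_pos hξ hη hmaj hκ
    have hev : ∀ᶠ m in atTop, ξ m < extOut ξ η κ :=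
      hξ.2.2.eventually (eventually_lt_nhds hpos)
    obtain ⟨M, hM⟩ := eventually_atTop.mp hev
    refine ⟨max (b+1) M, by omega, Or.inr ?_⟩
    have h2 : M ≤ 2 * (max (b+1) M) + 1 := by omega
    exact le_of_lt (hM _ h2)
  · exact ⟨b+1, by omega, Or.inl hκ⟩

lemma tSlot_cond (κ : ℕ) : tCond ξ η κ (tSlot ξ η κ) := by
  cases κ with
  | zero =>
      have h : ∃ n, tCond ξ η 0 n := by
        obtain ⟨n, -, hn⟩ := tCond_ex hξ hη hmaj 0 0
        exact ⟨n, hn⟩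
      show tCond ξ η 0 (if h' : ∃ n, tCond ξ η 0 n then Nat.find h' else 0)
      rw [dif_pos h]
      exact Nat.find_spec h
  | succ κ' =>
      have h : ∃ n, tSlot ξ η κ' < n ∧ tCond ξ η (κ'+1) n :=
        tCond_ex hξ hη hmaj (κ'+1) (tSlot ξ η κ')
      show tCond ξ η (κ'+1) (if h' : ∃ n, tSlot ξ η κ' < n ∧ tCond ξ η (κ'+1) n
          then Nat.find h' else tSlot ξ η κ' + 1)
      rw [dif_pos h]
      exact (Nat.find_spec h).2

lemma bigOut_threshold (p : ℕ) : ξ p ≤ bigOut ξ η p := by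
  by_cases hp : p ∈ RS ξ η
  · obtain ⟨hact, hσ⟩ := theκ_spec hp
    have hc := tSlot_cond hξ hη hmaj (theκ ξ η p)
    unfold bigOut
    rw [if_pos hp]
    rcases hc with h | h
    · exact absurd hact h
    · have hσ' : 2 * tSlot ξ η (theκ ξ η p) + 1 = p := hσ
      rw [hσ'] at h
      exact h
  · unfold bigOut
    rw [if_neg hp]
    have h1 : invq ξ η p ≤ p := by
      have h2 : invq ξ η p ≤ qSlot ξ η (invq ξ η p) := qSlot_smono.le_apply
      rw [invq_spec hp] at h2
      exact h2
    exact le_trans (hξ.2.1 h1) (out_ge hξ hη hmaj _)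

lemma bigOut_nonneg (p : ℕ) : 0 ≤ bigOut ξ η p := by
  unfold bigOut
  split
  · next hp =>
      cases hκ : theκ ξ η p with
      | zero =>
          show (0:ℝ) ≤ gOut ξ η
          exact tsum_nonneg fun j => mul_nonneg (sq_nonneg _) (hη.1 j)
      | succ c => exact hη.1 c
  · exact out_nonneg hξ hη hmaj _

lemma ext_hasSum_self {κ : ℕ} (hκ : extAct ξ η κ) :
    HasSum (fun j => extRow ξ η κ j * extRow ξ η κ j) 1 := by
  cases κ with
  | zero =>
      have h := hasSum_wsq hξ hη hmaj hκ
      have he : (fun j => extRow ξ η 0 j * extRow ξ η 0 j)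
          = fun j => (w ξ η j)^2 := by
        funext j
        show w ξ η j * w ξ η j = (w ξ η j)^2
        ring
      rw [he]
      exact h
  | succ c =>
      have : (fun j => extRow ξ η (c+1) j * extRow ξ η (c+1) j)
          = fun j => if j = c then (1:ℝ) else 0 := by
        funext j
        show (if j = c then (1:ℝ) else 0) * (if j = c then (1:ℝ) else 0) = _
        by_cases h : j = c <;> simp [h]
      rw [this]
      exact hasSum_ite_eq c 1

omit hξ hmaj in
lemma ext_hasSum_mixed {κ κ' : ℕ} (hκ : extAct ξ η κ) (hκ' : extAct ξ η κ')
    (hne : κ ≠ κ') :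
    HasSum (fun j => extRow ξ η κ j * extRow ξ η κ' j) 0 := by
  have key : ∀ (c : ℕ), ¬ fedEver ξ η c → ∀ v : ℕ → ℝ, v c = 0 →
      HasSum (fun j => v j * extRow ξ η (c+1) j) 0 := by
    intro c hc v hv
    have : (fun j => v j * extRow ξ η (c+1) j) = fun _ => (0:ℝ) := by
      funext j
      show v j * (if j = c then (1:ℝ) else 0) = 0
      by_cases h : j = c
      · rw [h, hv, zero_mul]
      · simp [h]
    rw [this]
    exact hasSum_zero
  cases κ with
  | zero =>
      cases κ' with
      | zero => exact absurd rfl hne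
      | succ c => exact key c hκ' (w ξ η) (w_unfed hκ')
  | succ c =>
      cases κ' with
      | zero =>
          have h := key c hκ (w ξ η) (w_unfed hκ)
          have he : (fun j => extRow ξ η (c+1) j * extRow ξ η 0 j)
              = fun j => w ξ η j * extRow ξ η (c+1) j := by
            funext j
            show extRow ξ η (c+1) j * w ξ η j = w ξ η j * extRow ξ η (c+1) j
            ring
          rw [he]
          exact h
      | succ c' =>
          have hcc : c ≠ c' := by omega
          have : (fun j => extRow ξ η (c+1) j * extRow ξ η (c'+1) j)
              = fun _ => (0:ℝ) := by
            funext j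
            show (if j = c then (1:ℝ) else 0) * (if j = c' then (1:ℝ) else 0) = 0
            by_cases h : j = c
            · simp [h, hcc]
            · simp [h]
          rw [this]
          exact hasSum_zero


lemma ext_row_orth {κ : ℕ} (hκ : extAct ξ η κ) (k : ℕ) :
    HasSum (fun j => extRow ξ η κ j * rowN ξ η k j) 0 := by
  cases κ with
  | zero => exact w_orth_row hξ hη hmaj k
  | succ c =>
      have hc : ¬ fedEver ξ η c := hκ
      have he : (fun j => extRow ξ η (c+1) j * rowN ξ η k j) = fun _ => (0:ℝ) := by
        funext j
        show (if j = c then (1:ℝ) else 0) * rowN ξ η k j = 0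
        by_cases h : j = c
        · rw [if_pos h, h, row_unfed hc k, mul_zero]
        · rw [if_neg h, zero_mul]
      rw [he]
      exact hasSum_zero

theorem bigU_rows (p p' : ℕ) :
    HasSum (fun j => bigU ξ η p j * bigU ξ η p' j) (if p = p' then (1:ℝ) else 0) := by
  by_cases hp : p ∈ RS ξ η <;> by_cases hp' : p' ∈ RS ξ η <;> unfold bigU
  · rw [if_pos hp, if_pos hp']
    by_cases he : p = p'
    · rw [if_pos he]
      subst he
      exact ext_hasSum_self hξ hη hmaj (theκ_spec hp).1
    · rw [if_neg he]
      refine ext_hasSum_mixed hη (theκ_spec hp).1 (theκ_spec hp').1 ?_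
      intro hk
      apply he
      rw [← (theκ_spec hp).2, ← (theκ_spec hp').2, hk]
  · rw [if_pos hp, if_neg hp', if_neg (show p ≠ p' from fun h => hp' (h ▸ hp))]
    exact ext_row_orth hξ hη hmaj (theκ_spec hp).1 _
  · rw [if_neg hp, if_pos hp', if_neg (show p ≠ p' from fun h => hp (h.symm ▸ hp'))]
    have h0 := ext_row_orth hξ hη hmaj (theκ_spec hp').1 (invq ξ η p)
    have he : (fun j => rowN ξ η (invq ξ η p) j * extRow ξ η (theκ ξ η p') j)
        = fun j => extRow ξ η (theκ ξ η p') j * rowN ξ η (invq ξ η p) j := by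
      funext j; ring
    rw [he]
    exact h0
  · rw [if_neg hp, if_neg hp']
    by_cases he : p = p'
    · rw [if_pos he]
      subst he
      exact row_hasSum_self hξ hη hmaj _
    · rw [if_neg he]
      have hkne : invq ξ η p ≠ invq ξ η p' := by
        intro h
        apply he
        rw [← invq_spec hp, ← invq_spec hp', h]
      rcases Nat.lt_or_ge (invq ξ η p) (invq ξ η p') with h | h
      · exact row_hasSum_mixed hξ hη hmaj h
      · have h' : invq ξ η p' < invq ξ η p := lt_of_le_of_ne h (Ne.symm hkne)
        have h0 := row_hasSum_mixed hξ hη hmaj h'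
        have he2 : (fun j => rowN ξ η (invq ξ η p) j * rowN ξ η (invq ξ η p') j)
            = fun j => rowN ξ η (invq ξ η p') j * rowN ξ η (invq ξ η p) j := by
          funext j; ring
        rw [he2]
        exact h0

theorem bigU_cols (j j' : ℕ) :
    HasSum (fun p => bigU ξ η p j * bigU ξ η p j') (if j = j' then (1:ℝ) else 0) := by
  have hsplit : (fun p => bigU ξ η p j * bigU ξ η p j')
      = fun p => (if p ∈ RS ξ η then (0:ℝ) else bigU ξ η p j * bigU ξ η p j')
        + (if p ∈ RS ξ η then bigU ξ η p j * bigU ξ η p j' else (0:ℝ)) := by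
    funext p
    by_cases hp : p ∈ RS ξ η <;> simp [hp]
  -- Part 1 : cascade slots
  have hV1 : HasSum (fun k => rowN ξ η k j * rowN ξ η k j')
      (if fedEver ξ η j ∧ fedEver ξ η j' then
        (if j = j' then (1:ℝ) else 0) - w ξ η j * w ξ η j' else 0) := by
    by_cases hj : fedEver ξ η j
    · by_cases hj' : fedEver ξ η j'
      · rw [if_pos ⟨hj, hj'⟩]
        exact col_hasSum hξ hη hmaj hj hj'
      · rw [if_neg (fun h => hj' h.2)]
        have he : (fun k => rowN ξ η k j * rowN ξ η k j') = fun _ => (0:ℝ) := by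
          funext k; rw [row_unfed hj' k, mul_zero]
        rw [he]; exact hasSum_zero
    · rw [if_neg (fun h => hj h.1)]
      exact col_hasSum_zero hj
  have hcomp : ((fun p => if p ∈ RS ξ η then (0:ℝ) else bigU ξ η p j * bigU ξ η p j')
      ∘ qSlot ξ η) = fun k => rowN ξ η k j * rowN ξ η k j' := by
    funext k
    show (if qSlot ξ η k ∈ RS ξ η then (0:ℝ)
        else bigU ξ η (qSlot ξ η k) j * bigU ξ η (qSlot ξ η k) j') = _
    rw [if_neg (qSlot_not_RS k)]
    unfold bigU
    rw [if_neg (qSlot_not_RS k), invq_qSlot]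
  have hz : ∀ p ∉ Set.range (qSlot ξ η),
      (if p ∈ RS ξ η then (0:ℝ) else bigU ξ η p j * bigU ξ η p j') = 0 := by
    intro p hpr
    by_cases hp : p ∈ RS ξ η
    · rw [if_pos hp]
    · obtain ⟨k, hk⟩ := qSlot_surj hp
      exact absurd ⟨k, hk⟩ hpr
  have h1 : HasSum (fun p => if p ∈ RS ξ η then (0:ℝ) else bigU ξ η p j * bigU ξ η p j')
      (if fedEver ξ η j ∧ fedEver ξ η j' then
        (if j = j' then (1:ℝ) else 0) - w ξ η j * w ξ η j' else 0) := by
    rw [← Function.Injective.hasSum_iff qSlot_smono.injective hz, hcomp]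
    exact hV1
  -- Part 2 : extra slots
  have hcomp2 : ((fun p => if p ∈ RS ξ η then bigU ξ η p j * bigU ξ η p j' else (0:ℝ))
      ∘ σslot ξ η)
      = fun κ => if extAct ξ η κ then extRow ξ η κ j * extRow ξ η κ j' else 0 := by
    funext κ
    show (if σslot ξ η κ ∈ RS ξ η then bigU ξ η (σslot ξ η κ) j * bigU ξ η (σslot ξ η κ) j'
        else (0:ℝ)) = _
    by_cases hκ : extAct ξ η κ
    · have hmem : σslot ξ η κ ∈ RS ξ η := ⟨κ, hκ, rfl⟩
      rw [if_pos hmem, if_pos hκ]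
      unfold bigU
      rw [if_pos hmem, theκ_σslot hκ]
    · have hmem : σslot ξ η κ ∉ RS ξ η := by
        rintro ⟨κ', hκ', hσ⟩
        exact hκ (σslot_inj hσ ▸ hκ')
      rw [if_neg hmem, if_neg hκ]
  have hz2 : ∀ p ∉ Set.range (σslot ξ η),
      (if p ∈ RS ξ η then bigU ξ η p j * bigU ξ η p j' else (0:ℝ)) = 0 := by
    intro p hpr
    by_cases hp : p ∈ RS ξ η
    · exact absurd ⟨theκ ξ η p, (theκ_spec hp).2⟩ hpr
    · rw [if_neg hp]
  have hsupp : ∀ κ ∉ ({0, j+1} : Finset ℕ),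
      (if extAct ξ η κ then extRow ξ η κ j * extRow ξ η κ j' else (0:ℝ)) = 0 := by
    intro κ hκmem
    simp only [Finset.mem_insert, Finset.mem_singleton, not_or] at hκmem
    cases κ with
    | zero => exact absurd rfl hκmem.1
    | succ c =>
        have hcj : c ≠ j := by omega
        by_cases hact : extAct ξ η (c+1)
        · rw [if_pos hact]
          show (if j = c then (1:ℝ) else 0) * _ = 0
          rw [if_neg (fun h => hcj h.symm), zero_mul]
        · rw [if_neg hact]
  have h2sum := hasSum_sum_of_ne_finset_zero (L := SummationFilter.unconditional _) hsupp
  have hne01 : (0:ℕ) ∉ ({j+1} : Finset ℕ) := by simp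
  have hsumval : ∑ κ ∈ ({0, j+1} : Finset ℕ),
      (if extAct ξ η κ then extRow ξ η κ j * extRow ξ η κ j' else (0:ℝ))
      = w ξ η j * w ξ η j' + (if j = j' ∧ ¬ fedEver ξ η j then (1:ℝ) else 0) := by
    rw [show ({0, j+1} : Finset ℕ) = insert 0 {j+1} from rfl, Finset.sum_insert hne01,
      Finset.sum_singleton]
    congr 1
    · by_cases hact : extAct ξ η 0
      · rw [if_pos hact]; rfl
      · rw [if_neg hact]
        have hwz := w_zero_of_not_active (ξ := ξ) (η := η) hact (QQ_nonneg hξ hη hmaj)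
        rw [hwz j, zero_mul]
    · by_cases hact : extAct ξ η (j+1)
      · rw [if_pos hact]
        show (if j = j then (1:ℝ) else 0) * (if j' = j then (1:ℝ) else 0) = _
        rw [if_pos rfl, one_mul]
        by_cases hjj : j = j'
        · rw [if_pos hjj.symm, if_pos ⟨hjj, hact⟩]
        · rw [if_neg (fun h => hjj h.symm), if_neg (fun h => hjj h.1)]
      · rw [if_neg hact, if_neg (fun h => hact h.2)]
  have h2 : HasSum (fun p => if p ∈ RS ξ η then bigU ξ η p j * bigU ξ η p j' else (0:ℝ))
      (w ξ η j * w ξ η j' + (if j = j' ∧ ¬ fedEver ξ η j then (1:ℝ) else 0)) := by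
    rw [← Function.Injective.hasSum_iff σslot_inj hz2, hcomp2]
    rw [← hsumval]
    exact h2sum
  have hadd := h1.add h2
  have hval : (if fedEver ξ η j ∧ fedEver ξ η j' then
        (if j = j' then (1:ℝ) else 0) - w ξ η j * w ξ η j' else 0)
      + (w ξ η j * w ξ η j' + (if j = j' ∧ ¬ fedEver ξ η j then (1:ℝ) else 0))
      = (if j = j' then (1:ℝ) else 0) := by
    by_cases hj : fedEver ξ η j
    · have hB : ¬ (j = j' ∧ ¬ fedEver ξ η j) := fun h => h.2 hj
      rw [if_neg hB]
      by_cases hj' : fedEver ξ η j'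
      · rw [if_pos (⟨hj, hj'⟩ : fedEver ξ η j ∧ fedEver ξ η j')]
        ring
      · have hjj : j ≠ j' := fun h => hj' (h ▸ hj)
        have hA : ¬ (fedEver ξ η j ∧ fedEver ξ η j') := fun h => hj' h.2
        rw [if_neg hA, w_unfed hj', mul_zero, if_neg hjj]
        ring
    · have hA : ¬ (fedEver ξ η j ∧ fedEver ξ η j') := fun h => hj h.1
      rw [if_neg hA, w_unfed hj, zero_mul]
      by_cases hjj : j = j'
      · rw [if_pos (⟨hjj, hj⟩ : j = j' ∧ ¬ fedEver ξ η j), if_pos hjj]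
        ring
      · have hB : ¬ (j = j' ∧ ¬ fedEver ξ η j) := fun h => hjj h.1
        rw [if_neg hB, if_neg hjj]
        ring
  rw [hval] at hadd
  rw [hsplit]
  exact hadd

theorem bigU_hasSum_eta (p : ℕ) :
    HasSum (fun j => (bigU ξ η p j)^2 * η j) (bigOut ξ η p) := by
  unfold bigU bigOut
  by_cases hp : p ∈ RS ξ η
  · simp only [if_pos hp]
    cases hκ : theκ ξ η p with
    | zero =>
        show HasSum (fun j => (w ξ η j)^2 * η j) (gOut ξ η)
        exact hasSum_wsq_eta hξ hη hmaj
    | succ c =>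
        have he : (fun j => (extRow ξ η (c+1) j)^2 * η j)
            = fun j => if j = c then η c else 0 := by
          funext j
          show ((if j = c then (1:ℝ) else 0))^2 * η j = _
          by_cases h : j = c
          · rw [if_pos h, if_pos h, h]; ring
          · rw [if_neg h, if_neg h]; ring
        show HasSum (fun j => (extRow ξ η (c+1) j)^2 * η j) (extOut ξ η (c+1))
        rw [he]
        exact hasSum_ite_eq c (η c)
  · simp only [if_neg hp]
    exact row_hasSum_eta hξ hη hmaj _


theorem forward_main :
    ∃ (Q : ℕ → ℕ → ℝ) (d : ℕ → ℝ), Orthostochastic Q ∧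
      (∀ i, 0 ≤ d i ∧ d i ≤ 1) ∧
      (∀ i, ∃ s : ℝ, HasSum (fun j => Q i j * η j) s ∧ ξ i = d i * s) := by
  refine ⟨fun p j => (bigU ξ η p j)^2,
    fun p => if bigOut ξ η p = 0 then 0 else ξ p / bigOut ξ η p,
    ⟨bigU ξ η, ⟨bigU_rows hξ hη hmaj, bigU_cols hξ hη hmaj⟩, fun i j => rfl⟩, ?_, ?_⟩
  · intro p
    beta_reduce
    by_cases h0 : bigOut ξ η p = 0
    · rw [if_pos h0]; norm_num
    · rw [if_neg h0]
      have hpos : 0 < bigOut ξ η p :=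
        lt_of_le_of_ne (bigOut_nonneg hξ hη hmaj p) (Ne.symm h0)
      constructor
      · exact div_nonneg (hξ.1 p) (le_of_lt hpos)
      · rw [div_le_one hpos]
        exact bigOut_threshold hξ hη hmaj p
  · intro p
    refine ⟨bigOut ξ η p, bigU_hasSum_eta hξ hη hmaj p, ?_⟩
    beta_reduce
    by_cases h0 : bigOut ξ η p = 0
    · rw [if_pos h0, zero_mul]
      have h1 := bigOut_threshold hξ hη hmaj p
      rw [h0] at h1
      exact le_antisymm h1 (hξ.1 p)
    · rw [if_neg h0]
      field_simp

end WithHyp3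

end Analytic


end Stmt13

end Stmt13X

/-- For `ξ, η ∈ c₀*`: `ξ ≺ η` iff there exist an orthostochastic matrix `Q`
and a sequence `d` with `0 ≤ d_i ≤ 1` such that `ξ_i = d_i · (Qη)_i` for every `i`. -/
theorem stmt_13 (ξ η : ℕ → ℝ) (hξ : IsCoStar ξ) (hη : IsCoStar η) :
    Maj ξ η ↔
      ∃ (Q : ℕ → ℕ → ℝ) (d : ℕ → ℝ), Orthostochastic Q ∧
        (∀ i, 0 ≤ d i ∧ d i ≤ 1) ∧
        (∀ i, ∃ s : ℝ, HasSum (fun j => Q i j * η j) s ∧ ξ i = d i * s) := by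
  constructor
  · intro hmaj
    exact Stmt13X.Stmt13.forward_main hξ hη hmaj
  · rintro ⟨Q, d, ⟨U, hU, hQU⟩, hd, hs⟩
    exact Stmt13X.rev_dir ξ η hη U hU Q hQU d hd hs

end
end

section
/- Let N ≥ 1 and let ξ, η ∈ ℝ^N be nonnegative nonincreasing finite sequences such that ∑_{j=n}^N ξ_j ≤ ∑_{j=n}^N η_j for every 1 ≤ n ≤ N. Then there exists a nonnegative nonincreasing sequence ζ ∈ ℝ^N such that ζ_j ≤ η_j for every j, ∑_{j=n}^N ξ_j ≤ ∑_{j=n}^N ζ_j for every 1 ≤ n ≤ N, and ∑_{j=1}^N ξ_j = ∑_{j=1}^N ζ_j. -/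
noncomputable section

open Finset

/-- Splitting a tail sum over `Fin N` at `b`. -/
lemma my_split_sum {N : ℕ} (n b : Fin N) (hnb : n ≤ b) (f : Fin N → ℝ) :
    ∑ j ∈ Finset.Ici n, f j = ∑ j ∈ Finset.Ico n b, f j + ∑ j ∈ Finset.Ici b, f j := by
  have hunion : Finset.Ico n b ∪ Finset.Ici b = Finset.Ici n := by
    ext j
    simp only [Finset.mem_union, Finset.mem_Ico, Finset.mem_Ici]
    constructor
    · rintro (⟨h1, _⟩ | h1)
      · exact h1
      · exact le_trans hnb h1
    · intro hj
      rcases lt_or_ge j b with hb | hb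
      · exact Or.inl ⟨hj, hb⟩
      · exact Or.inr hb
  have hdisj : Disjoint (Finset.Ico n b) (Finset.Ici b) := by
    rw [Finset.disjoint_left]
    intro j hj hj'
    exact absurd (Finset.mem_Ici.mp hj') (not_le.mpr (Finset.mem_Ico.mp hj).2)
  rw [← hunion, Finset.sum_union hdisj]

/-- Splitting a full sum over `Fin N` at `n`. -/
lemma my_split_univ {N : ℕ} (n : Fin N) (f : Fin N → ℝ) :
    ∑ j, f j = ∑ j ∈ Finset.Iio n, f j + ∑ j ∈ Finset.Ici n, f j := by
  have hunion : Finset.Iio n ∪ Finset.Ici n = Finset.univ := by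
    ext j
    simp only [Finset.mem_union, Finset.mem_Iio, Finset.mem_Ici, Finset.mem_univ, iff_true]
    exact lt_or_ge j n
  have hdisj : Disjoint (Finset.Iio n) (Finset.Ici n) := by
    rw [Finset.disjoint_left]
    intro j hj hj'
    exact absurd (Finset.mem_Ici.mp hj') (not_le.mpr (Finset.mem_Iio.mp hj))
  rw [← hunion, Finset.sum_union hdisj]

/-- (finite intermediate sequence result for tail majorization)
If `ξ, η ∈ ℝ^N` are nonnegative nonincreasing and `∑_{j=n}^N ξ_j ≤ ∑_{j=n}^N η_j` for
every `1 ≤ n ≤ N`, then there is a nonnegative nonincreasing `ζ ∈ ℝ^N` with `ζ ≤ η`,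
`∑_{j=n}^N ξ_j ≤ ∑_{j=n}^N ζ_j` for every `n`, and `∑_{j=1}^N ξ_j = ∑_{j=1}^N ζ_j`
(i.e. `ξ ≼_∞ ζ ≤ η`). -/
theorem stmt_15 (N : ℕ) (hN : 1 ≤ N) (ξ η : Fin N → ℝ)
    (hξ0 : ∀ i, 0 ≤ ξ i) (hη0 : ∀ i, 0 ≤ η i)
    (hξm : Antitone ξ) (hηm : Antitone η)
    (h : ∀ n : Fin N, ∑ j ∈ Finset.Ici n, ξ j ≤ ∑ j ∈ Finset.Ici n, η j) :
    ∃ ζ : Fin N → ℝ, (∀ i, 0 ≤ ζ i) ∧ Antitone ζ ∧ (∀ j, ζ j ≤ η j) ∧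
      (∀ n : Fin N, ∑ j ∈ Finset.Ici n, ξ j ≤ ∑ j ∈ Finset.Ici n, ζ j) ∧
      (∑ j, ξ j = ∑ j, ζ j) := by
  set z : Fin N := ⟨0, hN⟩ with hz
  set M : ℝ := η z with hM
  have hMnn : 0 ≤ M := hη0 _
  have hIciz : Finset.Ici z = Finset.univ := by
    ext j
    simp only [Finset.mem_Ici, Finset.mem_univ, iff_true]
    exact Fin.mk_le_of_le_val (Nat.zero_le _)
  have htotal : ∑ j, ξ j ≤ ∑ j, η j := by
    have := h z
    rwa [hIciz] at this
  -- the water-filling function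
  set f : ℝ → ℝ := fun c => ∑ j, min (η j) c with hf
  have hfc : Continuous f := continuous_finset_sum _ fun j _ => continuous_const.min continuous_id
  have hf0 : f 0 = 0 := by
    simp only [hf]
    exact Finset.sum_eq_zero fun j _ => min_eq_right (hη0 j)
  have hfM : f M = ∑ j, η j := by
    simp only [hf]
    exact Finset.sum_congr rfl fun j _ => min_eq_left (hηm (Fin.mk_le_of_le_val (Nat.zero_le _)))
  have hmem : (∑ j, ξ j) ∈ Set.Icc (f 0) (f M) := by
    rw [hf0, hfM]
    exact ⟨Finset.sum_nonneg fun j _ => hξ0 j, htotal⟩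
  obtain ⟨c, hc, hceq⟩ := intermediate_value_Icc hMnn hfc.continuousOn hmem
  set ζ : Fin N → ℝ := fun j => min (η j) c with hζ
  have hζ0 : ∀ i, 0 ≤ ζ i := fun i => le_min (hη0 i) hc.1
  have hζm : Antitone ζ := fun a b hab => min_le_min (hηm hab) le_rfl
  have hζη : ∀ j, ζ j ≤ η j := fun j => min_le_left _ _
  have hζtot : ∑ j, ξ j = ∑ j, ζ j := hceq.symm
  refine ⟨ζ, hζ0, hζm, hζη, ?_, hζtot⟩
  intro n
  rcases lt_or_ge (∑ j ∈ Finset.Iio n, ξ j) ((Finset.Iio n).card • c) with hcase | hcase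
  · -- head of ξ is small, so ξ is below c on Ici n
    have hn0 : 0 < n.val := by
      by_contra h0
      have : n.val = 0 := Nat.eq_zero_of_not_pos h0
      have hempty : Finset.Iio n = ∅ := by
        ext j
        simp only [Finset.mem_Iio, Finset.notMem_empty, iff_false, not_lt, Fin.le_def, this]
        exact Nat.zero_le _
      rw [hempty] at hcase
      simp at hcase
    -- ξ j ≤ c for all j in Ici n
    have hξc : ∀ j ∈ Finset.Ici n, ξ j ≤ c := by
      set m : Fin N := ⟨n.val - 1, lt_of_le_of_lt (Nat.pred_le _) n.isLt⟩ with hm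
      have hcard : (Finset.Iio n).card = n.val := by simp
      have hlow : (Finset.Iio n).card • ξ m ≤ ∑ j ∈ Finset.Iio n, ξ j := by
        refine Finset.card_nsmul_le_sum _ _ _ fun j hj => hξm ?_
        have hjv := Fin.lt_def.mp (Finset.mem_Iio.mp hj)
        rw [Fin.le_def]
        show j.val ≤ n.val - 1
        omega
      have hmc : ξ m < c := by
        have h1 : (n.val : ℝ) * ξ m < (n.val : ℝ) * c := by
          have := lt_of_le_of_lt hlow hcase
          rwa [hcard, nsmul_eq_mul, nsmul_eq_mul] at this
        exact lt_of_mul_lt_mul_left h1 (by positivity)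
      intro j hj
      have hmj : m ≤ j := by
        have hjv := Fin.le_def.mp (Finset.mem_Ici.mp hj)
        rw [Fin.le_def]
        show n.val - 1 ≤ j.val
        omega
      exact (hξm hmj).trans hmc.le
    -- split at the first index b ≥ n where η < c (if any)
    set B : Finset (Fin N) := (Finset.Ici n).filter (fun j => η j < c) with hB
    rcases B.eq_empty_or_nonempty with hBe | hBne
    · -- η j ≥ c everywhere on Ici n, so ζ = c there
      refine Finset.sum_le_sum fun j hj => ?_
      have : ¬ η j < c := by
        intro hlt
        have : j ∈ B := Finset.mem_filter.mpr ⟨hj, hlt⟩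
        simp [hBe] at this
      calc ξ j ≤ c := hξc j hj
        _ = ζ j := (min_eq_right (not_lt.mp this)).symm
    · set b : Fin N := B.min' hBne with hb
      have hbB : b ∈ B := B.min'_mem hBne
      have hbn : n ≤ b := (Finset.mem_Ici.mp (Finset.mem_filter.mp hbB).1)
      have hηb : η b < c := (Finset.mem_filter.mp hbB).2
      rw [my_split_sum n b hbn ξ, my_split_sum n b hbn ζ]
      have h1 : ∑ j ∈ Finset.Ico n b, ξ j ≤ ∑ j ∈ Finset.Ico n b, ζ j := by
        refine Finset.sum_le_sum fun j hj => ?_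
        obtain ⟨hnj, hjb⟩ := Finset.mem_Ico.mp hj
        have hjB : j ∉ B := fun hmem => absurd (B.min'_le j hmem) (not_le.mpr hjb)
        have hηj : ¬ η j < c := fun hlt => hjB (Finset.mem_filter.mpr ⟨Finset.mem_Ici.mpr hnj, hlt⟩)
        calc ξ j ≤ c := hξc j (Finset.mem_Ici.mpr hnj)
          _ = ζ j := (min_eq_right (not_lt.mp hηj)).symm
      have h2 : ∑ j ∈ Finset.Ici b, ξ j ≤ ∑ j ∈ Finset.Ici b, ζ j := by
        calc ∑ j ∈ Finset.Ici b, ξ j ≤ ∑ j ∈ Finset.Ici b, η j := h b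
          _ = ∑ j ∈ Finset.Ici b, ζ j := by
            refine Finset.sum_congr rfl fun j hj => ?_
            have : η j ≤ η b := hηm (Finset.mem_Ici.mp hj)
            exact (min_eq_left (this.trans hηb.le)).symm
      linarith
  · -- head of ξ is large: use the total-sum identity
    have hhead : ∑ j ∈ Finset.Iio n, ζ j ≤ ∑ j ∈ Finset.Iio n, ξ j := by
      calc ∑ j ∈ Finset.Iio n, ζ j ≤ (Finset.Iio n).card • c :=
            Finset.sum_le_card_nsmul _ _ _ fun j _ => min_le_right _ _
        _ ≤ ∑ j ∈ Finset.Iio n, ξ j := hcase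
    have e1 := my_split_univ n ξ
    have e2 := my_split_univ n ζ
    rw [hζtot] at e1
    linarith

end
end
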